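/- arXiv:2512.01905 — 8 statements merged into one kernel-verified Lean document; each statement's English description precedes it below -/
import Mathlib

section
/- Let G = G₁ ∪ G₂ be a connected graph where V(G₁) ∩ V(G₂) = {v} and E(G₁) ∩ E(G₂) = ∅. If S is a tough set of G not containing v, then S ⊆ V(G₁) − {v} or S ⊆ V(G₂) − {v}. -/
open SimpleGraph

noncomputable def numComp {V : Type*} (G : SimpleGraph V) (S : Set V) : ℕ :=
  Nat.card (SimpleGraph.induce Sᶜ G).ConnectedComponent

def IsCutset {V : Type*} (G : SimpleGraph V) (S : Set V) : Prop := 1 < numComp G S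

noncomputable def toughness {V : Type*} (G : SimpleGraph V) : ℝ :=
  sInf {r : ℝ | ∃ S : Set V, IsCutset G S ∧ r = (S.ncard : ℝ) / (numComp G S : ℝ)}

def IsToughSet {V : Type*} (G : SimpleGraph V) (S : Set V) : Prop :=
  IsCutset G S ∧ (S.ncard : ℝ) = toughness G * (numComp G S : ℝ)

def MinTough {V : Type*} (G : SimpleGraph V) (t : ℝ) : Prop :=
  toughness G = t ∧ ∀ e ∈ G.edgeSet, toughness (G.deleteEdges {e}) < t

def IsCutVertex {V : Type*} (G : SimpleGraph V) (x : V) : Prop := IsCutset G {x}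

lemma aux_confine {V : Type*} {G : SimpleGraph V} {B : Set V} {v : V}
    (hcross : ∀ a b, G.Adj a b → a ∈ B → b ∉ B → a = v)
    {x y : V} (W : G.Walk x y) (hy : y ∈ B) :
    (x ∈ B → ∃ W' : G.Walk x y, ∀ z ∈ W'.support, z ∈ W.support ∧ z ∈ B) ∧
    (x ∉ B → ∃ W' : G.Walk v y, ∀ z ∈ W'.support, z ∈ W.support ∧ z ∈ B) := by
  induction W with
  | nil =>
    refine ⟨fun hx => ⟨.nil, ?_⟩, fun hx => absurd hy hx⟩
    intro z hz
    simp only [Walk.support_nil, List.mem_singleton] at hz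
    subst hz
    exact ⟨by simp, hy⟩
  | @cons u w y h p ih =>
    obtain ⟨ih1, ih2⟩ := ih hy
    constructor
    · intro hu
      by_cases hw : w ∈ B
      · obtain ⟨W', hW'⟩ := ih1 hw
        refine ⟨.cons h W', ?_⟩
        intro z hz
        rw [Walk.support_cons] at hz ⊢
        rcases List.mem_cons.mp hz with rfl | hz
        · exact ⟨List.mem_cons_self, hu⟩
        · exact ⟨List.mem_cons_of_mem _ (hW' z hz).1, (hW' z hz).2⟩
      · have huv : u = v := hcross u w h hu hw
        obtain ⟨W', hW'⟩ := ih2 hw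
        subst huv
        refine ⟨W', fun z hz => ⟨?_, (hW' z hz).2⟩⟩
        rw [Walk.support_cons]
        exact List.mem_cons_of_mem _ (hW' z hz).1
    · intro hu
      by_cases hw : w ∈ B
      · have hwv : w = v := hcross w u h.symm hw hu
        subst hwv
        obtain ⟨W', hW'⟩ := ih1 hw
        refine ⟨W', fun z hz => ⟨?_, (hW' z hz).2⟩⟩
        rw [Walk.support_cons]
        exact List.mem_cons_of_mem _ (hW' z hz).1
      · obtain ⟨W', hW'⟩ := ih2 hw
        refine ⟨W', fun z hz => ⟨?_, (hW' z hz).2⟩⟩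
        rw [Walk.support_cons]
        exact List.mem_cons_of_mem _ (hW' z hz).1

lemma aux_reach_of_walk {V : Type*} {G : SimpleGraph V} {T : Set V} {x y : V}
    (W : G.Walk x y) (hW : ∀ z ∈ W.support, z ∈ T) (hx : x ∈ T) (hy : y ∈ T) :
    (G.induce T).Reachable ⟨x, hx⟩ ⟨y, hy⟩ := by
  induction W with
  | nil => exact Reachable.refl _
  | @cons u w y h p ih =>
    have hw : w ∈ T := hW w (by simp)
    have step : (G.induce T).Adj ⟨u, hx⟩ ⟨w, hw⟩ := h
    exact step.reachable.trans (ih (fun z hz => hW z (by simp [hz])) hw hy)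

lemma aux_walk_of_reach {V : Type*} {G : SimpleGraph V} {T : Set V} {x y : ↥T}
    (h : (G.induce T).Reachable x y) :
    ∃ W : G.Walk x.1 y.1, ∀ z ∈ W.support, z ∈ T := by
  obtain ⟨W⟩ := h
  refine ⟨W.map ⟨Subtype.val, fun {a b} hab => hab⟩, ?_⟩
  intro z hz
  rw [Walk.support_map] at hz
  obtain ⟨⟨z', hz'⟩, _, rfl⟩ := List.mem_map.mp hz
  exact hz'

lemma toughness_le' {V : Type*} (G : SimpleGraph V) (T : Set V) (hT : IsCutset G T) :
    toughness G ≤ (T.ncard : ℝ) / (numComp G T : ℝ) := by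
  apply csInf_le
  · refine ⟨0, fun r hr => ?_⟩
    obtain ⟨U, hU, rfl⟩ := hr
    positivity
  · exact ⟨T, hT, rfl⟩

set_option maxHeartbeats 1000000 in
/-- If `G = G₁ ∪ G₂` with `V(G₁) ∩ V(G₂) = {v}` and disjoint edge sets, and `S` is a tough
set of `G` not containing `v`, then `S ⊆ V(G₁) \ {v}` or `S ⊆ V(G₂) \ {v}`. -/
theorem toughSet_subset_of_cutVertex {V : Type*} [Fintype V]
    (G G₁ G₂ : SimpleGraph V) (A₁ A₂ : Set V) (v : V)
    (hG : G = G₁ ⊔ G₂) (hEdisj : Disjoint G₁.edgeSet G₂.edgeSet)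
    (hsupp₁ : G₁.support ⊆ A₁) (hsupp₂ : G₂.support ⊆ A₂)
    (hAint : A₁ ∩ A₂ = {v}) (hAuniv : A₁ ∪ A₂ = Set.univ)
    (hconn : G.Connected)
    (S : Set V) (hS : IsToughSet G S) (hv : v ∉ S) :
    S ⊆ A₁ \ {v} ∨ S ⊆ A₂ \ {v} := by
  classical
  by_contra hcon
  push_neg at hcon
  obtain ⟨hcon1, hcon2⟩ := hcon
  obtain ⟨a, haS, haA⟩ := Set.not_subset.mp hcon2
  obtain ⟨b, hbS, hbA⟩ := Set.not_subset.mp hcon1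
  have hcover : ∀ z : V, z ∈ A₁ ∨ z ∈ A₂ := by
    intro z
    have hz : z ∈ A₁ ∪ A₂ := by rw [hAuniv]; trivial
    exact hz
  have hvA : v ∈ A₁ ∩ A₂ := by rw [hAint]; rfl
  have havne : a ≠ v := fun he => hv (he ▸ haS)
  have hbvne : b ≠ v := fun he => hv (he ▸ hbS)
  -- a ∈ A₁ \ A₂, b ∈ A₂ \ A₁
  have haA2 : a ∉ A₂ := fun h => haA ⟨h, havne⟩
  have haA1 : a ∈ A₁ := (hcover a).resolve_right haA2
  have hbA1 : b ∉ A₁ := fun h => hbA ⟨h, hbvne⟩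
  have hbA2 : b ∈ A₂ := (hcover b).resolve_left hbA1
  set S₁ : Set V := S ∩ A₁ with hS₁def
  set S₂ : Set V := S ∩ A₂ with hS₂def
  have hS₁sub : S₁ ⊆ S := Set.inter_subset_left
  have hS₂sub : S₂ ⊆ S := Set.inter_subset_left
  have hvS₁ : v ∉ S₁ := fun h => hv h.1
  have hvS₂ : v ∉ S₂ := fun h => hv h.1
  have hS₁A₂ : ∀ z ∈ A₂, z ∉ S₁ := by
    intro z hz2 hz1
    have : z ∈ A₁ ∩ A₂ := ⟨hz1.2, hz2⟩
    rw [hAint] at this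
    exact hv (this ▸ hz1.1)
  have hS₂A₁ : ∀ z ∈ A₁, z ∉ S₂ := by
    intro z hz1 hz2
    have : z ∈ A₁ ∩ A₂ := ⟨hz1, hz2.2⟩
    rw [hAint] at this
    exact hv (this ▸ hz2.1)
  have hSA₁ : ∀ z ∈ A₁, z ∉ S₁ → z ∉ S := fun z hz1 hz hzS => hz ⟨hzS, hz1⟩
  have hSA₂ : ∀ z ∈ A₂, z ∉ S₂ → z ∉ S := fun z hz2 hz hzS => hz ⟨hzS, hz2⟩
  -- cross-edge lemmas
  have cross₁ : ∀ p q, G.Adj p q → p ∈ A₁ → q ∉ A₁ → p = v := by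
    intro p q hadj hp hq
    rw [hG, sup_adj] at hadj
    rcases hadj with h | h
    · exact absurd (hsupp₁ ⟨p, h.symm⟩) hq
    · have hp2 : p ∈ A₂ := hsupp₂ ⟨q, h⟩
      have : p ∈ A₁ ∩ A₂ := ⟨hp, hp2⟩
      rw [hAint] at this
      exact this
  have cross₂ : ∀ p q, G.Adj p q → p ∈ A₂ → q ∉ A₂ → p = v := by
    intro p q hadj hp hq
    rw [hG, sup_adj] at hadj
    rcases hadj with h | h
    · have hp1 : p ∈ A₁ := hsupp₁ ⟨q, h⟩
      have : p ∈ A₁ ∩ A₂ := ⟨hp1, hp⟩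
      rw [hAint] at this
      exact this
    · exact absurd (hsupp₂ ⟨p, h.symm⟩) hq
  -- component machinery
  have hvSc : v ∈ Sᶜ := hv
  let j₁ : G.induce Sᶜ →g G.induce S₁ᶜ := ⟨fun z => ⟨z.1, fun hz => z.2 hz.1⟩, fun {c d} hab => hab⟩
  let j₂ : G.induce Sᶜ →g G.induce S₂ᶜ := ⟨fun z => ⟨z.1, fun hz => z.2 hz.1⟩, fun {c d} hab => hab⟩
  set mkS := (G.induce Sᶜ).connectedComponentMk with hmkS
  -- P1 : A₂ vertices map under j₁ into v's component
  have P1 : ∀ x : ↥Sᶜ, x.1 ∈ A₂ →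
      ConnectedComponent.map j₁ (mkS x) = ConnectedComponent.map j₁ (mkS ⟨v, hvSc⟩) := by
    intro x hx2
    rw [hmkS]
    rw [ConnectedComponent.map_mk, ConnectedComponent.map_mk]
    apply ConnectedComponent.sound
    obtain ⟨W⟩ := hconn.preconnected x.1 v
    obtain ⟨W', hW'⟩ := (aux_confine cross₂ W hvA.2).1 hx2
    exact aux_reach_of_walk W' (fun z hz => hS₁A₂ z (hW' z hz).2) _ _
  have P1' : ∀ x : ↥Sᶜ, x.1 ∈ A₁ →
      ConnectedComponent.map j₂ (mkS x) = ConnectedComponent.map j₂ (mkS ⟨v, hvSc⟩) := by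
    intro x hx1
    rw [hmkS]
    rw [ConnectedComponent.map_mk, ConnectedComponent.map_mk]
    apply ConnectedComponent.sound
    obtain ⟨W⟩ := hconn.preconnected x.1 v
    obtain ⟨W', hW'⟩ := (aux_confine cross₁ W hvA.1).1 hx1
    exact aux_reach_of_walk W' (fun z hz => hS₂A₁ z (hW' z hz).2) _ _
  have P2 : ∀ x y : ↥Sᶜ, x.1 ∈ A₁ → y.1 ∈ A₁ →
      ConnectedComponent.map j₁ (mkS x) = ConnectedComponent.map j₁ (mkS y) → mkS x = mkS y := by
    intro x y hx1 hy1 h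
    rw [hmkS, ConnectedComponent.map_mk, ConnectedComponent.map_mk] at h
    obtain ⟨W, hW⟩ := aux_walk_of_reach (ConnectedComponent.exact h)
    obtain ⟨W', hW'⟩ := (aux_confine cross₁ W hy1).1 hx1
    rw [hmkS]
    apply ConnectedComponent.sound
    exact aux_reach_of_walk W' (fun z hz =>
      hSA₁ z (hW' z hz).2 (hW z (hW' z hz).1)) x.2 y.2
  have P2' : ∀ x y : ↥Sᶜ, x.1 ∈ A₂ → y.1 ∈ A₂ →
      ConnectedComponent.map j₂ (mkS x) = ConnectedComponent.map j₂ (mkS y) → mkS x = mkS y := by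
    intro x y hx2 hy2 h
    rw [hmkS, ConnectedComponent.map_mk, ConnectedComponent.map_mk] at h
    obtain ⟨W, hW⟩ := aux_walk_of_reach (ConnectedComponent.exact h)
    obtain ⟨W', hW'⟩ := (aux_confine cross₂ W hy2).1 hx2
    rw [hmkS]
    apply ConnectedComponent.sound
    exact aux_reach_of_walk W' (fun z hz =>
      hSA₂ z (hW' z hz).2 (hW z (hW' z hz).1)) x.2 y.2
  set Kv₁ := ConnectedComponent.map j₁ (mkS ⟨v, hvSc⟩) with hKv₁
  set Kv₂ := ConnectedComponent.map j₂ (mkS ⟨v, hvSc⟩) with hKv₂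
  have Q1 : ∀ x : ↥Sᶜ, ConnectedComponent.map j₁ (mkS x) ≠ Kv₁ → x.1 ∈ A₁ := by
    intro x h
    by_contra hx
    exact h (P1 x ((hcover x.1).resolve_left hx))
  have Q2 : ∀ x : ↥Sᶜ, ConnectedComponent.map j₁ (mkS x) = Kv₁ → x.1 ∈ A₂ ∨ mkS x = mkS ⟨v, hvSc⟩ := by
    intro x h
    rcases hcover x.1 with hx1 | hx2
    · exact Or.inr (P2 x ⟨v, hvSc⟩ hx1 hvA.1 h)
    · exact Or.inl hx2
  -- the injection
  let Φ : (G.induce Sᶜ).ConnectedComponent ⊕ Unit →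
      (G.induce S₁ᶜ).ConnectedComponent ⊕ (G.induce S₂ᶜ).ConnectedComponent := fun C =>
    match C with
    | .inl C => if ConnectedComponent.map j₁ C = Kv₁
        then .inr (ConnectedComponent.map j₂ C) else .inl (ConnectedComponent.map j₁ C)
    | .inr _ => .inl Kv₁
  have keyinj : ∀ x y : ↥Sᶜ, Φ (.inl (mkS x)) = Φ (.inl (mkS y)) → mkS x = mkS y := by
    intro x y h
    simp only [Φ] at h
    by_cases h1 : ConnectedComponent.map j₁ (mkS x) = Kv₁ <;>
      by_cases h2 : ConnectedComponent.map j₁ (mkS y) = Kv₁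
    · rw [if_pos h1, if_pos h2] at h
      replace h := Sum.inr.inj h
      -- both in v's j₁-component; use j₂
      rcases Q2 x h1 with hx2 | hx0
      · rcases Q2 y h2 with hy2 | hy0
        · exact P2' x y hx2 hy2 h
        · have : ConnectedComponent.map j₂ (mkS x) = ConnectedComponent.map j₂ (mkS ⟨v, hvSc⟩) := by
            rw [h, hy0]
          exact (P2' x ⟨v, hvSc⟩ hx2 hvA.2 this).trans hy0.symm
      · rcases Q2 y h2 with hy2 | hy0
        · have : ConnectedComponent.map j₂ (mkS ⟨v, hvSc⟩) = ConnectedComponent.map j₂ (mkS y) := by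
            rw [← h, hx0]
          exact hx0.trans (P2' ⟨v, hvSc⟩ y hvA.2 hy2 this)
        · exact hx0.trans hy0.symm
    · rw [if_pos h1, if_neg h2] at h
      exact absurd h (by simp)
    · rw [if_neg h1, if_pos h2] at h
      exact absurd h (by simp)
    · rw [if_neg h1, if_neg h2] at h
      exact P2 x y (Q1 x h1) (Q1 y h2) (Sum.inl.inj h)
  have hΦinj : Function.Injective Φ := by
    intro C D h
    match C, D with
    | .inl C, .inl D =>
      refine congrArg Sum.inl ?_
      refine ConnectedComponent.ind₂ (β := fun C D =>
        Φ (.inl C) = Φ (.inl D) → C = D) (fun x y hh => keyinj x y hh) C D h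
    | .inl C, .inr u =>
      exfalso
      refine ConnectedComponent.ind (β := fun C => Φ (.inl C) = Φ (.inr u) → False)
        (fun x hh => ?_) C h
      by_cases h1 : ConnectedComponent.map j₁ (mkS x) = Kv₁ <;>
        (simp only [Φ, hmkS] at h1 hh; simp only [h1, reduceIte] at hh)
      · exact absurd hh (by simp)
      · exact h1 (Sum.inl.inj hh)
    | .inr u, .inl C =>
      exfalso
      refine ConnectedComponent.ind (β := fun C => Φ (.inr u) = Φ (.inl C) → False)
        (fun x hh => ?_) C h
      by_cases h1 : ConnectedComponent.map j₁ (mkS x) = Kv₁ <;>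
        (simp only [Φ, hmkS] at h1 hh; simp only [h1, reduceIte] at hh)
      · exact absurd hh (by simp)
      · exact h1 (Sum.inl.inj hh.symm)
    | .inr u, .inr u' => rfl
  -- counting
  have hcount : numComp G S + 1 ≤ numComp G S₁ + numComp G S₂ := by
    have h2 := Nat.card_le_card_of_injective Φ hΦinj
    rw [Nat.card_sum, Nat.card_sum] at h2
    simpa [numComp] using h2
  -- arithmetic
  set t := toughness G with ht
  set c : ℕ := numComp G S with hc
  set c₁ : ℕ := numComp G S₁ with hc₁
  set c₂ : ℕ := numComp G S₂ with hc₂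
  have hc2 : 2 ≤ c := hS.1
  have hcR : ((c : ℝ)) + 1 ≤ (c₁ : ℝ) + (c₂ : ℝ) := by exact_mod_cast hcount
  have hSsplit : S.ncard = S₁.ncard + S₂.ncard := by
    have hun : S = S₁ ∪ S₂ := by
      ext z
      constructor
      · intro hz
        rcases hcover z with h1 | h2
        · exact Or.inl ⟨hz, h1⟩
        · exact Or.inr ⟨hz, h2⟩
      · rintro (h | h) <;> exact h.1
    have hdisj : Disjoint S₁ S₂ := by
      rw [Set.disjoint_left]
      intro z hz1 hz2
      have : z ∈ A₁ ∩ A₂ := ⟨hz1.2, hz2.2⟩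
      rw [hAint] at this
      exact hv (this ▸ hz1.1)
    rw [hun, Set.ncard_union_eq hdisj (Set.toFinite _) (Set.toFinite _)]
  have hbS₁ : a ∈ S₁ := ⟨haS, haA1⟩
  have haS₂ : b ∈ S₂ := ⟨hbS, hbA2⟩
  have hS₁pos : 1 ≤ S₁.ncard := (Set.ncard_pos (Set.toFinite _)).mpr ⟨a, hbS₁⟩
  have hS₂pos : 1 ≤ S₂.ncard := (Set.ncard_pos (Set.toFinite _)).mpr ⟨b, haS₂⟩
  have hEq : (S.ncard : ℝ) = t * c := hS.2
  have htpos : 0 < t := by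
    have h1 : (1 : ℝ) ≤ (S.ncard : ℝ) := by
      have : 1 ≤ S.ncard := by omega
      exact_mod_cast this
    nlinarith [hEq, h1, (by exact_mod_cast hc2 : (2:ℝ) ≤ (c:ℝ))]
  by_cases hcut₁ : 1 < c₁
  · by_cases hcut₂ : 1 < c₂
    · have hle1 : t * c₁ ≤ (S₁.ncard : ℝ) := by
        have := toughness_le' G S₁ hcut₁
        rw [← ht, ← hc₁] at this
        have hc₁pos : (0:ℝ) < (c₁ : ℝ) := by exact_mod_cast Nat.lt_of_lt_of_le Nat.zero_lt_one hcut₁.le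
        calc t * c₁ ≤ ((S₁.ncard : ℝ) / (c₁ : ℝ)) * c₁ := by nlinarith
          _ = (S₁.ncard : ℝ) := by field_simp
      have hle2 : t * c₂ ≤ (S₂.ncard : ℝ) := by
        have := toughness_le' G S₂ hcut₂
        rw [← ht, ← hc₂] at this
        have hc₂pos : (0:ℝ) < (c₂ : ℝ) := by exact_mod_cast Nat.lt_of_lt_of_le Nat.zero_lt_one hcut₂.le
        calc t * c₂ ≤ ((S₂.ncard : ℝ) / (c₂ : ℝ)) * c₂ := by nlinarith
          _ = (S₂.ncard : ℝ) := by field_simp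
      have hsplitR : (S.ncard : ℝ) = (S₁.ncard : ℝ) + (S₂.ncard : ℝ) := by exact_mod_cast hSsplit
      nlinarith [mul_le_mul_of_nonneg_left hcR htpos.le]
    · -- c₂ ≤ 1, so c ≤ c₁
      have hcc : c ≤ c₁ := by omega
      have hle1 : t * c₁ ≤ (S₁.ncard : ℝ) := by
        have := toughness_le' G S₁ hcut₁
        rw [← ht, ← hc₁] at this
        have hc₁pos : (0:ℝ) < (c₁ : ℝ) := by exact_mod_cast Nat.lt_of_lt_of_le Nat.zero_lt_one hcut₁.le
        calc t * c₁ ≤ ((S₁.ncard : ℝ) / (c₁ : ℝ)) * c₁ := by nlinarith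
          _ = (S₁.ncard : ℝ) := by field_simp
      have hsplitR : (S.ncard : ℝ) = (S₁.ncard : ℝ) + (S₂.ncard : ℝ) := by exact_mod_cast hSsplit
      have h2R : (1:ℝ) ≤ (S₂.ncard : ℝ) := by exact_mod_cast hS₂pos
      have hccR : (c : ℝ) ≤ (c₁ : ℝ) := by exact_mod_cast hcc
      nlinarith [mul_le_mul_of_nonneg_left hccR htpos.le]
  · -- c₁ ≤ 1, so c ≤ c₂
    have hcc : c ≤ c₂ := by omega
    have hcut₂ : 1 < c₂ := by omega
    have hle2 : t * c₂ ≤ (S₂.ncard : ℝ) := by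
      have := toughness_le' G S₂ hcut₂
      rw [← ht, ← hc₂] at this
      have hc₂pos : (0:ℝ) < (c₂ : ℝ) := by exact_mod_cast Nat.lt_of_lt_of_le Nat.zero_lt_one hcut₂.le
      calc t * c₂ ≤ ((S₂.ncard : ℝ) / (c₂ : ℝ)) * c₂ := by nlinarith
        _ = (S₂.ncard : ℝ) := by field_simp
    have hsplitR : (S.ncard : ℝ) = (S₁.ncard : ℝ) + (S₂.ncard : ℝ) := by exact_mod_cast hSsplit
    have h1R : (1:ℝ) ≤ (S₁.ncard : ℝ) := by exact_mod_cast hS₁pos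
    have hccR : (c : ℝ) ≤ (c₂ : ℝ) := by exact_mod_cast hcc
    nlinarith [mul_le_mul_of_nonneg_left hccR htpos.le]
end

section
/- Let G = G₁ ∪ G₂ ∪ {v₁v₂} where v₁ ∈ V(G₁), v₂ ∈ V(G₂), and V(G₁) ∩ V(G₂) = ∅. If S is a tough set of G, then S ⊆ V(G₁) or S ⊆ V(G₂). -/
open SimpleGraph

namespace ToughBridge

variable {V : Type*} {G : SimpleGraph V} {A₁ A₂ : Set V} {v₁ v₂ : V}

lemma card_succ_le {α β : Type*} [Finite α] [Finite β] (f : α → β)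
    (hf : Function.Injective f) (y : β) (hy : ∀ a, f a ≠ y) :
    Nat.card α + 1 ≤ Nat.card β := by
  have hg : Function.Injective (Sum.elim f (fun _ : Unit => y)) := by
    rintro (a | a) (b | b) h <;> simp only [Sum.elim_inl, Sum.elim_inr] at h
    · exact congrArg _ (hf h)
    · exact absurd h (hy a)
    · exact absurd h.symm (hy b)
    · exact congrArg _ (Subsingleton.elim a b)
  simpa [Nat.card_sum] using Nat.card_le_card_of_injective _ hg

lemma reachable_induce_of_walk {s : Set V} :
    ∀ {a b : V} (p : G.Walk a b), (∀ x ∈ p.support, x ∈ s) →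
      ∀ (ha : a ∈ s) (hb : b ∈ s), (G.induce s).Reachable ⟨a, ha⟩ ⟨b, hb⟩ := by
  intro a b p
  induction p with
  | nil => intro _ ha hb; exact Reachable.refl _
  | @cons a c b h p ih =>
    intro hp ha hb
    have hc : c ∈ s := hp c (by simp)
    have hadj : (G.induce s).Adj ⟨a, ha⟩ ⟨c, hc⟩ := by simpa using h
    refine hadj.reachable.trans (ih (fun x hx => hp x ?_) hc hb)
    rw [Walk.support_cons]
    exact List.mem_cons.mpr (Or.inr hx)

lemma exists_walk_of_reachable_induce {s : Set V} {a b : ↥s}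
    (h : (G.induce s).Reachable a b) :
    ∃ p : G.Walk (a : V) (b : V), ∀ x ∈ p.support, x ∈ s := by
  obtain ⟨p⟩ := h
  induction p with
  | nil =>
    refine ⟨Walk.nil, ?_⟩
    intro x hx
    rw [Walk.support_nil, List.mem_singleton] at hx
    subst hx; exact Subtype.coe_prop _
  | @cons u c w h p ih =>
    obtain ⟨q, hq⟩ := ih
    have hadj : G.Adj (u : V) (c : V) := by simpa using h
    refine ⟨Walk.cons hadj q, ?_⟩
    intro x hx
    rw [Walk.support_cons] at hx
    rcases List.mem_cons.mp hx with rfl | hx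
    · exact Subtype.coe_prop _
    · exact hq x hx

lemma reachable_mono {s t : Set V} (hst : s ⊆ t) {a b : ↥s}
    (h : (G.induce s).Reachable a b) :
    (G.induce t).Reachable ⟨a, hst a.2⟩ ⟨b, hst b.2⟩ := by
  obtain ⟨p, hp⟩ := exists_walk_of_reachable_induce h
  exact reachable_induce_of_walk p (fun x hx => hst (hp x hx)) _ _

lemma mem_right (huniv : A₁ ∪ A₂ = Set.univ) {x : V} (hx : x ∉ A₁) : x ∈ A₂ := by
  have hx' : x ∈ A₁ ∪ A₂ := huniv ▸ Set.mem_univ x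
  exact hx'.resolve_left hx

lemma v1_mem_support (hdisj : Disjoint A₁ A₂) (huniv : A₁ ∪ A₂ = Set.univ)
    (hcross : ∀ ⦃x y⦄, G.Adj x y → x ∈ A₁ → y ∈ A₂ → x = v₁ ∧ y = v₂) :
    ∀ {c b : V} (p : G.Walk c b), c ∈ A₂ → b ∈ A₁ → v₁ ∈ p.support := by
  intro c b p
  induction p with
  | nil => intro hc hb; exact (Set.disjoint_left.mp hdisj hb hc).elim
  | @cons c d b h p ih =>
    intro hc hb
    rw [Walk.support_cons]
    by_cases hd : d ∈ A₁
    · obtain ⟨hd1, _⟩ := hcross h.symm hd hc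
      subst hd1
      exact List.mem_cons.mpr (Or.inr p.start_mem_support)
    · exact List.mem_cons.mpr (Or.inr (ih (mem_right huniv hd) hb))

lemma confine [DecidableEq V] (hdisj : Disjoint A₁ A₂) (huniv : A₁ ∪ A₂ = Set.univ) (hv₁ : v₁ ∈ A₁)
    (hcross : ∀ ⦃x y⦄, G.Adj x y → x ∈ A₁ → y ∈ A₂ → x = v₁ ∧ y = v₂) :
    ∀ (n : ℕ) {a b : V} (p : G.Walk a b), p.length ≤ n → a ∈ A₁ → b ∈ A₁ →
      ∃ q : G.Walk a b, ∀ x ∈ q.support, x ∈ A₁ ∧ x ∈ p.support := by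
  intro n
  induction n with
  | zero =>
    intro a b p hl ha hb
    cases p with
    | nil =>
      refine ⟨Walk.nil, ?_⟩
      intro x hx
      rw [Walk.support_nil, List.mem_singleton] at hx
      subst hx; exact ⟨ha, Walk.start_mem_support _⟩
    | cons h p => simp [Walk.length_cons] at hl
  | succ n ih =>
    intro a b p hl ha hb
    cases p with
    | nil =>
      refine ⟨Walk.nil, ?_⟩
      intro x hx
      rw [Walk.support_nil, List.mem_singleton] at hx
      subst hx; exact ⟨ha, Walk.start_mem_support _⟩
    | @cons _ c _ h p =>
      by_cases hc : c ∈ A₁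
      · obtain ⟨q, hq⟩ := ih p (by rw [Walk.length_cons] at hl; omega) hc hb
        refine ⟨Walk.cons h q, ?_⟩
        intro x hx
        rw [Walk.support_cons] at hx
        rcases List.mem_cons.mp hx with rfl | hx
        · exact ⟨ha, Walk.start_mem_support _⟩
        · exact ⟨(hq x hx).1, by
            rw [Walk.support_cons]
            exact List.mem_cons.mpr (Or.inr (hq x hx).2)⟩
      · have hc2 : c ∈ A₂ := mem_right huniv hc
        obtain ⟨ha1, hc1⟩ := hcross h ha hc2
        have hm : v₁ ∈ p.support := v1_mem_support hdisj huniv hcross p hc2 hb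
        obtain ⟨q, hq⟩ := ih (p.dropUntil v₁ hm)
          (le_trans (p.length_dropUntil_le hm) (by rw [Walk.length_cons] at hl; omega)) hv₁ hb
        subst ha1
        refine ⟨q, fun x hx => ⟨(hq x hx).1, ?_⟩⟩
        rw [Walk.support_cons]
        exact List.mem_cons.mpr (Or.inr (p.support_dropUntil_subset hm (hq x hx).2))

lemma comp_mono {s t : Set V} (hst : s ⊆ t) {x y : ↥s}
    (h : (G.induce s).connectedComponentMk x = (G.induce s).connectedComponentMk y) :
    (G.induce t).connectedComponentMk ⟨x, hst x.2⟩ = (G.induce t).connectedComponentMk ⟨y, hst y.2⟩ :=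
  ConnectedComponent.sound (reachable_mono hst (ConnectedComponent.eq.mp h))

lemma side_card [Fintype V] [DecidableEq V] (hdisj : Disjoint A₁ A₂) (huniv : A₁ ∪ A₂ = Set.univ)
    (hv₁ : v₁ ∈ A₁) (hv₂ : v₂ ∈ A₂)
    (hcross : ∀ ⦃x y⦄, G.Adj x y → x ∈ A₁ → y ∈ A₂ → x = v₁ ∧ y = v₂) (S : Set V) :
    Nat.card (G.induce (A₁ ∩ Sᶜ)).ConnectedComponent ≤ numComp G (S ∩ A₁) ∧
      (v₁ ∈ S → Nat.card (G.induce (A₁ ∩ Sᶜ)).ConnectedComponent + 1 ≤ numComp G (S ∩ A₁)) := by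
  have hst : A₁ ∩ Sᶜ ⊆ (S ∩ A₁)ᶜ := fun x hx hxS => hx.2 hxS.1
  set f : (G.induce (A₁ ∩ Sᶜ)).ConnectedComponent → (G.induce (S ∩ A₁)ᶜ).ConnectedComponent :=
    fun C => (G.induce (S ∩ A₁)ᶜ).connectedComponentMk
      ⟨((Quot.out C : ↥(A₁ ∩ Sᶜ)) : V), hst (Quot.out C).2⟩ with hfdef
  have hf : Function.Injective f := by
    intro C C' hCC'
    have hr := ConnectedComponent.eq.mp hCC'
    obtain ⟨p, hp⟩ := exists_walk_of_reachable_induce hr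
    obtain ⟨q, hq⟩ :=
      confine hdisj huniv hv₁ hcross p.length p le_rfl (Quot.out C).2.1 (Quot.out C').2.1
    have hsub : ∀ x ∈ q.support, x ∈ A₁ ∩ Sᶜ := fun x hx =>
      ⟨(hq x hx).1, fun hxS => (hp x (hq x hx).2) ⟨hxS, (hq x hx).1⟩⟩
    have hr2 := reachable_induce_of_walk q hsub (Quot.out C).2 (Quot.out C').2
    have h3 : (Quot.mk _ (Quot.out C) : (G.induce (A₁ ∩ Sᶜ)).ConnectedComponent) =
        Quot.mk _ (Quot.out C') := ConnectedComponent.sound hr2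
    exact (Quot.out_eq C).symm.trans (h3.trans (Quot.out_eq C'))
  refine ⟨Nat.card_le_card_of_injective f hf, ?_⟩
  intro hv₁S
  have hv₂t : v₂ ∈ (S ∩ A₁)ᶜ := fun h => Set.disjoint_left.mp hdisj h.2 hv₂
  refine card_succ_le f hf ((G.induce (S ∩ A₁)ᶜ).connectedComponentMk ⟨v₂, hv₂t⟩) ?_
  intro C hC
  rw [hfdef] at hC
  have hr := ConnectedComponent.eq.mp hC
  obtain ⟨p, hp⟩ := exists_walk_of_reachable_induce hr
  have hm : v₁ ∈ p.reverse.support :=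
    v1_mem_support (G := G) hdisj huniv hcross p.reverse hv₂ (Quot.out C).2.1
  rw [Walk.support_reverse] at hm
  exact hp v₁ (List.mem_reverse.mp hm) ⟨hv₁S, hv₁⟩

lemma center_card [Fintype V] (hdisj : Disjoint A₁ A₂) (huniv : A₁ ∪ A₂ = Set.univ)
    (hv₁ : v₁ ∈ A₁) (hv₂ : v₂ ∈ A₂) (hadj : G.Adj v₁ v₂) (S : Set V) :
    numComp G S ≤ Nat.card (G.induce (A₁ ∩ Sᶜ)).ConnectedComponent
        + Nat.card (G.induce (A₂ ∩ Sᶜ)).ConnectedComponent ∧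
      (v₁ ∉ S → v₂ ∉ S → numComp G S + 1 ≤ Nat.card (G.induce (A₁ ∩ Sᶜ)).ConnectedComponent
        + Nat.card (G.induce (A₂ ∩ Sᶜ)).ConnectedComponent) := by
  classical
  have h1 : A₁ ∩ Sᶜ ⊆ Sᶜ := Set.inter_subset_right
  have h2 : A₂ ∩ Sᶜ ⊆ Sᶜ := Set.inter_subset_right
  set F : (G.induce Sᶜ).ConnectedComponent →
      (G.induce (A₁ ∩ Sᶜ)).ConnectedComponent ⊕ (G.induce (A₂ ∩ Sᶜ)).ConnectedComponent :=
    fun C => if h : ((Quot.out C : ↥Sᶜ) : V) ∈ A₁ then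
        Sum.inl ((G.induce (A₁ ∩ Sᶜ)).connectedComponentMk
          ⟨((Quot.out C : ↥Sᶜ) : V), ⟨h, (Quot.out C).2⟩⟩)
      else
        Sum.inr ((G.induce (A₂ ∩ Sᶜ)).connectedComponentMk
          ⟨((Quot.out C : ↥Sᶜ) : V), ⟨mem_right huniv h, (Quot.out C).2⟩⟩)
    with hFdef
  have glue : ∀ {s : Set V} (hs : s ⊆ Sᶜ), ∀ (C : (G.induce Sᶜ).ConnectedComponent)
      (hx : ((Quot.out C : ↥Sᶜ) : V) ∈ s) (y : ↥s),
      (G.induce s).connectedComponentMk ⟨((Quot.out C : ↥Sᶜ) : V), hx⟩ =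
        (G.induce s).connectedComponentMk y →
      C = (G.induce Sᶜ).connectedComponentMk ⟨(y : V), hs y.2⟩ := by
    intro s hs C hx y h
    have h6 := comp_mono hs h
    have h7 : (Quot.mk _ (Quot.out C) : (G.induce Sᶜ).ConnectedComponent) =
        (G.induce Sᶜ).connectedComponentMk ⟨(y : V), hs y.2⟩ := h6
    exact (Quot.out_eq C).symm.trans h7
  have hF : Function.Injective F := by
    intro C C' h
    simp only [hFdef] at h
    by_cases hc : ((Quot.out C : ↥Sᶜ) : V) ∈ A₁ <;>
      by_cases hc' : ((Quot.out C' : ↥Sᶜ) : V) ∈ A₁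
    · rw [dif_pos hc, dif_pos hc'] at h
      have h5 := glue h1 C ⟨hc, (Quot.out C).2⟩ _ (Sum.inl.inj h)
      rw [h5]
      exact Quot.out_eq C'
    · rw [dif_pos hc, dif_neg hc'] at h
      simp at h
    · rw [dif_neg hc, dif_pos hc'] at h
      simp at h
    · rw [dif_neg hc, dif_neg hc'] at h
      have h5 := glue h2 C ⟨mem_right huniv hc, (Quot.out C).2⟩ _ (Sum.inr.inj h)
      rw [h5]
      exact Quot.out_eq C'
  refine ⟨?_, ?_⟩
  · have := Nat.card_le_card_of_injective F hF
    rwa [Nat.card_sum] at this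
  intro hv₁S hv₂S
  have hbr : (G.induce Sᶜ).connectedComponentMk ⟨v₁, hv₁S⟩ =
      (G.induce Sᶜ).connectedComponentMk ⟨v₂, hv₂S⟩ :=
    ConnectedComponent.sound (Adj.reachable (by simpa using hadj))
  set C₀ := (G.induce Sᶜ).connectedComponentMk ⟨v₁, hv₁S⟩ with hC₀
  have main : ∃ y, ∀ C, F C ≠ y := by
    by_cases h0 : ((Quot.out C₀ : ↥Sᶜ) : V) ∈ A₁
    · refine ⟨Sum.inr ((G.induce (A₂ ∩ Sᶜ)).connectedComponentMk ⟨v₂, hv₂, hv₂S⟩), ?_⟩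
      intro C hC
      simp only [hFdef] at hC
      by_cases hc : ((Quot.out C : ↥Sᶜ) : V) ∈ A₁
      · rw [dif_pos hc] at hC; simp at hC
      · rw [dif_neg hc] at hC
        have h5 := glue h2 C ⟨mem_right huniv hc, (Quot.out C).2⟩ _ (Sum.inr.inj hC)
        have h6 : C = C₀ := h5.trans hbr.symm
        exact hc (by rw [h6]; exact h0)
    · refine ⟨Sum.inl ((G.induce (A₁ ∩ Sᶜ)).connectedComponentMk ⟨v₁, hv₁, hv₁S⟩), ?_⟩
      intro C hC
      simp only [hFdef] at hC
      by_cases hc : ((Quot.out C : ↥Sᶜ) : V) ∈ A₁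
      · rw [dif_pos hc] at hC
        have h5 := glue h1 C ⟨hc, (Quot.out C).2⟩ _ (Sum.inl.inj hC)
        have h6 : C = C₀ := h5
        exact h0 (by rw [← h6]; exact hc)
      · rw [dif_neg hc] at hC; simp at hC
  obtain ⟨y, hy⟩ := main
  have := card_succ_le F hF y hy
  rwa [Nat.card_sum] at this

lemma key [Fintype V] (hdisj : Disjoint A₁ A₂) (huniv : A₁ ∪ A₂ = Set.univ)
    (hv₁ : v₁ ∈ A₁) (hv₂ : v₂ ∈ A₂) (hadj : G.Adj v₁ v₂)
    (hcross : ∀ ⦃x y⦄, G.Adj x y → x ∈ A₁ → y ∈ A₂ → x = v₁ ∧ y = v₂) (S : Set V) :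
    numComp G S + 1 ≤ numComp G (S ∩ A₁) + numComp G (S ∩ A₂) := by
  classical
  have hcross' : ∀ ⦃x y⦄, G.Adj x y → x ∈ A₂ → y ∈ A₁ → x = v₂ ∧ y = v₁ := fun x y h hx hy =>
    ⟨(hcross h.symm hy hx).2, (hcross h.symm hy hx).1⟩
  have s1 := side_card hdisj huniv hv₁ hv₂ hcross S
  have s2 := side_card (A₁ := A₂) (A₂ := A₁) (v₁ := v₂) (v₂ := v₁) hdisj.symm
    (by rw [Set.union_comm]; exact huniv) hv₂ hv₁ hcross' S
  have hc := center_card hdisj huniv hv₁ hv₂ hadj S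
  by_cases hm1 : v₁ ∈ S <;> by_cases hm2 : v₂ ∈ S
  · have := s1.2 hm1; have := s2.2 hm2; have := hc.1; omega
  · have := s1.2 hm1; have := s2.1; have := hc.1; omega
  · have := s1.1; have := s2.2 hm2; have := hc.1; omega
  · have := s1.1; have := s2.1; have := hc.2 hm1 hm2; omega

end ToughBridge

/-- If `G = G₁ ∪ G₂ ∪ {v₁v₂}` where `V(G₁)` and `V(G₂)` are disjoint, `v₁ ∈ V(G₁)`,
`v₂ ∈ V(G₂)`, and `S` is a tough set of `G`, then `S ⊆ V(G₁)` or `S ⊆ V(G₂)`. -/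
theorem toughSet_subset_of_bridge {V : Type*} [Fintype V]
    (G G₁ G₂ : SimpleGraph V) (A₁ A₂ : Set V) (v₁ v₂ : V)
    (hdisj : Disjoint A₁ A₂) (huniv : A₁ ∪ A₂ = Set.univ)
    (hsupp₁ : G₁.support ⊆ A₁) (hsupp₂ : G₂.support ⊆ A₂)
    (hv₁ : v₁ ∈ A₁) (hv₂ : v₂ ∈ A₂)
    (hG : G = G₁ ⊔ G₂ ⊔ SimpleGraph.fromEdgeSet {s(v₁, v₂)})
    (hconn : G.Connected)
    (S : Set V) (hS : IsToughSet G S) :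
    S ⊆ A₁ ∨ S ⊆ A₂ := by
  classical
  by_contra hcon
  push_neg at hcon
  obtain ⟨hc1, hc2⟩ := hcon
  -- structural facts
  have hne : v₁ ≠ v₂ := fun h => Set.disjoint_left.mp hdisj hv₁ (h ▸ hv₂)
  have hadj : G.Adj v₁ v₂ := by
    rw [hG]
    exact Or.inr (by rw [SimpleGraph.fromEdgeSet_adj]; exact ⟨rfl, hne⟩)
  have hcross : ∀ ⦃x y⦄, G.Adj x y → x ∈ A₁ → y ∈ A₂ → x = v₁ ∧ y = v₂ := by
    intro x y h hx hy
    rw [hG] at h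
    rcases h with (h | h) | h
    · exact absurd (hsupp₁ (G₁.mem_support.mpr ⟨x, h.symm⟩))
        (fun hyA => Set.disjoint_left.mp hdisj hyA hy)
    · exact absurd (hsupp₂ (G₂.mem_support.mpr ⟨y, h⟩))
        (fun hxA => Set.disjoint_left.mp hdisj hx hxA)
    · rw [SimpleGraph.fromEdgeSet_adj] at h
      obtain ⟨hm, hxy⟩ := h
      rw [Set.mem_singleton_iff, Sym2.eq_iff] at hm
      rcases hm with ⟨rfl, rfl⟩ | ⟨rfl, rfl⟩
      · exact ⟨rfl, rfl⟩
      · exact (Set.disjoint_left.mp hdisj hx hv₂).elim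
  -- the key combinatorial inequality
  have hkey : numComp G S + 1 ≤ numComp G (S ∩ A₁) + numComp G (S ∩ A₂) :=
    ToughBridge.key hdisj huniv hv₁ hv₂ hadj hcross S
  -- cardinalities
  have hSsplit : (S ∩ A₁) ∪ (S ∩ A₂) = S := by
    rw [← Set.inter_union_distrib_left, huniv, Set.inter_univ]
  have hdisj' : Disjoint (S ∩ A₁) (S ∩ A₂) :=
    Set.disjoint_of_subset Set.inter_subset_right Set.inter_subset_right hdisj
  have hcard : (S ∩ A₁).ncard + (S ∩ A₂).ncard = S.ncard := by
    rw [← Set.ncard_union_eq hdisj' (Set.toFinite _) (Set.toFinite _), hSsplit]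
  obtain ⟨x₁, hx₁S, hx₁⟩ := Set.not_subset.mp hc2
  obtain ⟨x₂, hx₂S, hx₂⟩ := Set.not_subset.mp hc1
  have hk1 : 1 ≤ (S ∩ A₁).ncard := by
    rw [Nat.one_le_iff_ne_zero, ← Nat.pos_iff_ne_zero, Set.ncard_pos (Set.toFinite _)]
    exact ⟨x₁, hx₁S, (huniv ▸ Set.mem_univ x₁ : x₁ ∈ A₁ ∪ A₂).resolve_right hx₁⟩
  have hk2 : 1 ≤ (S ∩ A₂).ncard := by
    rw [Nat.one_le_iff_ne_zero, ← Nat.pos_iff_ne_zero, Set.ncard_pos (Set.toFinite _)]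
    exact ⟨x₂, hx₂S, (huniv ▸ Set.mem_univ x₂ : x₂ ∈ A₁ ∪ A₂).resolve_left hx₂⟩
  obtain ⟨hcut, htough⟩ := hS
  have hn2 : 1 < numComp G S := hcut
  have hnpos : (0 : ℝ) < (numComp G S : ℝ) := by exact_mod_cast Nat.lt_of_lt_of_le Nat.zero_lt_one hn2.le
  have hkcard : 1 ≤ S.ncard := by omega
  have hτpos : 0 < toughness G := by
    have h1k : (1 : ℝ) ≤ (S.ncard : ℝ) := by exact_mod_cast hkcard
    nlinarith [htough, hnpos, h1k]
  have hbdd : BddBelow {r : ℝ | ∃ T : Set V, IsCutset G T ∧ r = (T.ncard : ℝ) / (numComp G T : ℝ)} := by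
    refine ⟨0, ?_⟩
    rintro r ⟨T, _, rfl⟩
    positivity
  have hle : ∀ T : Set V, IsCutset G T → toughness G ≤ (T.ncard : ℝ) / (numComp G T : ℝ) :=
    fun T hT => csInf_le hbdd ⟨T, hT, rfl⟩
  -- case analysis
  rcases le_or_gt (numComp G (S ∩ A₁)) 1 with hn1 | hn1
  · -- S ∩ A₂ alone is at least as good, strictly better since |S ∩ A₁| ≥ 1
    have hge : numComp G S ≤ numComp G (S ∩ A₂) := by omega
    have hcut2 : IsCutset G (S ∩ A₂) := by
      show 1 < numComp G (S ∩ A₂); omega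
    have hT := hle _ hcut2
    have hpos2 : (0 : ℝ) < (numComp G (S ∩ A₂) : ℝ) := by
      have : 0 < numComp G (S ∩ A₂) := by omega
      exact_mod_cast this
    rw [le_div_iff₀ hpos2] at hT
    have c1 : ((S ∩ A₂).ncard : ℝ) ≤ (S.ncard : ℝ) - 1 := by
      have : (S ∩ A₂).ncard + 1 ≤ S.ncard := by omega
      have := (Nat.cast_le (α := ℝ)).mpr this
      push_cast at this
      linarith
    have c2 : ((numComp G S : ℕ) : ℝ) ≤ ((numComp G (S ∩ A₂) : ℕ) : ℝ) := by exact_mod_cast hge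
    have c3 : toughness G * (numComp G S : ℝ) ≤ toughness G * (numComp G (S ∩ A₂) : ℝ) :=
      mul_le_mul_of_nonneg_left c2 hτpos.le
    linarith [htough]
  rcases le_or_gt (numComp G (S ∩ A₂)) 1 with hn1' | hn1'
  · have hge : numComp G S ≤ numComp G (S ∩ A₁) := by omega
    have hcut2 : IsCutset G (S ∩ A₁) := by
      show 1 < numComp G (S ∩ A₁); omega
    have hT := hle _ hcut2
    have hpos2 : (0 : ℝ) < (numComp G (S ∩ A₁) : ℝ) := by
      have : 0 < numComp G (S ∩ A₁) := by omega
      exact_mod_cast this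
    rw [le_div_iff₀ hpos2] at hT
    have c1 : ((S ∩ A₁).ncard : ℝ) ≤ (S.ncard : ℝ) - 1 := by
      have : (S ∩ A₁).ncard + 1 ≤ S.ncard := by omega
      have := (Nat.cast_le (α := ℝ)).mpr this
      push_cast at this
      linarith
    have c2 : ((numComp G S : ℕ) : ℝ) ≤ ((numComp G (S ∩ A₁) : ℕ) : ℝ) := by exact_mod_cast hge
    have c3 : toughness G * (numComp G S : ℝ) ≤ toughness G * (numComp G (S ∩ A₁) : ℝ) :=
      mul_le_mul_of_nonneg_left c2 hτpos.le
    linarith [htough]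
  · -- both cutsets
    have hcutA : IsCutset G (S ∩ A₁) := hn1
    have hcutB : IsCutset G (S ∩ A₂) := hn1'
    have hTA := hle _ hcutA
    have hTB := hle _ hcutB
    have hposA : (0 : ℝ) < (numComp G (S ∩ A₁) : ℝ) := by
      have : 0 < numComp G (S ∩ A₁) := by omega
      exact_mod_cast this
    have hposB : (0 : ℝ) < (numComp G (S ∩ A₂) : ℝ) := by
      have : 0 < numComp G (S ∩ A₂) := by omega
      exact_mod_cast this
    rw [le_div_iff₀ hposA] at hTA
    rw [le_div_iff₀ hposB] at hTB
    have hsum : ((S ∩ A₁).ncard : ℝ) + ((S ∩ A₂).ncard : ℝ) = (S.ncard : ℝ) := by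
      exact_mod_cast hcard
    have hkeyR : (numComp G S : ℝ) + 1 ≤ (numComp G (S ∩ A₁) : ℝ) + (numComp G (S ∩ A₂) : ℝ) := by
      exact_mod_cast hkey
    nlinarith [hTA, hTB, htough, hτpos, hsum, hkeyR]
end

section
/- Let G = G₁ ∪ G₂ with V(G₁) ∩ V(G₂) = {u, v} and E(G₁) ∩ E(G₂) = ∅, and suppose τ(G) < 1. If S is a tough set of minimum size with S ∩ {u, v} = ∅, then S ⊆ V(G₁) − {u, v} or S ⊆ V(G₂) − {u, v}. -/
open SimpleGraph

private lemma reach_ind {W : Type*} {K : SimpleGraph W} (P : W → Prop)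
    (h : ∀ a b, K.Adj a b → P a → P b) {x y : W} (hr : K.Reachable x y) : P x → P y := by
  obtain ⟨w⟩ := hr
  induction w with
  | nil => exact id
  | cons ha _ ih => exact fun hx => ih (h _ _ ha hx)

private lemma side_closure {V : Type*} (G : SimpleGraph V) (S T B : Set V) (u v : V)
    (hBS : ∀ z, z ∈ B → z ∉ T → z ∉ S)
    (hcross : ∀ a b, G.Adj a b → a ∈ B → b ∈ B ∨ b = u ∨ b = v)
    (huS : u ∉ S) (hvS : v ∉ S) (huB : u ∉ B) (hvB : v ∉ B)
    (C : (G.induce Sᶜ).ConnectedComponent)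
    (hP : ∀ z : ↥(Sᶜ), (G.induce Sᶜ).connectedComponentMk z = C → (z : V) ∈ B)
    (x y : ↥(Tᶜ)) (hr : (G.induce Tᶜ).Reachable x y)
    (hx : ∃ hx' : (x : V) ∈ Sᶜ, (G.induce Sᶜ).connectedComponentMk ⟨(x : V), hx'⟩ = C) :
    ∃ hy' : (y : V) ∈ Sᶜ, (G.induce Sᶜ).connectedComponentMk ⟨(y : V), hy'⟩ = C := by
  refine reach_ind
    (fun w : ↥(Tᶜ) => ∃ hw' : (w : V) ∈ Sᶜ, (G.induce Sᶜ).connectedComponentMk ⟨(w : V), hw'⟩ = C)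
    ?_ hr hx
  rintro a b hab ⟨ha', hCa⟩
  have haB : (a : V) ∈ B := hP _ hCa
  have hGab : G.Adj (a : V) (b : V) := hab
  have hstep : ∀ hb' : (b : V) ∈ Sᶜ,
      (G.induce Sᶜ).connectedComponentMk ⟨(b : V), hb'⟩ = C := by
    intro hb'
    have hadj : (G.induce Sᶜ).Adj ⟨(a : V), ha'⟩ ⟨(b : V), hb'⟩ := hGab
    exact (ConnectedComponent.connectedComponentMk_eq_of_adj hadj).symm.trans hCa
  rcases hcross _ _ hGab haB with hbB | hbu | hbv
  · have hb' : (b : V) ∈ Sᶜ := hBS _ hbB b.2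
    exact ⟨hb', hstep hb'⟩
  · have hb' : (b : V) ∈ Sᶜ := by rw [hbu]; exact huS
    exact absurd (hP _ (hstep hb')) (by rw [hbu] at *; exact huB)
  · have hb' : (b : V) ∈ Sᶜ := by rw [hbv]; exact hvS
    exact absurd (hP _ (hstep hb')) (by rw [hbv] at *; exact hvB)


set_option maxHeartbeats 2000000

/-- If `G = G₁ ∪ G₂` with `V(G₁) ∩ V(G₂) = {u, v}`, disjoint edge sets, and `τ(G) < 1`,
then any minimum-size tough set `S` with `S ∩ {u, v} = ∅` is fully contained in
`V(G₁) \ {u, v}` or in `V(G₂) \ {u, v}`. -/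
theorem minToughSet_subset_of_two_cut {V : Type*} [Fintype V]
    (G G₁ G₂ : SimpleGraph V) (A₁ A₂ : Set V) (u v : V) (huv : u ≠ v)
    (hG : G = G₁ ⊔ G₂) (hEdisj : Disjoint G₁.edgeSet G₂.edgeSet)
    (hsupp₁ : G₁.support ⊆ A₁) (hsupp₂ : G₂.support ⊆ A₂)
    (hAint : A₁ ∩ A₂ = {u, v}) (hAuniv : A₁ ∪ A₂ = Set.univ)
    (hconn : G.Connected) (htough : toughness G < 1)
    (S : Set V) (hS : IsToughSet G S)
    (hmin : ∀ S' : Set V, IsToughSet G S' → S.ncard ≤ S'.ncard)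
    (hSuv : S ∩ {u, v} = ∅) :
    S ⊆ A₁ \ {u, v} ∨ S ⊆ A₂ \ {u, v} := by
  classical
  by_contra hcon
  push_neg at hcon
  obtain ⟨hc1, hc2⟩ := hcon
  have huS : u ∉ S := fun h => (Set.eq_empty_iff_forall_notMem.mp hSuv u) ⟨h, Or.inl rfl⟩
  have hvS : v ∉ S := fun h => (Set.eq_empty_iff_forall_notMem.mp hSuv v) ⟨h, Or.inr rfl⟩
  have huA : u ∈ A₁ ∩ A₂ := by rw [hAint]; exact Or.inl rfl
  have hvA : v ∈ A₁ ∩ A₂ := by rw [hAint]; exact Or.inr rfl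
  set B₁ : Set V := A₁ \ A₂ with hB₁def
  set B₂ : Set V := A₂ \ A₁ with hB₂def
  have huB₁ : u ∉ B₁ := fun h => h.2 huA.2
  have hvB₁ : v ∉ B₁ := fun h => h.2 hvA.2
  have huB₂ : u ∉ B₂ := fun h => h.2 huA.1
  have hvB₂ : v ∉ B₂ := fun h => h.2 hvA.1
  have htot : ∀ z : V, z ∉ B₁ → z ∉ B₂ → z = u ∨ z = v := by
    intro z h1 h2
    have hz : z ∈ A₁ ∪ A₂ := by rw [hAuniv]; trivial
    have hz2 : z ∈ A₁ ∩ A₂ := by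
      rcases hz with h | h
      · exact ⟨h, by by_contra h'; exact h1 ⟨h, h'⟩⟩
      · exact ⟨by by_contra h'; exact h2 ⟨h, h'⟩, h⟩
    rw [hAint] at hz2; exact hz2
  have hcross₁ : ∀ a b, G.Adj a b → a ∈ B₁ → b ∈ B₁ ∨ b = u ∨ b = v := by
    intro a b hab haB
    have hab' : G₁.Adj a b ∨ G₂.Adj a b := by rw [hG] at hab; exact hab
    have hbA : b ∈ A₁ := by
      rcases hab' with h | h
      · exact hsupp₁ (G₁.mem_support.mpr ⟨a, h.symm⟩)
      · exact absurd (hsupp₂ (G₂.mem_support.mpr ⟨b, h⟩)) haB.2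
    by_cases hbA2 : b ∈ A₂
    · right; have : b ∈ ({u, v} : Set V) := hAint ▸ (⟨hbA, hbA2⟩ : b ∈ A₁ ∩ A₂); exact this
    · exact Or.inl ⟨hbA, hbA2⟩
  have hcross₂ : ∀ a b, G.Adj a b → a ∈ B₂ → b ∈ B₂ ∨ b = u ∨ b = v := by
    intro a b hab haB
    have hab' : G₁.Adj a b ∨ G₂.Adj a b := by rw [hG] at hab; exact hab
    have hbA : b ∈ A₂ := by
      rcases hab' with h | h
      · exact absurd (hsupp₁ (G₁.mem_support.mpr ⟨b, h⟩)) haB.2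
      · exact hsupp₂ (G₂.mem_support.mpr ⟨a, h.symm⟩)
    by_cases hbA2 : b ∈ A₁
    · right
      have : b ∈ ({u, v} : Set V) := hAint ▸ (⟨hbA2, hbA⟩ : b ∈ A₁ ∩ A₂)
      exact this
    · exact Or.inl ⟨hbA, hbA2⟩
  set S₁ : Set V := S ∩ B₁ with hS₁def
  set S₂ : Set V := S ∩ B₂ with hS₂def
  have hS₁B : ∀ z, z ∈ B₁ → z ∉ S₁ → z ∉ S := fun z hzB hz hzS => hz ⟨hzS, hzB⟩
  have hS₂B : ∀ z, z ∈ B₂ → z ∉ S₂ → z ∉ S := fun z hzB hz hzS => hz ⟨hzS, hzB⟩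
  have hSsplit : S = S₁ ∪ S₂ := by
    ext z
    constructor
    · intro hz
      by_cases h1 : z ∈ B₁
      · exact Or.inl ⟨hz, h1⟩
      · by_cases h2 : z ∈ B₂
        · exact Or.inr ⟨hz, h2⟩
        · rcases htot z h1 h2 with rfl | rfl
          · exact absurd hz huS
          · exact absurd hz hvS
    · rintro (⟨h, _⟩ | ⟨h, _⟩) <;> exact h
  have hdisj : Disjoint S₁ S₂ := by
    rw [Set.disjoint_left]
    rintro z ⟨_, hz1⟩ ⟨_, hz2⟩
    exact hz2.2 hz1.1
  have hS₁ne : S₁.Nonempty := by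
    obtain ⟨x, hxS, hx⟩ := Set.not_subset.mp hc2
    have hxu : x ≠ u := fun h => huS (h ▸ hxS)
    have hxv : x ≠ v := fun h => hvS (h ▸ hxS)
    have hxB2 : x ∉ B₂ := fun h => hx ⟨h.1, by simp [hxu, hxv]⟩
    have hxB1 : x ∈ B₁ := by
      by_contra h
      rcases htot x h hxB2 with rfl | rfl
      · exact hxu rfl
      · exact hxv rfl
    exact ⟨x, hxS, hxB1⟩
  have hS₂ne : S₂.Nonempty := by
    obtain ⟨x, hxS, hx⟩ := Set.not_subset.mp hc1
    have hxu : x ≠ u := fun h => huS (h ▸ hxS)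
    have hxv : x ≠ v := fun h => hvS (h ▸ hxS)
    have hxB1 : x ∉ B₁ := fun h => hx ⟨h.1, by simp [hxu, hxv]⟩
    have hxB2 : x ∈ B₂ := by
      by_contra h
      rcases htot x hxB1 h with rfl | rfl
      · exact hxu rfl
      · exact hxv rfl
    exact ⟨x, hxS, hxB2⟩
  -- graph part
  have hsub1 : (Sᶜ : Set V) ⊆ S₁ᶜ := fun z hz h => hz h.1
  have hsub2 : (Sᶜ : Set V) ⊆ S₂ᶜ := fun z hz h => hz h.1
  let φ₁ : G.induce Sᶜ →g G.induce S₁ᶜ := ⟨fun w => ⟨(w : V), hsub1 w.2⟩, fun {a b} hab => hab⟩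
  let φ₂ : G.induce Sᶜ →g G.induce S₂ᶜ := ⟨fun w => ⟨(w : V), hsub2 w.2⟩, fun {a b} hab => hab⟩
  let u' : ↥(Sᶜ : Set V) := ⟨u, huS⟩
  let v' : ↥(Sᶜ : Set V) := ⟨v, hvS⟩
  let u₁ : ↥(S₁ᶜ : Set V) := ⟨u, hsub1 huS⟩
  let v₂ : ↥(S₂ᶜ : Set V) := ⟨v, hsub2 hvS⟩
  let H := G.induce Sᶜ
  let P1 : H.ConnectedComponent → Prop :=
    fun C => ∀ z : ↥(Sᶜ : Set V), H.connectedComponentMk z = C → (z : V) ∈ B₁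
  let P2 : H.ConnectedComponent → Prop :=
    fun C => ∀ z : ↥(Sᶜ : Set V), H.connectedComponentMk z = C → (z : V) ∈ B₂
  let cu : H.ConnectedComponent := H.connectedComponentMk u'
  let cv : H.ConnectedComponent := H.connectedComponentMk v'
  have claimB : ∀ C, cu ≠ C → cv ≠ C → ¬ P1 C → P2 C := by
    intro C hcu hcv h1
    have h1' : ∃ z : ↥(Sᶜ : Set V), H.connectedComponentMk z = C ∧ (z : V) ∉ B₁ := by
      by_contra h
      push_neg at h
      exact h1 (fun z hz => h z hz)
    obtain ⟨z₀, hz₀C, hz₀B⟩ := h1'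
    have hz₀u : (z₀ : V) ≠ u := fun h => hcu (by
      rw [← hz₀C]
      exact congrArg H.connectedComponentMk (Subtype.ext h.symm))
    have hz₀v : (z₀ : V) ≠ v := fun h => hcv (by
      rw [← hz₀C]
      exact congrArg H.connectedComponentMk (Subtype.ext h.symm))
    have hz₀B₂ : (z₀ : V) ∈ B₂ := by
      by_contra h
      rcases htot _ hz₀B h with h' | h'
      · exact hz₀u h'
      · exact hz₀v h'
    intro w hwC
    have hr : H.Reachable z₀ w := ConnectedComponent.exact (hz₀C.trans hwC.symm)
    have key := reach_ind
      (fun w : ↥(Sᶜ : Set V) => (w : V) ∈ B₂ ∧ H.connectedComponentMk w = C) ?_ hr ⟨hz₀B₂, hz₀C⟩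
    · exact key.1
    · rintro a b hab ⟨haB, haC⟩
      have hGab : G.Adj (a : V) (b : V) := hab
      have hbC : H.connectedComponentMk b = C :=
        (ConnectedComponent.connectedComponentMk_eq_of_adj (hab : H.Adj a b)).symm.trans haC
      rcases hcross₂ _ _ hGab haB with h | h | h
      · exact ⟨h, hbC⟩
      · exact absurd (by rw [← hbC]; exact congrArg H.connectedComponentMk (Subtype.ext h.symm)) hcu
      · exact absurd (by rw [← hbC]; exact congrArg H.connectedComponentMk (Subtype.ext h.symm)) hcv
  have hmap₁ : ∀ C, P1 C → ∀ (x : ↥(Sᶜ : Set V)), H.connectedComponentMk x = C →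
      ∀ y : ↥(S₁ᶜ : Set V), (G.induce S₁ᶜ).Reachable (φ₁ x) y →
      ∃ hy' : (y : V) ∈ Sᶜ, H.connectedComponentMk ⟨(y : V), hy'⟩ = C := by
    intro C hC x hx y hr
    exact side_closure G S S₁ B₁ u v hS₁B hcross₁ huS hvS huB₁ hvB₁ C hC (φ₁ x) y hr ⟨x.2, hx⟩
  have hmap₂ : ∀ C, P2 C → ∀ (x : ↥(Sᶜ : Set V)), H.connectedComponentMk x = C →
      ∀ y : ↥(S₂ᶜ : Set V), (G.induce S₂ᶜ).Reachable (φ₂ x) y →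
      ∃ hy' : (y : V) ∈ Sᶜ, H.connectedComponentMk ⟨(y : V), hy'⟩ = C := by
    intro C hC x hx y hr
    exact side_closure G S S₂ B₂ u v hS₂B hcross₂ huS hvS huB₂ hvB₂ C hC (φ₂ x) y hr ⟨x.2, hx⟩
  have fact1 : ∀ C, P1 C → C.map φ₁ = (G.induce S₁ᶜ).connectedComponentMk u₁ → cu = C := by
    intro C hC heq
    obtain ⟨x, hx⟩ := C.exists_rep
    replace hx : (G.induce Sᶜ).connectedComponentMk x = C := hx
    have hr : (G.induce S₁ᶜ).Reachable (φ₁ x) u₁ := ConnectedComponent.exact (by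
      rw [← ConnectedComponent.map_mk φ₁ x, hx, heq])
    obtain ⟨hu', hC'⟩ := hmap₁ C hC x hx u₁ hr
    exact hC'
  have fact2 : ∀ C, P2 C → C.map φ₂ = (G.induce S₂ᶜ).connectedComponentMk v₂ → cv = C := by
    intro C hC heq
    obtain ⟨x, hx⟩ := C.exists_rep
    replace hx : (G.induce Sᶜ).connectedComponentMk x = C := hx
    have hr : (G.induce S₂ᶜ).Reachable (φ₂ x) v₂ := ConnectedComponent.exact (by
      rw [← ConnectedComponent.map_mk φ₂ x, hx, heq])
    obtain ⟨hv', hC'⟩ := hmap₂ C hC x hx v₂ hr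
    exact hC'
  have fact3 : ∀ C C', P1 C → P1 C' → C.map φ₁ = C'.map φ₁ → C = C' := by
    intro C C' hC hC' heq
    obtain ⟨x, hx⟩ := C.exists_rep
    obtain ⟨x', hx'⟩ := C'.exists_rep
    replace hx : (G.induce Sᶜ).connectedComponentMk x = C := hx
    replace hx' : (G.induce Sᶜ).connectedComponentMk x' = C' := hx'
    have hr : (G.induce S₁ᶜ).Reachable (φ₁ x) (φ₁ x') := ConnectedComponent.exact (by
      rw [← ConnectedComponent.map_mk φ₁ x, ← ConnectedComponent.map_mk φ₁ x', hx, hx', heq])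
    obtain ⟨h', hC₂⟩ := hmap₁ C hC x hx (φ₁ x') hr
    exact hC₂.symm.trans hx'
  have fact4 : ∀ C C', P2 C → P2 C' → C.map φ₂ = C'.map φ₂ → C = C' := by
    intro C C' hC hC' heq
    obtain ⟨x, hx⟩ := C.exists_rep
    obtain ⟨x', hx'⟩ := C'.exists_rep
    replace hx : (G.induce Sᶜ).connectedComponentMk x = C := hx
    replace hx' : (G.induce Sᶜ).connectedComponentMk x' = C' := hx'
    have hr : (G.induce S₂ᶜ).Reachable (φ₂ x) (φ₂ x') := ConnectedComponent.exact (by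
      rw [← ConnectedComponent.map_mk φ₂ x, ← ConnectedComponent.map_mk φ₂ x', hx, hx', heq])
    obtain ⟨h', hC₂⟩ := hmap₂ C hC x hx (φ₂ x') hr
    exact hC₂.symm.trans hx'
  have hnum : numComp G S ≤ numComp G S₁ + numComp G S₂ := by
    let F : H.ConnectedComponent →
        (G.induce S₁ᶜ).ConnectedComponent ⊕ (G.induce S₂ᶜ).ConnectedComponent := fun C =>
      if cu = C then Sum.inl ((G.induce S₁ᶜ).connectedComponentMk u₁)
      else if cv = C then Sum.inr ((G.induce S₂ᶜ).connectedComponentMk v₂)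
      else if P1 C then Sum.inl (C.map φ₁) else Sum.inr (C.map φ₂)
    have hFinj : Function.Injective F := by
      intro C C' hF
      simp only [F] at hF
      by_cases h1 : cu = C
      · rw [if_pos h1] at hF
        by_cases h4 : cu = C'
        · exact h1.symm.trans h4
        · rw [if_neg h4] at hF
          by_cases h5 : cv = C'
          · rw [if_pos h5] at hF; exact absurd hF (by simp)
          · rw [if_neg h5] at hF
            by_cases h6 : P1 C'
            · rw [if_pos h6] at hF
              exact absurd (fact1 C' h6 (Sum.inl.inj hF).symm) h4
            · rw [if_neg h6] at hF; exact absurd hF (by simp)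
      · rw [if_neg h1] at hF
        by_cases h2 : cv = C
        · rw [if_pos h2] at hF
          by_cases h4 : cu = C'
          · rw [if_pos h4] at hF; exact absurd hF (by simp)
          · rw [if_neg h4] at hF
            by_cases h5 : cv = C'
            · exact h2.symm.trans h5
            · rw [if_neg h5] at hF
              by_cases h6 : P1 C'
              · rw [if_pos h6] at hF; exact absurd hF (by simp)
              · rw [if_neg h6] at hF
                exact absurd (fact2 C' (claimB C' h4 h5 h6) (Sum.inr.inj hF).symm) h5
        · rw [if_neg h2] at hF
          by_cases h3 : P1 C
          · rw [if_pos h3] at hF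
            by_cases h4 : cu = C'
            · rw [if_pos h4] at hF; exact absurd (fact1 C h3 (Sum.inl.inj hF)) h1
            · rw [if_neg h4] at hF
              by_cases h5 : cv = C'
              · rw [if_pos h5] at hF; exact absurd hF (by simp)
              · rw [if_neg h5] at hF
                by_cases h6 : P1 C'
                · rw [if_pos h6] at hF; exact fact3 C C' h3 h6 (Sum.inl.inj hF)
                · rw [if_neg h6] at hF; exact absurd hF (by simp)
          · rw [if_neg h3] at hF
            have h3' := claimB C h1 h2 h3
            by_cases h4 : cu = C'
            · rw [if_pos h4] at hF; exact absurd hF (by simp)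
            · rw [if_neg h4] at hF
              by_cases h5 : cv = C'
              · rw [if_pos h5] at hF; exact absurd (fact2 C h3' (Sum.inr.inj hF)) h2
              · rw [if_neg h5] at hF
                by_cases h6 : P1 C'
                · rw [if_pos h6] at hF; exact absurd hF (by simp)
                · rw [if_neg h6] at hF
                  exact fact4 C C' h3' (claimB C' h4 h5 h6) (Sum.inr.inj hF)
    have hcardle := Nat.card_le_card_of_injective F hFinj
    rw [Nat.card_sum] at hcardle
    exact hcardle
  -- toughness bounds
  have hlow : ∀ T : Set V, IsCutset G T → toughness G * (numComp G T : ℝ) ≤ (T.ncard : ℝ) := by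
    intro T hT
    have hbdd : BddBelow {r : ℝ | ∃ S' : Set V,
        IsCutset G S' ∧ r = (S'.ncard : ℝ) / (numComp G S' : ℝ)} := by
      refine ⟨0, ?_⟩
      rintro r ⟨T', hT', rfl⟩
      positivity
    have hmem : (T.ncard : ℝ) / (numComp G T : ℝ) ∈ {r : ℝ | ∃ S' : Set V,
        IsCutset G S' ∧ r = (S'.ncard : ℝ) / (numComp G S' : ℝ)} := ⟨T, hT, rfl⟩
    have hle : toughness G ≤ (T.ncard : ℝ) / (numComp G T : ℝ) := csInf_le hbdd hmem
    have hpos : (0:ℝ) < (numComp G T : ℝ) := by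
      have h0 : 0 < numComp G T := lt_trans Nat.zero_lt_one hT
      exact_mod_cast h0
    calc toughness G * (numComp G T : ℝ)
        ≤ ((T.ncard : ℝ) / (numComp G T : ℝ)) * (numComp G T : ℝ) :=
          mul_le_mul_of_nonneg_right hle hpos.le
      _ = (T.ncard : ℝ) := div_mul_cancel₀ _ hpos.ne'
  have hcut : 1 < numComp G S := hS.1
  have hval : (S.ncard : ℝ) = toughness G * (numComp G S : ℝ) := hS.2
  have hcard_split : S.ncard = S₁.ncard + S₂.ncard := by
    rw [hSsplit]
    exact Set.ncard_union_eq hdisj (Set.toFinite _) (Set.toFinite _)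
  have hS₁pos : 0 < S₁.ncard := (Set.ncard_pos (Set.toFinite _)).mpr hS₁ne
  have hS₂pos : 0 < S₂.ncard := (Set.ncard_pos (Set.toFinite _)).mpr hS₂ne
  have hn₁pos : 0 < numComp G S₁ := by
    have : Nonempty (G.induce S₁ᶜ).ConnectedComponent :=
      ⟨(G.induce S₁ᶜ).connectedComponentMk u₁⟩
    exact Nat.card_pos
  have hn₂pos : 0 < numComp G S₂ := by
    have : Nonempty (G.induce S₂ᶜ).ConnectedComponent :=
      ⟨(G.induce S₂ᶜ).connectedComponentMk v₂⟩
    exact Nat.card_pos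
  set t := toughness G with htdef
  have hNcast : (2:ℝ) ≤ (numComp G S : ℝ) := by exact_mod_cast hcut
  have hNsum : ((numComp G S : ℕ) : ℝ) ≤ (numComp G S₁ : ℝ) + (numComp G S₂ : ℝ) := by
    exact_mod_cast hnum
  have hab : (S.ncard : ℝ) = (S₁.ncard : ℝ) + (S₂.ncard : ℝ) := by exact_mod_cast hcard_split
  have ha1 : (1:ℝ) ≤ (S₁.ncard : ℝ) := by exact_mod_cast hS₁pos
  have hb1 : (1:ℝ) ≤ (S₂.ncard : ℝ) := by exact_mod_cast hS₂pos
  have ht0 : 0 < t := by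
    by_contra h
    push_neg at h
    nlinarith [hval, hab, ha1, hb1, hNcast,
      mul_le_mul_of_nonneg_right h (le_trans (by norm_num : (0:ℝ) ≤ 2) hNcast)]
  have hNgt2 : (2:ℝ) < (numComp G S : ℝ) := by
    nlinarith [mul_pos (lt_of_lt_of_le (by norm_num : (0:ℝ) < 2) hNcast)
      (by linarith : (0:ℝ) < 1 - t), hval, hab, ha1, hb1]
  rcases lt_or_ge 1 (numComp G S₁) with hc₁ | hc₁
  · rcases lt_or_ge 1 (numComp G S₂) with hc₂ | hc₂
    · have l1 := hlow S₁ hc₁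
      have l2 := hlow S₂ hc₂
      have hle' : t * ((numComp G S : ℕ) : ℝ) ≤ t * ((numComp G S₁ : ℝ) + (numComp G S₂ : ℝ)) :=
        mul_le_mul_of_nonneg_left hNsum ht0.le
      have heq1 : (S₁.ncard : ℝ) = t * (numComp G S₁ : ℝ) := by nlinarith [hval, hab, l1, l2, hle']
      have htough₁ : IsToughSet G S₁ := ⟨hc₁, heq1⟩
      have hge := hmin S₁ htough₁
      omega
    · have hN₂le : ((numComp G S₂ : ℕ) : ℝ) ≤ 1 := by exact_mod_cast hc₂
      have l1 := hlow S₁ hc₁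
      have hle' : t * ((numComp G S : ℕ) : ℝ) ≤ t * ((numComp G S₁ : ℝ) + 1) :=
        mul_le_mul_of_nonneg_left (by linarith) ht0.le
      nlinarith [hval, hab, l1, hb1, hle']
  · have hN₁le : ((numComp G S₁ : ℕ) : ℝ) ≤ 1 := by exact_mod_cast hc₁
    have hc₂ : 1 < numComp G S₂ := by
      have h2 : (1:ℝ) < (numComp G S₂ : ℝ) := by linarith
      exact_mod_cast h2
    have l2 := hlow S₂ hc₂
    have hle' : t * ((numComp G S : ℕ) : ℝ) ≤ t * ((numComp G S₂ : ℝ) + 1) :=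
      mul_le_mul_of_nonneg_left (by linarith) ht0.le
    nlinarith [hval, hab, l2, ha1, hle']
end

section
/- Let G = G₁ ∪ G₂ with V(G₁) ∩ V(G₂) = {u, v}, E(G₁) ∩ E(G₂) = ∅, and τ(G) < 1. If S is a tough set with S ∩ {u, v} = ∅ and both S ∩ V(G₁) and S ∩ V(G₂) nonempty, then setting Sᵢ = S ∩ V(Gᵢ) we have |S₁| / c(G−S₁) = |S₂| / c(G−S₂) = τ(G). -/
open SimpleGraph

private lemma trap_lemma {V : Type*} (G G₁ G₂ : SimpleGraph V) (A₁ A₂ : Set V) (u v : V) (S : Set V)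
    (hG : G = G₁ ⊔ G₂) (hsupp₁ : G₁.support ⊆ A₁) (hsupp₂ : G₂.support ⊆ A₂)
    (hAint : A₁ ∩ A₂ = {u, v})
    (hu : u ∈ Sᶜ) (hv : v ∈ Sᶜ)
    (w : ↥Sᶜ) (hw1 : ¬(SimpleGraph.induce Sᶜ G).Reachable w ⟨u, hu⟩)
    (hw2 : ¬(SimpleGraph.induce Sᶜ G).Reachable w ⟨v, hv⟩)
    (hwA : (w : V) ∈ A₁)
    (hw' : (w : V) ∈ (S ∩ A₁)ᶜ)
    (y : ↥(S ∩ A₁)ᶜ)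
    (hr : (SimpleGraph.induce (S ∩ A₁)ᶜ G).Reachable ⟨(w : V), hw'⟩ y) :
    ∃ hy : (y : V) ∈ Sᶜ, (SimpleGraph.induce Sᶜ G).Reachable w ⟨(y : V), hy⟩ ∧ (y : V) ∈ A₁ := by
  obtain ⟨p⟩ := hr
  suffices h : ∀ (z z' : ↥(S ∩ A₁)ᶜ) (_ : (SimpleGraph.induce (S ∩ A₁)ᶜ G).Walk z z'),
      (∃ hz : (z : V) ∈ Sᶜ, (SimpleGraph.induce Sᶜ G).Reachable w ⟨(z : V), hz⟩ ∧ (z : V) ∈ A₁) →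
      (∃ hz : (z' : V) ∈ Sᶜ, (SimpleGraph.induce Sᶜ G).Reachable w ⟨(z' : V), hz⟩ ∧
        (z' : V) ∈ A₁) by
    refine h _ _ p ⟨w.2, ?_, hwA⟩
    rw [Subtype.coe_eta]
  intro z z' p
  induction p with
  | nil => exact id
  | @cons a b c hab pbc ih =>
    rintro ⟨ha, hra, haA⟩
    apply ih
    have hGadj : G.Adj (a : V) (b : V) := hab
    have haA2 : (a : V) ∉ A₂ := by
      intro h2
      have hm : (a : V) ∈ ({u, v} : Set V) := hAint ▸ ⟨haA, h2⟩
      rcases hm with h | h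
      · exact hw1 (by rwa [show (⟨(a : V), ha⟩ : ↥Sᶜ) = ⟨u, hu⟩ from Subtype.ext h] at hra)
      · exact hw2 (by rwa [show (⟨(a : V), ha⟩ : ↥Sᶜ) = ⟨v, hv⟩ from Subtype.ext h] at hra)
    have h1 : G₁.Adj (a : V) (b : V) := by
      rw [hG] at hGadj
      rcases hGadj with h | h
      · exact h
      · exact absurd (hsupp₂ ⟨_, h⟩) haA2
    have hbA : (b : V) ∈ A₁ := hsupp₁ ⟨_, h1.symm⟩
    have hbS : (b : V) ∈ Sᶜ := fun hbS => b.2 ⟨hbS, hbA⟩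
    refine ⟨hbS, hra.trans (SimpleGraph.Adj.reachable ?_), hbA⟩
    exact hGadj

private lemma count_lemma {V : Type*} [Fintype V] (G G₁ G₂ : SimpleGraph V) (A₁ A₂ : Set V) (u v : V)
    (S : Set V)
    (hG : G = G₁ ⊔ G₂) (hsupp₁ : G₁.support ⊆ A₁) (hsupp₂ : G₂.support ⊆ A₂)
    (hAint : A₁ ∩ A₂ = {u, v}) (hAuniv : A₁ ∪ A₂ = Set.univ)
    (hu : u ∈ Sᶜ) (hv : v ∈ Sᶜ) :
    numComp G S ≤ numComp G (S ∩ A₁) + numComp G (S ∩ A₂) := by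
  classical
  set H : SimpleGraph ↥Sᶜ := SimpleGraph.induce Sᶜ G with hH
  set H₁ : SimpleGraph ↥(S ∩ A₁)ᶜ := SimpleGraph.induce (S ∩ A₁)ᶜ G with hH1
  set H₂ : SimpleGraph ↥(S ∩ A₂)ᶜ := SimpleGraph.induce (S ∩ A₂)ᶜ G with hH2
  set ψ₁ : ↥Sᶜ → ↥(S ∩ A₁)ᶜ := fun z => ⟨(z : V), fun h => z.2 h.1⟩ with hψ₁
  set ψ₂ : ↥Sᶜ → ↥(S ∩ A₂)ᶜ := fun z => ⟨(z : V), fun h => z.2 h.1⟩ with hψ₂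
  set u' : ↥Sᶜ := ⟨u, hu⟩ with hu'
  set v' : ↥Sᶜ := ⟨v, hv⟩ with hv'
  -- trap corollaries
  have trapA₁ : ∀ (z : ↥Sᶜ), ¬H.Reachable z u' → ¬H.Reachable z v' → (z : V) ∈ A₁ →
      ∀ (y : ↥(S ∩ A₁)ᶜ), H₁.Reachable (ψ₁ z) y →
      ∃ hy : (y : V) ∈ Sᶜ, H.Reachable z ⟨(y : V), hy⟩ := by
    intro z hz1 hz2 hzA y hr
    obtain ⟨hy, hry, -⟩ := trap_lemma G G₁ G₂ A₁ A₂ u v S hG hsupp₁ hsupp₂ hAint hu hv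
      z hz1 hz2 hzA (fun h => z.2 h.1) y hr
    exact ⟨hy, hry⟩
  have trapA₂ : ∀ (z : ↥Sᶜ), ¬H.Reachable z u' → ¬H.Reachable z v' → (z : V) ∈ A₂ →
      ∀ (y : ↥(S ∩ A₂)ᶜ), H₂.Reachable (ψ₂ z) y →
      ∃ hy : (y : V) ∈ Sᶜ, H.Reachable z ⟨(y : V), hy⟩ := by
    intro z hz1 hz2 hzA y hr
    obtain ⟨hy, hry, -⟩ := trap_lemma G G₂ G₁ A₂ A₁ u v S (by rw [hG, sup_comm]) hsupp₂ hsupp₁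
      (by rw [Set.inter_comm]; exact hAint) hu hv
      z hz1 hz2 hzA (fun h => z.2 h.1) y hr
    exact ⟨hy, hry⟩
  -- the vertex map
  set φ : ↥Sᶜ → H₁.ConnectedComponent ⊕ H₂.ConnectedComponent := fun w =>
    if H.Reachable w u' then Sum.inl (H₁.connectedComponentMk (ψ₁ u'))
    else if H.Reachable w v' then Sum.inr (H₂.connectedComponentMk (ψ₂ v'))
    else if (w : V) ∈ A₁ then Sum.inl (H₁.connectedComponentMk (ψ₁ w))
    else Sum.inr (H₂.connectedComponentMk (ψ₂ w)) with hφ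
  have hstep : ∀ z z' : ↥Sᶜ, H.Adj z z' → φ z = φ z' := by
    intro z z' hadj
    have hr : H.Reachable z z' := hadj.reachable
    have hGadj : G.Adj (z : V) (z' : V) := hadj
    simp only [hφ]
    by_cases h1 : H.Reachable z u'
    · rw [if_pos h1, if_pos (hr.symm.trans h1)]
    · have h1' : ¬H.Reachable z' u' := fun h => h1 (hr.trans h)
      rw [if_neg h1, if_neg h1']
      by_cases h2 : H.Reachable z v'
      · rw [if_pos h2, if_pos (hr.symm.trans h2)]
      · have h2' : ¬H.Reachable z' v' := fun h => h2 (hr.trans h)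
        rw [if_neg h2, if_neg h2']
        have hz2 : (z : V) ∉ ({u, v} : Set V) := by
          rintro (h | h)
          · exact h1 (by rw [show z = u' from Subtype.ext h])
          · exact h2 (by rw [show z = v' from Subtype.ext h])
        have hz2' : (z' : V) ∉ ({u, v} : Set V) := by
          rintro (h | h)
          · exact h1' (by rw [show z' = u' from Subtype.ext h])
          · exact h2' (by rw [show z' = v' from Subtype.ext h])
        have hcases : G₁.Adj (z : V) (z' : V) ∨ G₂.Adj (z : V) (z' : V) := by
          rw [hG] at hGadj; exact hGadj
        rcases hcases with h | h
        · have hzA : (z : V) ∈ A₁ := hsupp₁ ⟨_, h⟩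
          have hz'A : (z' : V) ∈ A₁ := hsupp₁ ⟨_, h.symm⟩
          rw [if_pos hzA, if_pos hz'A]
          congr 1
          exact ConnectedComponent.connectedComponentMk_eq_of_adj (by exact hGadj)
        · have hzA : (z : V) ∉ A₁ := fun hA => hz2 (hAint ▸ ⟨hA, hsupp₂ ⟨_, h⟩⟩)
          have hz'A : (z' : V) ∉ A₁ := fun hA => hz2' (hAint ▸ ⟨hA, hsupp₂ ⟨_, h.symm⟩⟩)
          rw [if_neg hzA, if_neg hz'A]
          congr 1
          exact ConnectedComponent.connectedComponentMk_eq_of_adj (by exact hGadj)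
  have hreach : ∀ z z' : ↥Sᶜ, H.Reachable z z' → φ z = φ z' := by
    intro z z' hr
    obtain ⟨p⟩ := hr
    induction p with
    | nil => rfl
    | cons h p ih => exact (hstep _ _ h).trans ih
  set f : H.ConnectedComponent → H₁.ConnectedComponent ⊕ H₂.ConnectedComponent :=
    Quot.lift φ hreach with hf
  have hfmk : ∀ z : ↥Sᶜ, f (H.connectedComponentMk z) = φ z := fun _ => rfl
  have hinj : Function.Injective f := by
    intro C D
    refine ConnectedComponent.ind₂ (fun z z' => ?_) C D
    intro hfeq
    rw [hfmk, hfmk] at hfeq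
    simp only [hφ] at hfeq
    by_cases hzu : H.Reachable z u'
    · rw [if_pos hzu] at hfeq
      by_cases hz'u : H.Reachable z' u'
      · exact ConnectedComponent.sound (hzu.trans hz'u.symm)
      · rw [if_neg hz'u] at hfeq
        by_cases hz'v : H.Reachable z' v'
        · rw [if_pos hz'v] at hfeq; simp at hfeq
        · rw [if_neg hz'v] at hfeq
          by_cases hz'A : (z' : V) ∈ A₁
          · rw [if_pos hz'A] at hfeq
            exfalso
            have hre : H₁.Reachable (ψ₁ z') (ψ₁ u') :=
              (ConnectedComponent.exact (Sum.inl.inj hfeq)).symm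
            obtain ⟨hy, hry⟩ := trapA₁ z' hz'u hz'v hz'A (ψ₁ u') hre
            exact hz'u (by rwa [show (⟨((ψ₁ u') : V), hy⟩ : ↥Sᶜ) = u' from Subtype.ext rfl]
              at hry)
          · rw [if_neg hz'A] at hfeq; simp at hfeq
    · rw [if_neg hzu] at hfeq
      by_cases hzv : H.Reachable z v'
      · rw [if_pos hzv] at hfeq
        by_cases hz'u : H.Reachable z' u'
        · rw [if_pos hz'u] at hfeq; simp at hfeq
        · rw [if_neg hz'u] at hfeq
          by_cases hz'v : H.Reachable z' v'
          · exact ConnectedComponent.sound (hzv.trans hz'v.symm)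
          · rw [if_neg hz'v] at hfeq
            by_cases hz'A : (z' : V) ∈ A₁
            · rw [if_pos hz'A] at hfeq; simp at hfeq
            · rw [if_neg hz'A] at hfeq
              exfalso
              have hz'A2 : (z' : V) ∈ A₂ := by
                rcases (hAuniv ▸ Set.mem_univ (z' : V) : (z' : V) ∈ A₁ ∪ A₂) with h | h
                · exact absurd h hz'A
                · exact h
              have hre : H₂.Reachable (ψ₂ z') (ψ₂ v') :=
                (ConnectedComponent.exact (Sum.inr.inj hfeq)).symm
              obtain ⟨hy, hry⟩ := trapA₂ z' hz'u hz'v hz'A2 (ψ₂ v') hre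
              exact hz'v (by rwa [show (⟨((ψ₂ v') : V), hy⟩ : ↥Sᶜ) = v' from Subtype.ext rfl]
                at hry)
      · rw [if_neg hzv] at hfeq
        by_cases hzA : (z : V) ∈ A₁
        · rw [if_pos hzA] at hfeq
          by_cases hz'u : H.Reachable z' u'
          · rw [if_pos hz'u] at hfeq
            exfalso
            have hre : H₁.Reachable (ψ₁ z) (ψ₁ u') := ConnectedComponent.exact (Sum.inl.inj hfeq)
            obtain ⟨hy, hry⟩ := trapA₁ z hzu hzv hzA (ψ₁ u') hre
            exact hzu (by rwa [show (⟨((ψ₁ u') : V), hy⟩ : ↥Sᶜ) = u' from Subtype.ext rfl] at hry)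
          · rw [if_neg hz'u] at hfeq
            by_cases hz'v : H.Reachable z' v'
            · rw [if_pos hz'v] at hfeq; simp at hfeq
            · rw [if_neg hz'v] at hfeq
              by_cases hz'A : (z' : V) ∈ A₁
              · rw [if_pos hz'A] at hfeq
                have hre : H₁.Reachable (ψ₁ z) (ψ₁ z') :=
                  ConnectedComponent.exact (Sum.inl.inj hfeq)
                obtain ⟨hy, hry⟩ := trapA₁ z hzu hzv hzA (ψ₁ z') hre
                exact ConnectedComponent.sound
                  (by rwa [show (⟨((ψ₁ z') : V), hy⟩ : ↥Sᶜ) = z' from Subtype.ext rfl] at hry)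
              · rw [if_neg hz'A] at hfeq; simp at hfeq
        · rw [if_neg hzA] at hfeq
          have hzA2 : (z : V) ∈ A₂ := by
            rcases (hAuniv ▸ Set.mem_univ (z : V) : (z : V) ∈ A₁ ∪ A₂) with h | h
            · exact absurd h hzA
            · exact h
          by_cases hz'u : H.Reachable z' u'
          · rw [if_pos hz'u] at hfeq; simp at hfeq
          · rw [if_neg hz'u] at hfeq
            by_cases hz'v : H.Reachable z' v'
            · rw [if_pos hz'v] at hfeq
              exfalso
              have hre : H₂.Reachable (ψ₂ z) (ψ₂ v') :=
                ConnectedComponent.exact (Sum.inr.inj hfeq)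
              obtain ⟨hy, hry⟩ := trapA₂ z hzu hzv hzA2 (ψ₂ v') hre
              exact hzv (by rwa [show (⟨((ψ₂ v') : V), hy⟩ : ↥Sᶜ) = v' from Subtype.ext rfl]
                at hry)
            · rw [if_neg hz'v] at hfeq
              by_cases hz'A : (z' : V) ∈ A₁
              · rw [if_pos hz'A] at hfeq; simp at hfeq
              · rw [if_neg hz'A] at hfeq
                have hre : H₂.Reachable (ψ₂ z) (ψ₂ z') :=
                  ConnectedComponent.exact (Sum.inr.inj hfeq)
                obtain ⟨hy, hry⟩ := trapA₂ z hzu hzv hzA2 (ψ₂ z') hre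
                exact ConnectedComponent.sound
                  (by rwa [show (⟨((ψ₂ z') : V), hy⟩ : ↥Sᶜ) = z' from Subtype.ext rfl] at hry)
  calc numComp G S = Nat.card H.ConnectedComponent := rfl
    _ ≤ Nat.card (H₁.ConnectedComponent ⊕ H₂.ConnectedComponent) :=
        Nat.card_le_card_of_injective f hinj
    _ = numComp G (S ∩ A₁) + numComp G (S ∩ A₂) := Nat.card_sum

/-- If `G = G₁ ∪ G₂` with `V(G₁) ∩ V(G₂) = {u, v}`, disjoint edge sets, `τ(G) < 1`, and `S`
is a tough set with `S ∩ {u, v} = ∅` meeting both `V(G₁)` and `V(G₂)`, then with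
`Sᵢ = S ∩ V(Gᵢ)` we have `|S₁|/c(G−S₁) = |S₂|/c(G−S₂) = τ(G)`. -/
theorem toughSet_ratio_eq_of_two_cut {V : Type*} [Fintype V]
    (G G₁ G₂ : SimpleGraph V) (A₁ A₂ : Set V) (u v : V) (huv : u ≠ v)
    (hG : G = G₁ ⊔ G₂) (hEdisj : Disjoint G₁.edgeSet G₂.edgeSet)
    (hsupp₁ : G₁.support ⊆ A₁) (hsupp₂ : G₂.support ⊆ A₂)
    (hAint : A₁ ∩ A₂ = {u, v}) (hAuniv : A₁ ∪ A₂ = Set.univ)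
    (hconn : G.Connected) (htough : toughness G < 1)
    (S : Set V) (hS : IsToughSet G S) (hSuv : S ∩ {u, v} = ∅)
    (h₁ : (S ∩ A₁).Nonempty) (h₂ : (S ∩ A₂).Nonempty) :
    ((S ∩ A₁).ncard : ℝ) / (numComp G (S ∩ A₁) : ℝ) = toughness G ∧
    ((S ∩ A₂).ncard : ℝ) / (numComp G (S ∩ A₂) : ℝ) = toughness G := by
  classical
  obtain ⟨hScut, hSval⟩ := hS
  have hu : u ∉ S := fun h =>
    (Set.eq_empty_iff_forall_notMem.mp hSuv u) ⟨h, Or.inl rfl⟩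
  have hv : v ∉ S := fun h =>
    (Set.eq_empty_iff_forall_notMem.mp hSuv v) ⟨h, Or.inr rfl⟩
  have hcount0 : numComp G S ≤ numComp G (S ∩ A₁) + numComp G (S ∩ A₂) :=
    count_lemma G G₁ G₂ A₁ A₂ u v S hG hsupp₁ hsupp₂ hAint hAuniv hu hv
  have hnum : ∀ T : Set V, numComp G T = numComp G T := fun _ => rfl
  have hcount : numComp G S ≤ numComp G (S ∩ A₁) + numComp G (S ∩ A₂) := hcount0
  -- cardinality split
  have hdisj : Disjoint (S ∩ A₁) (S ∩ A₂) := by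
    rw [Set.disjoint_iff_inter_eq_empty]
    have heq : (S ∩ A₁) ∩ (S ∩ A₂) = S ∩ (A₁ ∩ A₂) := by
      ext x; simp only [Set.mem_inter_iff]; tauto
    rw [heq, hAint, hSuv]
  have hncard : S.ncard = (S ∩ A₁).ncard + (S ∩ A₂).ncard := by
    have hSsplit : S = (S ∩ A₁) ∪ (S ∩ A₂) := by
      rw [← Set.inter_union_distrib_left, hAuniv, Set.inter_univ]
    conv_lhs => rw [hSsplit]
    exact Set.ncard_union_eq hdisj (Set.toFinite _) (Set.toFinite _)
  -- toughness facts
  have hbdd : BddBelow {r : ℝ | ∃ T : Set V,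
      IsCutset G T ∧ r = (T.ncard : ℝ) / (numComp G T : ℝ)} := by
    refine ⟨0, fun r hr => ?_⟩
    obtain ⟨T, -, rfl⟩ := hr
    positivity
  have hτle : ∀ T : Set V, IsCutset G T →
      toughness G ≤ (T.ncard : ℝ) / (numComp G T : ℝ) :=
    fun T hT => csInf_le hbdd ⟨T, hT, rfl⟩
  have hτ0 : 0 ≤ toughness G := by
    refine le_csInf ⟨_, S, hScut, rfl⟩ (fun r hr => ?_)
    obtain ⟨T, -, rfl⟩ := hr
    positivity
  -- numeric abbreviations
  have hc2 : 2 ≤ numComp G S := hScut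
  have hc₁1 : 1 ≤ numComp G (S ∩ A₁) := by
    have : Nonempty (SimpleGraph.induce (S ∩ A₁)ᶜ G).ConnectedComponent :=
      ⟨(SimpleGraph.induce (S ∩ A₁)ᶜ G).connectedComponentMk ⟨u, fun h => hu h.1⟩⟩
    exact Nat.card_pos
  have hc₂1 : 1 ≤ numComp G (S ∩ A₂) := by
    have : Nonempty (SimpleGraph.induce (S ∩ A₂)ᶜ G).ConnectedComponent :=
      ⟨(SimpleGraph.induce (S ∩ A₂)ᶜ G).connectedComponentMk ⟨u, fun h => hu h.1⟩⟩
    exact Nat.card_pos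
  have hs1 : (1 : ℝ) ≤ ((S ∩ A₁).ncard : ℝ) := by
    exact_mod_cast (Set.ncard_pos (Set.toFinite _)).mpr h₁
  have hs2 : (1 : ℝ) ≤ ((S ∩ A₂).ncard : ℝ) := by
    exact_mod_cast (Set.ncard_pos (Set.toFinite _)).mpr h₂
  have hval : ((S ∩ A₁).ncard : ℝ) + ((S ∩ A₂).ncard : ℝ)
      = toughness G * (numComp G S : ℝ) := by
    rw [← hSval]; exact_mod_cast congrArg (Nat.cast (R := ℝ)) hncard.symm
  have hcountR : (numComp G S : ℝ) ≤ (numComp G (S ∩ A₁) : ℝ) + (numComp G (S ∩ A₂) : ℝ) := by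
    exact_mod_cast hcount
  have hmul : toughness G * (numComp G S : ℝ) ≤
      toughness G * ((numComp G (S ∩ A₁) : ℝ) + (numComp G (S ∩ A₂) : ℝ)) :=
    mul_le_mul_of_nonneg_left hcountR hτ0
  by_cases hcut1 : 2 ≤ numComp G (S ∩ A₁)
  · by_cases hcut2 : 2 ≤ numComp G (S ∩ A₂)
    · have hpos1 : (0 : ℝ) < (numComp G (S ∩ A₁) : ℝ) := by exact_mod_cast hc₁1
      have hpos2 : (0 : ℝ) < (numComp G (S ∩ A₂) : ℝ) := by exact_mod_cast hc₂1
      have ht1 : toughness G * (numComp G (S ∩ A₁) : ℝ) ≤ ((S ∩ A₁).ncard : ℝ) := by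
        have := hτle (S ∩ A₁) hcut1
        rw [le_div_iff₀ hpos1] at this; linarith
      have ht2 : toughness G * (numComp G (S ∩ A₂) : ℝ) ≤ ((S ∩ A₂).ncard : ℝ) := by
        have := hτle (S ∩ A₂) hcut2
        rw [le_div_iff₀ hpos2] at this; linarith
      have hdistrib : toughness G * ((numComp G (S ∩ A₁) : ℝ) + (numComp G (S ∩ A₂) : ℝ))
          = toughness G * (numComp G (S ∩ A₁) : ℝ) + toughness G * (numComp G (S ∩ A₂) : ℝ) :=
        mul_add _ _ _
      constructor
      · rw [div_eq_iff (ne_of_gt hpos1)]; linarith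
      · rw [div_eq_iff (ne_of_gt hpos2)]; linarith
    · exfalso
      have hc₂e : numComp G (S ∩ A₂) = 1 := le_antisymm (by omega) hc₂1
      have hpos1 : (0 : ℝ) < (numComp G (S ∩ A₁) : ℝ) := by exact_mod_cast hc₁1
      have ht1 : toughness G * (numComp G (S ∩ A₁) : ℝ) ≤ ((S ∩ A₁).ncard : ℝ) := by
        have := hτle (S ∩ A₁) hcut1
        rw [le_div_iff₀ hpos1] at this; linarith
      have hdistrib : toughness G * ((numComp G (S ∩ A₁) : ℝ) + (numComp G (S ∩ A₂) : ℝ))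
          = toughness G * (numComp G (S ∩ A₁) : ℝ) + toughness G * (numComp G (S ∩ A₂) : ℝ) :=
        mul_add _ _ _
      have hτc₂ : toughness G * (numComp G (S ∩ A₂) : ℝ) = toughness G := by
        rw [hc₂e]; norm_num
      linarith
  · exfalso
    have hc₁e : numComp G (S ∩ A₁) = 1 := le_antisymm (by omega) hc₁1
    have hτc₁ : toughness G * (numComp G (S ∩ A₁) : ℝ) = toughness G := by
      rw [hc₁e]; norm_num
    have hdistrib : toughness G * ((numComp G (S ∩ A₁) : ℝ) + (numComp G (S ∩ A₂) : ℝ))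
        = toughness G * (numComp G (S ∩ A₁) : ℝ) + toughness G * (numComp G (S ∩ A₂) : ℝ) :=
      mul_add _ _ _
    by_cases hcut2 : 2 ≤ numComp G (S ∩ A₂)
    · have hpos2 : (0 : ℝ) < (numComp G (S ∩ A₂) : ℝ) := by exact_mod_cast hc₂1
      have ht2 : toughness G * (numComp G (S ∩ A₂) : ℝ) ≤ ((S ∩ A₂).ncard : ℝ) := by
        have := hτle (S ∩ A₂) hcut2
        rw [le_div_iff₀ hpos2] at this; linarith
      linarith
    · have hce : numComp G S = 2 := le_antisymm (by omega) hc2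
      have : toughness G * (numComp G S : ℝ) < 2 := by
        rw [hce]; push_cast; linarith
      linarith
end

section
/- Let G be a minimally t-tough graph and e = uv an edge of G. Then no tough set of G − e contains u or v. -/
open SimpleGraph

lemma induce_deleteEdge_eq {V : Type*} (G : SimpleGraph V) (u v : V) (S : Set V)
    (hu : u ∈ S) :
    SimpleGraph.induce Sᶜ (G.deleteEdges {s(u, v)}) = SimpleGraph.induce Sᶜ G := by
  ext a b
  simp only [comap_adj, Function.Embedding.coe_subtype, deleteEdges_adj,
    Set.mem_singleton_iff]
  constructor
  · rintro ⟨h, _⟩; exact h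
  · intro h
    refine ⟨h, fun hs => ?_⟩
    rw [Sym2.eq_iff] at hs
    rcases hs with ⟨ha, _⟩ | ⟨_, hb⟩
    · exact a.2 (ha ▸ hu)
    · exact b.2 (hb ▸ hu)

lemma aux_contra {V : Type*} [Fintype V]
    (G : SimpleGraph V) (t : ℝ) (hG : MinTough G t)
    (u v : V) (he : G.Adj u v)
    (S : Set V) (hS : IsToughSet (G.deleteEdges {s(u, v)}) S) (hu : u ∈ S) : False := by
  have hceq : numComp (G.deleteEdges {s(u, v)}) S = numComp G S := by
    unfold numComp
    rw [induce_deleteEdge_eq G u v S hu]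
  have hcutG : IsCutset G S := by
    have := hS.1
    unfold IsCutset at this ⊢
    omega
  set c : ℕ := numComp G S with hc
  have hcpos : (0:ℝ) < (c:ℝ) := by
    have h1 : 1 < c := hcutG
    exact_mod_cast Nat.lt_of_lt_of_le Nat.zero_lt_one h1.le
  have htogh : toughness (G.deleteEdges {s(u, v)}) = (S.ncard : ℝ) / (c : ℝ) := by
    have h2 := hS.2
    rw [hceq] at h2
    field_simp [h2]
    exact h2.symm
  have hle : toughness G ≤ (S.ncard : ℝ) / (c : ℝ) := by
    apply csInf_le
    · refine ⟨0, fun r hr => ?_⟩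
      obtain ⟨T, _, rfl⟩ := hr
      positivity
    · exact ⟨S, hcutG, rfl⟩
  have hlt : toughness (G.deleteEdges {s(u, v)}) < t := by
    apply hG.2
    rwa [mem_edgeSet]
  rw [htogh] at hlt
  rw [hG.1] at hle
  linarith

/-- If `G` is minimally `t`-tough and `e = uv` is an edge of `G`, then no tough set of
`G − e` contains `u` or `v`. -/
theorem toughSet_of_deleteEdge_avoids_ends {V : Type*} [Fintype V]
    (G : SimpleGraph V) (t : ℝ) (hG : MinTough G t)
    (u v : V) (he : G.Adj u v)
    (S : Set V) (hS : IsToughSet (G.deleteEdges {s(u, v)}) S) :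
    u ∉ S ∧ v ∉ S := by
  constructor
  · intro hu; exact aux_contra G t hG u v he S hS hu
  · intro hv
    refine aux_contra G t hG v u he.symm S ?_ hv
    rwa [Sym2.eq_swap] at hS
end

section
/- Every necklace graph is minimally 1/2-tough. -/
open SimpleGraph

inductive SPTree (V : Type*) where
  | edge (u v : V) : SPTree V
  | series (l r : SPTree V) : SPTree V
  | parallel (l r : SPTree V) : SPTree V

namespace SPTree

def src {V : Type*} : SPTree V → V
  | edge u _ => u
  | series l _ => l.src
  | parallel l _ => l.src

def tgt {V : Type*} : SPTree V → V
  | edge _ v => v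
  | series _ r => r.tgt
  | parallel l _ => l.tgt

def verts {V : Type*} : SPTree V → Set V
  | edge u v => {u, v}
  | series l r => l.verts ∪ r.verts
  | parallel l r => l.verts ∪ r.verts

def edges {V : Type*} : SPTree V → Set (Sym2 V)
  | edge u v => {s(u, v)}
  | series l r => l.edges ∪ r.edges
  | parallel l r => l.edges ∪ r.edges

def WF {V : Type*} : SPTree V → Prop
  | edge u v => u ≠ v
  | series l r => l.WF ∧ r.WF ∧ l.tgt = r.src ∧ l.verts ∩ r.verts = {l.tgt}
  | parallel l r => l.WF ∧ r.WF ∧ l.src = r.src ∧ l.tgt = r.tgt ∧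
      l.verts ∩ r.verts = {l.src, l.tgt} ∧ Disjoint l.edges r.edges

end SPTree

/-- `G` is the series-parallel graph given by the (well-formed, spanning) sp-tree `T`. -/
def RepresentsSP {V : Type*} (G : SimpleGraph V) (T : SPTree V) : Prop :=
  T.WF ∧ T.verts = Set.univ ∧ G = SimpleGraph.fromEdgeSet T.edges

def IsSPGraph {V : Type*} (G : SimpleGraph V) : Prop := ∃ T : SPTree V, RepresentsSP G T

/-- `IsPathT t n` : the sp-tree `t` is a series join of edges forming a path of length `n`. -/
inductive IsPathT {V : Type*} : SPTree V → ℕ → Prop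
  | edge (u v : V) : IsPathT (.edge u v) 1
  | series {l r : SPTree V} {m n : ℕ} : IsPathT l m → IsPathT r n → IsPathT (.series l r) (m + n)

/-- `R₂` : the parallel join of two paths of length 2. -/
def IsR2 {V : Type*} (t : SPTree V) : Prop :=
  ∃ l r : SPTree V, t = .parallel l r ∧ IsPathT l 2 ∧ IsPathT r 2

/-- A tail of a necklace: a series join of single edges and `R₂` subgraphs whose last
constituent is a single edge. -/
inductive NeckTail {V : Type*} : SPTree V → Prop
  | base (u v : V) : NeckTail (.edge u v)
  | consEdge (u v : V) {r : SPTree V} : NeckTail r → NeckTail (.series (.edge u v) r)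
  | consR2 {p r : SPTree V} : IsR2 p → NeckTail r → NeckTail (.series p r)

/-- A necklace: a series join of single edges and `R₂` subgraphs whose first and last
constituents are single edges. -/
def IsNecklaceTree {V : Type*} (T : SPTree V) : Prop :=
  ∃ (u v : V) (r : SPTree V), T = .series (.edge u v) r ∧ NeckTail r


section Aux
variable {V : Type*}


/-- Connectivity within a vertex set `A` using edges of `H`. -/
def Conn (H : SimpleGraph V) (A : Set V) : V → V → Prop :=
  Relation.ReflTransGen (fun x y => x ∈ A ∧ y ∈ A ∧ H.Adj x y)

namespace Conn

lemma refl (H : SimpleGraph V) (A : Set V) (x : V) : Conn H A x x := Relation.ReflTransGen.refl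

lemma trans {H : SimpleGraph V} {A : Set V} {x y z : V} (h : Conn H A x y) (h' : Conn H A y z) :
    Conn H A x z := Relation.ReflTransGen.trans h h'

lemma symm {H : SimpleGraph V} {A : Set V} {x y : V} (h : Conn H A x y) : Conn H A y x := by
  induction h with
  | refl => exact Relation.ReflTransGen.refl
  | tail _ h2 ih => exact Relation.ReflTransGen.head ⟨h2.2.1, h2.1, h2.2.2.symm⟩ ih

lemma single {H : SimpleGraph V} {A : Set V} {x y : V} (hx : x ∈ A) (hy : y ∈ A)
    (h : H.Adj x y) : Conn H A x y := Relation.ReflTransGen.single ⟨hx, hy, h⟩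

lemma mono {H H' : SimpleGraph V} {A A' : Set V} (hH : H ≤ H') (hA : A ⊆ A') {x y : V}
    (h : Conn H A x y) : Conn H' A' x y := by
  refine Relation.ReflTransGen.mono ?_ _ _ h
  exact fun a b ⟨ha, hb, hab⟩ => ⟨hA ha, hA hb, hH hab⟩

lemma mem_of_ne {H : SimpleGraph V} {A : Set V} {x y : V} (h : Conn H A x y) (hne : x ≠ y) :
    y ∈ A := by
  induction h with
  | refl => exact absurd rfl hne
  | tail _ h2 _ => exact h2.2.1

lemma toReachable {H : SimpleGraph V} {A : Set V} {x y : V} (h : Conn H A x y) (hx : x ∈ A) :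
    ∃ hy : y ∈ A, (SimpleGraph.induce A H).Reachable ⟨x, hx⟩ ⟨y, hy⟩ := by
  induction h with
  | refl => exact ⟨hx, Reachable.refl _⟩
  | tail _ h2 ih =>
      obtain ⟨hb, hr⟩ := ih
      exact ⟨h2.2.1, hr.trans (SimpleGraph.Adj.reachable (by exact h2.2.2 : H.Adj _ _))⟩

end Conn

lemma numComp_le_of_reps {H : SimpleGraph V} {S : Set V} (R : Finset V)
    (hcov : ∀ x ∈ Sᶜ, ∃ r ∈ R, Conn H Sᶜ r x) :
    numComp H S ≤ R.card := by
  classical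
  set C := (SimpleGraph.induce Sᶜ H).ConnectedComponent
  by_cases hC : Nonempty C
  · obtain ⟨c0⟩ := hC
    have hsurj : Function.Surjective (fun r : R =>
        if h : (r : V) ∈ Sᶜ then (SimpleGraph.induce Sᶜ H).connectedComponentMk ⟨r, h⟩ else c0) := by
      intro c
      induction c using SimpleGraph.ConnectedComponent.ind with
      | _ v =>
        obtain ⟨r, hr, hconn⟩ := hcov v v.2
        obtain ⟨hrA, hreach⟩ := hconn.symm.toReachable v.2
        refine ⟨⟨r, hr⟩, ?_⟩
        simp only [hrA, dif_pos]
        exact SimpleGraph.ConnectedComponent.sound hreach.symm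
    calc numComp H S = Nat.card C := rfl
      _ ≤ Nat.card R := Nat.card_le_card_of_surjective _ hsurj
      _ = R.card := by simp [Nat.card_eq_fintype_card]
  · have : numComp H S = 0 := by
      have : IsEmpty C := not_nonempty_iff.mp hC
      simp [numComp, Nat.card_of_isEmpty]
    omega

lemma le_numComp_of_coloring [Fintype V] {H : SimpleGraph V} {S : Set V} (n : ℕ) (g : V → Fin n)
    (hg : ∀ x y, H.Adj x y → x ∈ Sᶜ → y ∈ Sᶜ → g x = g y)
    (hin : ∀ i : Fin n, ∃ x ∈ Sᶜ, g x = i) : n ≤ numComp H S := by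
  classical
  have key : ∀ (v w : ↥Sᶜ) (p : (SimpleGraph.induce Sᶜ H).Walk v w), g v = g w := by
    intro v w p
    induction p with
    | nil => rfl
    | cons h _ ih => exact (hg _ _ h (Subtype.coe_prop _) (Subtype.coe_prop _)).trans ih
  let φ : (SimpleGraph.induce Sᶜ H).ConnectedComponent → Fin n :=
    SimpleGraph.ConnectedComponent.lift (fun v => g v.1) (fun v w p _ => key v w p)
  have hsurj : Function.Surjective φ := by
    intro i
    obtain ⟨x, hx, hgx⟩ := hin i
    exact ⟨(SimpleGraph.induce Sᶜ H).connectedComponentMk ⟨x, hx⟩, hgx⟩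
  have h2 : Nat.card (Fin n) ≤ Nat.card ((SimpleGraph.induce Sᶜ H).ConnectedComponent) :=
    Nat.card_le_card_of_surjective φ hsurj
  simpa [numComp] using h2

end Aux

namespace SPTree

variable {V : Type*}

lemma mem_verts_of_mem_edges {t : SPTree V} {e : Sym2 V} (he : e ∈ t.edges) {x : V}
    (hx : x ∈ e) : x ∈ t.verts := by
  induction t with
  | edge u v =>
      simp only [edges, Set.mem_singleton_iff] at he
      subst he
      rcases Sym2.mem_iff.mp hx with h | h <;> simp [verts, h]
  | series l r ihl ihr =>
      rcases he with h | h
      · exact Set.mem_union_left _ (ihl h)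
      · exact Set.mem_union_right _ (ihr h)
  | parallel l r ihl ihr =>
      rcases he with h | h
      · exact Set.mem_union_left _ (ihl h)
      · exact Set.mem_union_right _ (ihr h)

lemma src_mem_verts (t : SPTree V) : t.src ∈ t.verts := by
  induction t with
  | edge u v => simp [src, verts]
  | series l r ihl ihr => exact Set.mem_union_left _ ihl
  | parallel l r ihl ihr => exact Set.mem_union_left _ ihl

lemma tgt_mem_verts (t : SPTree V) : t.tgt ∈ t.verts := by
  induction t with
  | edge u v => simp [tgt, verts]
  | series l r ihl ihr => exact Set.mem_union_right _ ihr
  | parallel l r ihl ihr => exact Set.mem_union_left _ ihl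

end SPTree

open SPTree

lemma IsPathT.one_le {V : Type*} {t : SPTree V} {n : ℕ} (h : IsPathT t n) : 1 ≤ n := by
  induction h with
  | edge => exact le_refl 1
  | series _ _ ih1 ih2 => omega

lemma isPathT_cases {V : Type*} {t : SPTree V} {n : ℕ} (h : IsPathT t n) :
    (∃ u v, t = .edge u v ∧ n = 1) ∨
    (∃ l r m k, t = SPTree.series l r ∧ IsPathT l m ∧ IsPathT r k ∧ n = m + k) := by
  cases h with
  | edge u v => exact Or.inl ⟨u, v, rfl, rfl⟩
  | @series l r m k hl hr => exact Or.inr ⟨l, r, m, k, rfl, hl, hr, rfl⟩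

lemma isPathT_one {V : Type*} {t : SPTree V} (h : IsPathT t 1) : ∃ u v, t = .edge u v := by
  rcases isPathT_cases h with ⟨u, v, rfl, _⟩ | ⟨l, r, m, k, rfl, hl, hr, hmk⟩
  · exact ⟨u, v, rfl⟩
  · have := hl.one_le; have := hr.one_le; omega

lemma path2_struct {V : Type*} {t : SPTree V} (h : IsPathT t 2) (hwf : t.WF) :
    ∃ x y z : V, t = .series (.edge x y) (.edge y z) ∧ x ≠ y ∧ y ≠ z ∧ x ≠ z ∧
      t.src = x ∧ t.tgt = z ∧ t.verts = {x, y, z} ∧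
      t.edges = {s(x, y), s(y, z)} := by
  rcases isPathT_cases h with ⟨u, v, rfl, h1⟩ | ⟨l, r, m, k, rfl, hl, hr, hmk⟩
  · omega
  · have hm := hl.one_le; have hn := hr.one_le
    have hm1 : m = 1 := by omega
    have hn1 : k = 1 := by omega
    subst hm1; subst hn1
    obtain ⟨x, y, rfl⟩ := isPathT_one hl
    obtain ⟨y', z, rfl⟩ := isPathT_one hr
    obtain ⟨hwf1, hwf2, hty, hint⟩ := hwf
    have hyy : y = y' := hty
    subst hyy
    have hxy : x ≠ y := hwf1
    have hyz : y ≠ z := hwf2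
    have hxz : x ≠ z := by
      intro hx
      have hmem : x ∈ ({x, y} : Set V) ∩ {y, z} := by
        constructor
        · exact Set.mem_insert _ _
        · rw [hx]; exact Set.mem_insert_of_mem _ rfl
      rw [show (({x, y} : Set V) ∩ {y, z}) = ((SPTree.edge x y).verts ∩ (SPTree.edge y z).verts) from rfl, hint] at hmem
      exact hxy hmem
    refine ⟨x, y, z, rfl, hxy, hyz, hxz, rfl, rfl, ?_, ?_⟩
    · show ({x, y} : Set V) ∪ {y, z} = {x, y, z}
      ext w; simp; tauto
    · show ({s(x, y)} : Set (Sym2 V)) ∪ {s(y, z)} = {s(x, y), s(y, z)}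
      ext e; simp; tauto


lemma r2_struct {V : Type*} {t : SPTree V} (h : IsR2 t) (hwf : t.WF) :
    ∃ s a b t' : V, s ≠ a ∧ s ≠ b ∧ s ≠ t' ∧ a ≠ b ∧ a ≠ t' ∧ b ≠ t' ∧
      t.src = s ∧ t.tgt = t' ∧ t.verts = {s, a, b, t'} ∧
      t.edges = {s(s, a), s(a, t'), s(s, b), s(b, t')} := by
  obtain ⟨l, r, rfl, hl, hr⟩ := h
  obtain ⟨hwl, hwr, hsrc, htgt, hint, hdisj⟩ := hwf
  obtain ⟨x, y, z, hleq, hxy, hyz, hxz, hsx, htz, hv1, he1⟩ := path2_struct hl hwl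
  obtain ⟨x', y', z', hreq, hxy', hyz', hxz', hsx', htz', hv2, he2⟩ := path2_struct hr hwr
  have hx : x = x' := by rw [hsx, hsx'] at hsrc; exact hsrc
  have hz : z = z' := by rw [htz, htz'] at htgt; exact htgt
  subst hx; subst hz
  rw [hsx, htz] at hint
  have hyy' : y ≠ y' := by
    intro hEq
    subst hEq
    have hmem : y ∈ l.verts ∩ r.verts := by rw [hv1, hv2]; simp
    rw [hint] at hmem
    rcases hmem with h | h
    · exact hxy h.symm
    · exact hyz h
  refine ⟨x, y, y', z, hxy, hxy', hxz, hyy', hyz, hyz', hsx, htz, ?_, ?_⟩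
  · show l.verts ∪ r.verts = _
    rw [hv1, hv2]; ext w; simp; tauto
  · show l.edges ∪ r.edges = _
    rw [he1, he2]; ext e; simp; tauto

lemma neckTail_src_ne_tgt {V : Type*} {t : SPTree V} (h : NeckTail t) (hwf : t.WF) :
    t.src ≠ t.tgt := by
  induction h with
  | base u v => exact hwf
  | @consEdge u v r hr ih =>
      obtain ⟨hw1, hw2, hty, hint⟩ := hwf
      intro hEq
      have : u ∈ ({u, v} : Set V) ∩ r.verts := by
        constructor
        · exact Set.mem_insert _ _
        · show ((SPTree.edge u v).series r).src ∈ r.verts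
          rw [show ((SPTree.edge u v).series r).src = ((SPTree.edge u v).series r).tgt from hEq]
          exact SPTree.tgt_mem_verts r
      rw [show (({u, v} : Set V) ∩ r.verts) = ((SPTree.edge u v).verts ∩ r.verts) from rfl, hint] at this
      exact hw1 this
  | @consR2 p r hp hr ih =>
      obtain ⟨hw1, hw2, hty, hint⟩ := hwf
      obtain ⟨s0, a, b, t0, hsa, hsb, hst, hab, hat, hbt, hps, hpt, hpv, hpe⟩ := r2_struct hp hw1
      intro hEq
      have hmem : p.src ∈ p.verts ∩ r.verts := by
        constructor
        · exact SPTree.src_mem_verts p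
        · show ((p.series r)).src ∈ r.verts
          rw [show (p.series r).src = (p.series r).tgt from hEq]
          exact SPTree.tgt_mem_verts r
      rw [hint] at hmem
      rw [hps, hpt] at hmem
      exact hst hmem


open Classical in
noncomputable def tailBound {V : Type*} (t : SPTree V) (S : Set V) : ℕ :=
  if t.src ∈ S then 2 * S.ncard - 1 else if S = ∅ then 1 else 2 * S.ncard

lemma neckTail_reps {V : Type*} [Fintype V] {t : SPTree V} (hnt : NeckTail t) : t.WF →
    ∀ S : Set V, S ⊆ t.verts →
    ∃ R : Finset V, (∀ x ∈ t.verts \ S, ∃ ρ ∈ R, Conn (SimpleGraph.fromEdgeSet t.edges) (t.verts \ S) ρ x) ∧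
      R.card ≤ tailBound t S := by
  induction hnt with
  | base u v =>
    intro hwf S hS
    have hwuv : u ≠ v := hwf
    simp only [SPTree.verts, SPTree.edges, SPTree.src] at hS ⊢
    rw [tailBound]
    simp only [SPTree.src]
    classical
    by_cases hu : u ∈ S
    · by_cases hv : v ∈ S
      · refine ⟨∅, ?_, ?_⟩
        · rintro x ⟨hx1, hx2⟩
          rcases hx1 with h | h
          · exact absurd (h ▸ hu) hx2
          · exact absurd ((Set.mem_singleton_iff.mp h) ▸ hv) hx2
        · simp only [hu, ↓reduceIte]; exact Nat.zero_le _
      · refine ⟨{v}, ?_, ?_⟩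
        · rintro x ⟨hx1, hx2⟩
          rcases hx1 with h | h
          · exact absurd (h ▸ hu) hx2
          · rw [Set.mem_singleton_iff] at h; subst h
            exact ⟨x, Finset.mem_singleton_self x, Conn.refl _ _ _⟩
        · simp only [hu, ↓reduceIte]
          have h1 : 0 < S.ncard := (Set.ncard_pos S.toFinite).mpr ⟨u, hu⟩
          simp only [Finset.card_singleton]; omega
    · by_cases hv : v ∈ S
      · refine ⟨{u}, ?_, ?_⟩
        · rintro x ⟨hx1, hx2⟩
          rcases hx1 with h | h
          · subst h; exact ⟨x, Finset.mem_singleton_self x, Conn.refl _ _ _⟩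
          · exact absurd ((Set.mem_singleton_iff.mp h) ▸ hv) hx2
        · simp only [hu, (Set.nonempty_iff_ne_empty.mp ⟨v, hv⟩), ↓reduceIte]
          have h1 : 0 < S.ncard := (Set.ncard_pos S.toFinite).mpr ⟨v, hv⟩
          simp only [Finset.card_singleton]; omega
      · have hS0 : S = ∅ := by
          ext x
          simp only [Set.mem_empty_iff_false, iff_false]
          intro hx
          rcases hS hx with h | h
          · exact hu (h ▸ hx)
          · exact hv ((Set.mem_singleton_iff.mp h) ▸ hx)
        refine ⟨{u}, ?_, ?_⟩
        · rintro x ⟨hx1, hx2⟩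
          have huA : u ∈ ({u, v} : Set V) \ S := ⟨Set.mem_insert _ _, hu⟩
          rcases hx1 with h | h
          · subst h; exact ⟨x, Finset.mem_singleton_self x, Conn.refl _ _ _⟩
          · rw [Set.mem_singleton_iff] at h; subst h
            refine ⟨u, Finset.mem_singleton_self u, Conn.single huA ⟨Set.mem_insert_of_mem _ rfl, hv⟩ ?_⟩
            rw [SimpleGraph.fromEdgeSet_adj]
            exact ⟨rfl, hwuv⟩
        · simp [hu, hS0]
  | @consEdge u v r hr ih =>
    intro hwf S hS
    classical
    obtain ⟨hw1, hw2, hty, hint⟩ := hwf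
    have hwuv : u ≠ v := hw1
    simp only [SPTree.tgt] at hty hint
    simp only [SPTree.verts] at hint
    -- hty : v = r.src, hint : {u,v} ∩ r.verts = {v}
    have hvr : v ∈ r.verts := by
      have : v ∈ ({u, v} : Set V) ∩ r.verts := by rw [hint]; rfl
      exact this.2
    have hur : u ∉ r.verts := by
      intro h
      have : u ∈ ({u, v} : Set V) ∩ r.verts := ⟨Set.mem_insert _ _, h⟩
      rw [hint] at this
      exact hwuv this
    simp only [SPTree.verts, SPTree.edges, SPTree.src] at hS ⊢
    rw [tailBound]
    simp only [SPTree.src]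
    set S'' := S ∩ r.verts with hS''def
    obtain ⟨R'', hcov, hcard⟩ := ih hw2 S'' Set.inter_subset_right
    have hsub : r.verts \ S'' = r.verts \ S := by
      ext x; simp only [hS''def, Set.mem_diff, Set.mem_inter_iff]; tauto
    have hmono : ∀ {x y : V}, Conn (SimpleGraph.fromEdgeSet r.edges) (r.verts \ S'') x y →
        Conn (SimpleGraph.fromEdgeSet ({s(u,v)} ∪ r.edges)) (({u, v} ∪ r.verts) \ S) x y := by
      intro x y h
      refine Conn.mono (SimpleGraph.fromEdgeSet_mono Set.subset_union_right) ?_ h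
      rw [hsub]
      exact fun z hz => ⟨Set.mem_union_right _ hz.1, hz.2⟩
    have hmemr : ∀ x, x ∈ ({u, v} ∪ r.verts) \ S → x ≠ u → x ∈ r.verts \ S := by
      rintro x ⟨hx1, hx2⟩ hxu
      rcases hx1 with h | h
      · rcases h with h | h
        · exact absurd h hxu
        · rw [Set.mem_singleton_iff] at h; exact ⟨h ▸ hvr, hx2⟩
      · exact ⟨h, hx2⟩
    by_cases hu : u ∈ S
    · have hSS : S'' = S \ {u} := by
        ext x
        simp only [hS''def, Set.mem_inter_iff, Set.mem_diff, Set.mem_singleton_iff]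
        constructor
        · rintro ⟨h1, h2⟩
          exact ⟨h1, fun he => hur (he ▸ h2)⟩
        · rintro ⟨h1, h2⟩
          refine ⟨h1, ?_⟩
          rcases hS h1 with h | h
          · rcases h with h | h
            · exact absurd h h2
            · exact (Set.mem_singleton_iff.mp h) ▸ hvr
          · exact h
      have hn := Set.ncard_diff_singleton_add_one hu S.toFinite
      rw [← hSS] at hn
      refine ⟨R'', ?_, ?_⟩
      · intro x hx
        have hxr := hmemr x hx (fun he => hx.2 (he ▸ hu))
        obtain ⟨ρ, hρ, hconn⟩ := hcov x (by rw [hsub]; exact hxr)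
        exact ⟨ρ, hρ, hmono hconn⟩
      · simp only [hu, ↓reduceIte]
        have hb : tailBound r S'' ≤ 2 * S''.ncard + 1 := by
          rw [tailBound]
          split_ifs <;> omega
        omega
    · have hSr : S ⊆ r.verts := by
        intro x hx
        rcases hS hx with h | h
        · rcases h with h | h
          · exact absurd (h ▸ hx) hu
          · exact (Set.mem_singleton_iff.mp h) ▸ hvr
        · exact h
      have hSS : S'' = S := by rw [hS''def, Set.inter_eq_self_of_subset_left hSr]
      by_cases hv : v ∈ S
      · have hvS'' : r.src ∈ S'' := by rw [hSS, ← hty]; exact hv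
        rw [tailBound, if_pos hvS''] at hcard
        refine ⟨insert u R'', ?_, ?_⟩
        · intro x hx
          by_cases hxu : x = u
          · exact ⟨u, Finset.mem_insert_self _ _, hxu ▸ Conn.refl _ _ _⟩
          · obtain ⟨ρ, hρ, hconn⟩ := hcov x (by rw [hsub]; exact hmemr x hx hxu)
            exact ⟨ρ, Finset.mem_insert_of_mem hρ, hmono hconn⟩
        · simp only [hu, (Set.nonempty_iff_ne_empty.mp ⟨v, hv⟩), ↓reduceIte]
          have h1 : 0 < S.ncard := (Set.ncard_pos S.toFinite).mpr ⟨v, hv⟩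
          have h2 := Finset.card_insert_le u R''
          rw [hSS] at hcard
          omega
      · have huA : u ∈ ({u, v} ∪ r.verts) \ S := ⟨Set.mem_union_left _ (Set.mem_insert _ _), hu⟩
        have hvA : v ∈ ({u, v} ∪ r.verts) \ S :=
          ⟨Set.mem_union_left _ (Set.mem_insert_of_mem _ rfl), hv⟩
        have hadj : (SimpleGraph.fromEdgeSet ({s(u,v)} ∪ r.edges)).Adj u v := by
          rw [SimpleGraph.fromEdgeSet_adj]
          exact ⟨Set.mem_union_left _ rfl, hwuv⟩
        refine ⟨R'', ?_, ?_⟩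
        · intro x hx
          by_cases hxu : x = u
          · subst hxu
            obtain ⟨ρ, hρ, hconn⟩ := hcov v (by rw [hsub]; exact ⟨hvr, hv⟩)
            exact ⟨ρ, hρ, (hmono hconn).trans (Conn.single hvA huA hadj.symm)⟩
          · obtain ⟨ρ, hρ, hconn⟩ := hcov x (by rw [hsub]; exact hmemr x hx hxu)
            exact ⟨ρ, hρ, hmono hconn⟩
        · simp only [hu, ↓reduceIte]
          rw [tailBound, if_neg (by rw [hSS, ← hty]; exact hv), hSS] at hcard
          exact hcard
  | @consR2 p r hp hr ih =>
    intro hwf S hS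
    classical
    obtain ⟨hw1, hw2, hty, hint⟩ := hwf
    obtain ⟨s0, a, b, t0, hsa, hsb, hst, hab, hat, hbt, hps, hpt, hpv, hpe⟩ := r2_struct hp hw1
    rw [hpt] at hty hint
    have ht0r : t0 ∈ r.verts := hty ▸ r.src_mem_verts
    have hnotr : ∀ x, x ∈ p.verts → x ≠ t0 → x ∉ r.verts := by
      intro x hxp hxt hxr
      have : x ∈ p.verts ∩ r.verts := ⟨hxp, hxr⟩
      rw [hint] at this
      exact hxt this
    have hs0p : s0 ∈ p.verts := by rw [hpv]; simp
    have hap : a ∈ p.verts := by rw [hpv]; simp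
    have hbp : b ∈ p.verts := by rw [hpv]; simp
    have ht0p : t0 ∈ p.verts := by rw [hpv]; simp
    have hs0r : s0 ∉ r.verts := hnotr _ hs0p hst
    have har : a ∉ r.verts := hnotr _ hap hat
    have hbr : b ∉ r.verts := hnotr _ hbp hbt
    simp only [SPTree.verts, SPTree.edges, SPTree.src] at hS ⊢
    rw [tailBound]
    simp only [SPTree.src, hps]
    set S'' := S ∩ r.verts with hS''def
    obtain ⟨R'', hcov, hcard⟩ := ih hw2 S'' Set.inter_subset_right
    have hsub : r.verts \ S'' = r.verts \ S := by
      ext x; simp only [hS''def, Set.mem_diff, Set.mem_inter_iff]; tauto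
    have hmono : ∀ {x y : V}, Conn (SimpleGraph.fromEdgeSet r.edges) (r.verts \ S'') x y →
        Conn (SimpleGraph.fromEdgeSet (p.edges ∪ r.edges)) ((p.verts ∪ r.verts) \ S) x y := by
      intro x y h
      refine Conn.mono (SimpleGraph.fromEdgeSet_mono Set.subset_union_right) ?_ h
      rw [hsub]
      exact fun z hz => ⟨Set.mem_union_right _ hz.1, hz.2⟩
    have rcov : ∀ x, x ∈ r.verts → x ∉ S →
        ∃ ρ ∈ R'', Conn (SimpleGraph.fromEdgeSet (p.edges ∪ r.edges)) ((p.verts ∪ r.verts) \ S) ρ x := by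
      intro x h1 h2
      obtain ⟨ρ, hρ, hc⟩ := hcov x (by rw [hsub]; exact ⟨h1, h2⟩)
      exact ⟨ρ, hρ, hmono hc⟩
    have hpA : ∀ z, z ∈ p.verts → z ∉ S → z ∈ (p.verts ∪ r.verts) \ S :=
      fun z h1 h2 => ⟨Set.mem_union_left _ h1, h2⟩
    have hadj_sa : (SimpleGraph.fromEdgeSet (p.edges ∪ r.edges)).Adj s0 a := by
      rw [SimpleGraph.fromEdgeSet_adj]
      exact ⟨Set.mem_union_left _ (by rw [hpe]; simp), hsa⟩
    have hadj_at : (SimpleGraph.fromEdgeSet (p.edges ∪ r.edges)).Adj a t0 := by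
      rw [SimpleGraph.fromEdgeSet_adj]
      exact ⟨Set.mem_union_left _ (by rw [hpe]; simp), hat⟩
    have hadj_sb : (SimpleGraph.fromEdgeSet (p.edges ∪ r.edges)).Adj s0 b := by
      rw [SimpleGraph.fromEdgeSet_adj]
      exact ⟨Set.mem_union_left _ (by rw [hpe]; simp), hsb⟩
    have hadj_bt : (SimpleGraph.fromEdgeSet (p.edges ∪ r.edges)).Adj b t0 := by
      rw [SimpleGraph.fromEdgeSet_adj]
      exact ⟨Set.mem_union_left _ (by rw [hpe]; simp), hbt⟩
    have hxcases : ∀ x, x ∈ (p.verts ∪ r.verts) \ S →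
        (x = s0 ∧ s0 ∉ S) ∨ (x = a ∧ a ∉ S) ∨ (x = b ∧ b ∉ S) ∨ (x ∈ r.verts ∧ x ∉ S) := by
      rintro x ⟨hx1, hx2⟩
      rcases hx1 with h | h
      · rw [hpv] at h
        rcases h with h | h | h | h
        · exact Or.inl ⟨h, h ▸ hx2⟩
        · exact Or.inr (Or.inl ⟨h, h ▸ hx2⟩)
        · exact Or.inr (Or.inr (Or.inl ⟨h, h ▸ hx2⟩))
        · rw [Set.mem_singleton_iff] at h
          exact Or.inr (Or.inr (Or.inr ⟨h ▸ ht0r, hx2⟩))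
      · exact Or.inr (Or.inr (Or.inr ⟨h, hx2⟩))
    -- cardinality bookkeeping
    set D := S \ r.verts with hDdef
    have hSsplit : S'' ∪ D = S := by
      ext x; simp only [hS''def, hDdef, Set.mem_union, Set.mem_inter_iff, Set.mem_diff]; tauto
    have hdisj : Disjoint S'' D := by
      rw [Set.disjoint_left]
      rintro x ⟨_, hx2⟩ ⟨_, hx4⟩
      exact hx4 hx2
    have hn : S.ncard = S''.ncard + D.ncard := by
      rw [← hSsplit, Set.ncard_union_eq hdisj (S''.toFinite) (D.toFinite)]
    have hnle : S''.ncard ≤ S.ncard := by omega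
    by_cases ht0 : t0 ∈ S
    · -- t0 removed
      have ht0S'' : r.src ∈ S'' := by rw [← hty]; exact ⟨ht0, ht0r⟩
      rw [tailBound, if_pos ht0S''] at hcard
      have hn''1 : 1 ≤ S''.ncard := (Set.ncard_pos S''.toFinite).mpr ⟨t0, ⟨ht0, ht0r⟩⟩
      by_cases hs0 : s0 ∈ S
      · have hD1 : 1 ≤ D.ncard := (Set.ncard_pos D.toFinite).mpr ⟨s0, ⟨hs0, hs0r⟩⟩
        by_cases ha : a ∈ S <;> by_cases hb : b ∈ S
        · refine ⟨R'', ?_, ?_⟩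
          · intro x hx
            rcases hxcases x hx with ⟨_, h⟩ | ⟨_, h⟩ | ⟨_, h⟩ | ⟨h1, h2⟩
            · exact absurd hs0 h
            · exact absurd ha h
            · exact absurd hb h
            · exact rcov x h1 h2
          · rw [if_pos hs0]; omega
        · refine ⟨insert b R'', ?_, ?_⟩
          · intro x hx
            rcases hxcases x hx with ⟨_, h⟩ | ⟨_, h⟩ | ⟨hxb, _⟩ | ⟨h1, h2⟩
            · exact absurd hs0 h
            · exact absurd ha h
            · exact ⟨b, Finset.mem_insert_self _ _, hxb ▸ Conn.refl _ _ _⟩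
            · obtain ⟨ρ, hρ, hc⟩ := rcov x h1 h2
              exact ⟨ρ, Finset.mem_insert_of_mem hρ, hc⟩
          · rw [if_pos hs0]
            have := Finset.card_insert_le b R''
            omega
        · refine ⟨insert a R'', ?_, ?_⟩
          · intro x hx
            rcases hxcases x hx with ⟨_, h⟩ | ⟨hxa, _⟩ | ⟨_, h⟩ | ⟨h1, h2⟩
            · exact absurd hs0 h
            · exact ⟨a, Finset.mem_insert_self _ _, hxa ▸ Conn.refl _ _ _⟩
            · exact absurd hb h
            · obtain ⟨ρ, hρ, hc⟩ := rcov x h1 h2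
              exact ⟨ρ, Finset.mem_insert_of_mem hρ, hc⟩
          · rw [if_pos hs0]
            have := Finset.card_insert_le a R''
            omega
        · refine ⟨insert a (insert b R''), ?_, ?_⟩
          · intro x hx
            rcases hxcases x hx with ⟨_, h⟩ | ⟨hxa, _⟩ | ⟨hxb, _⟩ | ⟨h1, h2⟩
            · exact absurd hs0 h
            · exact ⟨a, Finset.mem_insert_self _ _, hxa ▸ Conn.refl _ _ _⟩
            · exact ⟨b, Finset.mem_insert_of_mem (Finset.mem_insert_self _ _),
                hxb ▸ Conn.refl _ _ _⟩
            · obtain ⟨ρ, hρ, hc⟩ := rcov x h1 h2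
              exact ⟨ρ, Finset.mem_insert_of_mem (Finset.mem_insert_of_mem hρ), hc⟩
          · rw [if_pos hs0]
            have h1 := Finset.card_insert_le a (insert b R'')
            have h2 := Finset.card_insert_le b R''
            omega
      · -- s0 not removed, t0 removed : R = insert s0 R''
        have hs0A : s0 ∈ (p.verts ∪ r.verts) \ S := hpA s0 hs0p hs0
        refine ⟨insert s0 R'', ?_, ?_⟩
        · intro x hx
          rcases hxcases x hx with ⟨hxs, _⟩ | ⟨hxa, h⟩ | ⟨hxb, h⟩ | ⟨h1, h2⟩
          · exact ⟨s0, Finset.mem_insert_self _ _, hxs ▸ Conn.refl _ _ _⟩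
          · subst hxa
            exact ⟨s0, Finset.mem_insert_self _ _, Conn.single hs0A (hpA x hap h) hadj_sa⟩
          · subst hxb
            exact ⟨s0, Finset.mem_insert_self _ _, Conn.single hs0A (hpA x hbp h) hadj_sb⟩
          · obtain ⟨ρ, hρ, hc⟩ := rcov x h1 h2
            exact ⟨ρ, Finset.mem_insert_of_mem hρ, hc⟩
        · rw [if_neg hs0, if_neg (Set.nonempty_iff_ne_empty.mp ⟨t0, ht0⟩)]
          have := Finset.card_insert_le s0 R''
          omega
    · -- t0 not removed
      have ht0S'' : r.src ∉ S'' := by rw [← hty]; exact fun h => ht0 h.1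
      rw [tailBound, if_neg ht0S''] at hcard
      have ht0A : t0 ∈ (p.verts ∪ r.verts) \ S := hpA t0 ht0p ht0
      obtain ⟨ρt, hρt, hct⟩ := rcov t0 ht0r ht0
      by_cases hcrit : s0 ∉ S ∧ a ∈ S ∧ b ∈ S
      · obtain ⟨hs0, ha, hb⟩ := hcrit
        have hD1 : 1 ≤ D.ncard := (Set.ncard_pos D.toFinite).mpr ⟨a, ⟨ha, har⟩⟩
        have hn1 : 1 ≤ S.ncard := (Set.ncard_pos S.toFinite).mpr ⟨a, ha⟩
        refine ⟨insert s0 R'', ?_, ?_⟩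
        · intro x hx
          rcases hxcases x hx with ⟨hxs, _⟩ | ⟨_, h⟩ | ⟨_, h⟩ | ⟨h1, h2⟩
          · exact ⟨s0, Finset.mem_insert_self _ _, hxs ▸ Conn.refl _ _ _⟩
          · exact absurd ha h
          · exact absurd hb h
          · obtain ⟨ρ, hρ, hc⟩ := rcov x h1 h2
            exact ⟨ρ, Finset.mem_insert_of_mem hρ, hc⟩
        · rw [if_neg hs0, if_neg (Set.nonempty_iff_ne_empty.mp ⟨a, ha⟩)]
          have := Finset.card_insert_le s0 R''
          split_ifs at hcard with hS''e
          · omega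
          · omega
      · -- not critical: R''
        refine ⟨R'', ?_, ?_⟩
        · intro x hx
          have hconn_a : ∀ hA : a ∉ S,
              Conn (SimpleGraph.fromEdgeSet (p.edges ∪ r.edges)) ((p.verts ∪ r.verts) \ S) ρt a :=
            fun hA => hct.trans (Conn.single ht0A (hpA a hap hA) hadj_at.symm)
          have hconn_b : ∀ hB : b ∉ S,
              Conn (SimpleGraph.fromEdgeSet (p.edges ∪ r.edges)) ((p.verts ∪ r.verts) \ S) ρt b :=
            fun hB => hct.trans (Conn.single ht0A (hpA b hbp hB) hadj_bt.symm)
          rcases hxcases x hx with ⟨hxs, hsS⟩ | ⟨hxa, h⟩ | ⟨hxb, h⟩ | ⟨h1, h2⟩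
          · subst hxs
            have : a ∉ S ∨ b ∉ S := by tauto
            rcases this with h | h
            · exact ⟨ρt, hρt, (hconn_a h).trans
                (Conn.single (hpA a hap h) (hpA x hs0p hsS) hadj_sa.symm)⟩
            · exact ⟨ρt, hρt, (hconn_b h).trans
                (Conn.single (hpA b hbp h) (hpA x hs0p hsS) hadj_sb.symm)⟩
          · exact ⟨ρt, hρt, hxa ▸ hconn_a h⟩
          · exact ⟨ρt, hρt, hxb ▸ hconn_b h⟩
          · exact rcov x h1 h2
        · by_cases hs0 : s0 ∈ S
          · have hD1 : 1 ≤ D.ncard := (Set.ncard_pos D.toFinite).mpr ⟨s0, ⟨hs0, hs0r⟩⟩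
            rw [if_pos hs0]
            split_ifs at hcard with hS''e
            · omega
            · omega
          · rw [if_neg hs0]
            by_cases hSe : S = ∅
            · rw [if_pos hSe]
              have hS''e : S'' = ∅ := by rw [hS''def, hSe]; simp
              rw [if_pos hS''e] at hcard
              exact hcard
            · rw [if_neg hSe]
              have hn1 : 1 ≤ S.ncard :=
                (Set.ncard_pos S.toFinite).mpr (Set.nonempty_iff_ne_empty.mpr hSe)
              split_ifs at hcard with hS''e
              · omega
              · omega



section DelCore
variable {V : Type*} [Fintype V]

omit [Fintype V] in
lemma bddBelow_ratios (G : SimpleGraph V) :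
    BddBelow {r : ℝ | ∃ S : Set V, IsCutset G S ∧ r = (S.ncard : ℝ) / (numComp G S : ℝ)} := by
  refine ⟨0, ?_⟩
  rintro x ⟨S', _, rfl⟩
  positivity

omit [Fintype V] in
lemma toughness_lt_half {G : SimpleGraph V} {S : Set V} (hcut : IsCutset G S)
    (hr : (S.ncard : ℝ) / (numComp G S : ℝ) ≤ 1/3) : toughness G < 1/2 := by
  have h1 : toughness G ≤ (S.ncard : ℝ) / (numComp G S : ℝ) :=
    csInf_le (bddBelow_ratios G) ⟨S, hcut, rfl⟩
  linarith

lemma toughness_lt_half_of_empty {G : SimpleGraph V} (h : 2 ≤ numComp G ∅) :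
    toughness G < 1/2 := by
  refine toughness_lt_half (show (1:ℕ) < numComp G ∅ by omega) ?_
  simp

lemma toughness_lt_half_of_single {G : SimpleGraph V} (τ : V) (h : 3 ≤ numComp G {τ}) :
    toughness G < 1/2 := by
  refine toughness_lt_half (show (1:ℕ) < numComp G {τ} by omega) ?_
  rw [Set.ncard_singleton]
  have h3 : (3:ℝ) ≤ (numComp G {τ} : ℝ) := by exact_mod_cast h
  rw [div_le_div_iff₀ (by linarith) (by norm_num)]
  push_cast
  linarith

lemma two_le_numComp_split {H : SimpleGraph V} (C : Set V)
    (hadj : ∀ x y, H.Adj x y → (x ∈ C ↔ y ∈ C)) (w1 w2 : V) (h1 : w1 ∈ C) (h2 : w2 ∉ C) :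
    2 ≤ numComp H ∅ := by
  classical
  refine le_numComp_of_coloring 2 (fun z => if z ∈ C then 0 else 1) ?_ ?_
  · intro x y hxy _ _
    by_cases hx : x ∈ C
    · rw [if_pos hx, if_pos ((hadj x y hxy).mp hx)]
    · rw [if_neg hx, if_neg (fun h => hx ((hadj x y hxy).mpr h))]
  · intro i
    fin_cases i
    · exact ⟨w1, by simp, if_pos h1⟩
    · exact ⟨w2, by simp, if_neg h2⟩

lemma three_le_numComp_core {H : SimpleGraph V} (χ τ σ υ : V) (Q Q' : Set V)
    (hadj : ∀ u v, H.Adj u v → (u ∈ Q ∧ v ∈ Q) ∨ (u ∈ Q' ∧ v ∈ Q') ∨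
      s(u, v) = s(χ, τ) ∨ s(u, v) = s(σ, υ) ∨ s(u, v) = s(υ, τ))
    (hQQ' : ∀ z, z ∈ Q → z ∉ Q') (hχQ : χ ∉ Q) (hχQ' : χ ∉ Q') (hυQ' : υ ∉ Q')
    (hσQ' : σ ∉ Q') (hχτ : χ ≠ τ) (hχσ : χ ≠ σ) (hχυ : χ ≠ υ)
    (wQ wQ' : V) (hwQ : wQ ∈ Q) (hwQ' : wQ' ∈ Q') (hwQτ : wQ ≠ τ) (hwQ'τ : wQ' ≠ τ) :
    3 ≤ numComp H {τ} := by
  classical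
  refine le_numComp_of_coloring 3 (fun z => if z = χ then 0 else if z ∈ Q' then 1 else 2) ?_ ?_
  · intro x y hxy hx hy
    rw [Set.mem_compl_iff, Set.mem_singleton_iff] at hx hy
    rcases hadj x y hxy with ⟨h1, h2⟩ | ⟨h1, h2⟩ | h | h | h
    · rw [if_neg (fun he : x = χ => hχQ (he ▸ h1)), if_neg (fun he : y = χ => hχQ (he ▸ h2)),
        if_neg (hQQ' _ h1), if_neg (hQQ' _ h2)]
    · rw [if_neg (fun he : x = χ => hχQ' (he ▸ h1)), if_neg (fun he : y = χ => hχQ' (he ▸ h2)),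
        if_pos h1, if_pos h2]
    · rw [Sym2.eq_iff] at h
      rcases h with ⟨_, h2⟩ | ⟨h1, _⟩
      · exact absurd h2 hy
      · exact absurd h1 hx
    · rw [Sym2.eq_iff] at h
      rcases h with ⟨h1, h2⟩ | ⟨h1, h2⟩ <;> subst h1 <;> subst h2
      · rw [if_neg (Ne.symm hχσ), if_neg (Ne.symm hχυ), if_neg hσQ', if_neg hυQ']
      · rw [if_neg (Ne.symm hχυ), if_neg (Ne.symm hχσ), if_neg hυQ', if_neg hσQ']
    · rw [Sym2.eq_iff] at h
      rcases h with ⟨_, h2⟩ | ⟨h1, _⟩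
      · exact absurd h2 hy
      · exact absurd h1 hx
  · intro i
    fin_cases i
    · refine ⟨χ, by simp [hχτ], ?_⟩
      dsimp only
      rw [if_pos rfl]; rfl
    · refine ⟨wQ', by simp [hwQ'τ], ?_⟩
      dsimp only
      rw [if_neg (fun he : wQ' = χ => hχQ' (he ▸ hwQ')), if_pos hwQ']; rfl
    · refine ⟨wQ, by simp [hwQτ], ?_⟩
      dsimp only
      rw [if_neg (fun he : wQ = χ => hχQ (he ▸ hwQ)), if_neg (hQQ' _ hwQ)]; rfl

end DelCore


lemma del_tail {V : Type*} [Fintype V] {t : SPTree V} (hnt : NeckTail t) : t.WF →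
    ∀ (P : Set V) (EP : Set (Sym2 V)) (w : V) (G : SimpleGraph V),
      G = SimpleGraph.fromEdgeSet (EP ∪ t.edges) →
      (∀ e ∈ EP, ∀ x ∈ e, x ∈ P) →
      P ∩ t.verts = {t.src} →
      w ∈ P → w ≠ t.src →
      ∀ e ∈ t.edges, toughness (G.deleteEdges {e}) < 1/2 := by
  induction hnt with
  | base u v =>
    intro hwf P EP w G hG hEP hint hw hws e he
    simp only [SPTree.edges, Set.mem_singleton_iff] at he
    subst he
    simp only [SPTree.verts, SPTree.src] at hint hws
    have hvP : v ∉ P := by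
      intro h
      have hm : v ∈ P ∩ ({u, v} : Set V) := ⟨h, Set.mem_insert_of_mem _ rfl⟩
      rw [hint] at hm
      exact hwf (Set.mem_singleton_iff.mp hm).symm
    apply toughness_lt_half_of_empty
    refine two_le_numComp_split P ?_ w v hw hvP
    intro x y hxy
    rw [hG, SimpleGraph.deleteEdges_adj, SimpleGraph.fromEdgeSet_adj] at hxy
    obtain ⟨⟨hmem, _⟩, hdel⟩ := hxy
    rcases hmem with hm | hm
    · constructor <;> intro _
      · exact hEP _ hm y (Sym2.mem_mk_right x y)
      · exact hEP _ hm x (Sym2.mem_mk_left x y)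
    · exact absurd hm hdel
  | @consEdge u v r hr ih =>
    intro hwf P EP w G hG hEP hint hw hws e he
    obtain ⟨hw1, hw2, hty, hint2⟩ := hwf
    have hwuv : u ≠ v := hw1
    simp only [SPTree.tgt] at hty
    simp only [SPTree.verts, SPTree.tgt] at hint2
    simp only [SPTree.verts, SPTree.src, SPTree.edges] at hint hws he ⊢
    -- hty : v = r.src ; hint2 : {u,v} ∩ r.verts = {v} ; hint : P ∩ ({u,v} ∪ r.verts) = {u}
    have hvr : v ∈ r.verts := by
      have : v ∈ ({u, v} : Set V) ∩ r.verts := by rw [hint2]; rfl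
      exact this.2
    have hur : u ∉ r.verts := by
      intro h
      have hm : u ∈ ({u, v} : Set V) ∩ r.verts := ⟨Set.mem_insert _ _, h⟩
      rw [hint2] at hm
      exact hwuv hm
    have hPmem : ∀ z, z ∈ P → z ∈ ({u, v} ∪ r.verts : Set V) → z = u := by
      intro z h1 h2
      have : z ∈ P ∩ ({u, v} ∪ r.verts) := ⟨h1, h2⟩
      rw [hint] at this
      exact this
    have hPr : ∀ z, z ∈ P → z ∉ r.verts := by
      intro z h1 h2
      have := hPmem z h1 (Set.mem_union_right _ h2)
      subst this
      exact hur h2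
    have hvP : v ∉ P := by
      intro h
      exact hwuv (hPmem v h (Set.mem_union_left _ (Set.mem_insert_of_mem _ rfl))).symm
    rcases he with he | he
    · rw [Set.mem_singleton_iff] at he
      subst he
      apply toughness_lt_half_of_empty
      refine two_le_numComp_split P ?_ w v hw hvP
      intro x y hxy
      rw [hG, SimpleGraph.deleteEdges_adj, SimpleGraph.fromEdgeSet_adj] at hxy
      obtain ⟨⟨hmem, _⟩, hdel⟩ := hxy
      rcases hmem with hm | hm | hm
      · constructor <;> intro _
        · exact hEP _ hm y (Sym2.mem_mk_right x y)
        · exact hEP _ hm x (Sym2.mem_mk_left x y)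
      · exact absurd hm hdel
      · have hx := mem_verts_of_mem_edges hm (Sym2.mem_mk_left x y)
        have hy := mem_verts_of_mem_edges hm (Sym2.mem_mk_right x y)
        constructor <;> intro h
        · exact absurd hx (hPr _ h)
        · exact absurd hy (hPr _ h)
    · refine ih hw2 (P ∪ {u, v}) (EP ∪ {s(u, v)}) u G ?_ ?_ ?_ ?_ ?_ e he
      · rw [hG, show ((SPTree.edge u v).series r).edges = {s(u, v)} ∪ r.edges from rfl,
          ← Set.union_assoc]
      · intro e' he' x hx
        rcases he' with h | h
        · exact Set.mem_union_left _ (hEP _ h x hx)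
        · rw [Set.mem_singleton_iff] at h
          subst h
          rcases Sym2.mem_iff.mp hx with h | h
          · exact Set.mem_union_right _ (h ▸ Set.mem_insert _ _)
          · exact Set.mem_union_right _ (h ▸ Set.mem_insert_of_mem _ rfl)
      · ext z
        simp only [Set.mem_inter_iff, Set.mem_union, Set.mem_singleton_iff]
        constructor
        · rintro ⟨h1 | h1, h2⟩
          · exact absurd h2 (hPr _ h1)
          · rcases h1 with h | h
            · exact absurd h2 (h ▸ hur)
            · rw [Set.mem_singleton_iff] at h
              rw [h, hty]
        · intro h
          subst h
          exact ⟨Or.inr (Or.inr (hty ▸ rfl)), hty ▸ hvr⟩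
      · exact Set.mem_union_right _ (Set.mem_insert _ _)
      · rw [← hty]; exact hwuv
  | @consR2 p r hp hr ih =>
    intro hwf P EP w G hG hEP hint hw hws e he
    obtain ⟨hw1, hw2, hty, hint2⟩ := hwf
    obtain ⟨s0, a, b, t0, hsa, hsb, hst, hab, hat, hbt, hps, hpt, hpv, hpe⟩ := r2_struct hp hw1
    rw [hpt] at hty hint2
    simp only [SPTree.verts, SPTree.src, SPTree.edges, hps] at hint hws he ⊢
    -- hty : t0 = r.src ; hint2 : p.verts ∩ r.verts = {t0} ; hint : P ∩ (p.verts ∪ r.verts) = {s0}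
    have ht0r : t0 ∈ r.verts := hty ▸ r.src_mem_verts
    have hnotr : ∀ x, x ∈ p.verts → x ≠ t0 → x ∉ r.verts := by
      intro x hxp hxt hxr
      have : x ∈ p.verts ∩ r.verts := ⟨hxp, hxr⟩
      rw [hint2] at this
      exact hxt this
    have hs0p : s0 ∈ p.verts := by rw [hpv]; simp
    have hap : a ∈ p.verts := by rw [hpv]; simp
    have hbp : b ∈ p.verts := by rw [hpv]; simp
    have ht0p : t0 ∈ p.verts := by rw [hpv]; simp
    have hs0r : s0 ∉ r.verts := hnotr _ hs0p hst
    have har : a ∉ r.verts := hnotr _ hap hat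
    have hbr : b ∉ r.verts := hnotr _ hbp hbt
    have hPmem : ∀ z, z ∈ P → z ∈ (p.verts ∪ r.verts : Set V) → z = s0 := by
      intro z h1 h2
      have : z ∈ P ∩ (p.verts ∪ r.verts) := ⟨h1, h2⟩
      rw [hint] at this
      exact this
    have hPr : ∀ z, z ∈ P → z ∉ r.verts := by
      intro z h1 h2
      have := hPmem z h1 (Set.mem_union_right _ h2)
      subst this
      exact hs0r h2
    have hPp : ∀ z, z ∈ p.verts → z ≠ s0 → z ∉ P := by
      intro z h1 h2 h3
      exact h2 (hPmem z h3 (Set.mem_union_left _ h1))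
    have haP : a ∉ P := hPp a hap hsa.symm
    have hbP : b ∉ P := hPp b hbp hsb.symm
    have ht0P : t0 ∉ P := hPp t0 ht0p hst.symm
    have hwr : w ∉ r.verts := hPr w hw
    have hwt0 : w ≠ t0 := fun h => hwr (h ▸ ht0r)
    have htgtr : r.tgt ∈ r.verts := r.tgt_mem_verts
    have htgt_t0 : r.tgt ≠ t0 := by
      rw [hty]
      exact (neckTail_src_ne_tgt hr hw2).symm
    have htgt_s0 : r.tgt ≠ s0 := fun h => hs0r (h ▸ htgtr)
    -- adjacency classification helper
    have hclass : ∀ (ed : Sym2 V) x y, (G.deleteEdges {ed}).Adj x y →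
        (s(x, y) ∈ EP) ∨ (s(x, y) ∈ p.edges ∧ s(x, y) ≠ ed) ∨ (s(x, y) ∈ r.edges) := by
      intro ed x y hxy
      rw [hG, SimpleGraph.deleteEdges_adj, SimpleGraph.fromEdgeSet_adj] at hxy
      obtain ⟨⟨hmem, _⟩, hdel⟩ := hxy
      rw [Set.mem_singleton_iff] at hdel
      rcases hmem with hm | hm | hm
      · exact Or.inl hm
      · exact Or.inr (Or.inl ⟨hm, hdel⟩)
      · exact Or.inr (Or.inr hm)
    have hEPpair : ∀ x y : V, s(x, y) ∈ EP → x ∈ P ∧ y ∈ P := by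
      intro x y hm
      exact ⟨hEP _ hm x (Sym2.mem_mk_left x y), hEP _ hm y (Sym2.mem_mk_right x y)⟩
    have hrpair : ∀ x y : V, s(x, y) ∈ r.edges → x ∈ r.verts ∧ y ∈ r.verts := by
      intro x y hm
      exact ⟨mem_verts_of_mem_edges hm (Sym2.mem_mk_left x y),
        mem_verts_of_mem_edges hm (Sym2.mem_mk_right x y)⟩
    rcases he with he | he
    · rw [hpe] at he
      simp only [Set.mem_insert_iff, Set.mem_singleton_iff] at he
      rcases he with he | he | he | he <;> subst he
      · -- e = s(s0, a) : remove t0, isolate a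
        apply toughness_lt_half_of_single t0
        refine three_le_numComp_core a t0 s0 b P r.verts ?_ hPr haP har hbr hs0r hat
          hsa.symm hab w r.tgt hw htgtr hwt0 htgt_t0
        intro x y hxy
        rcases hclass _ x y hxy with hm | ⟨hm, hne⟩ | hm
        · exact Or.inl (hEPpair x y hm)
        · rw [hpe] at hm
          simp only [Set.mem_insert_iff, Set.mem_singleton_iff] at hm
          rcases hm with hm | hm | hm | hm
          · exact absurd hm hne
          · exact Or.inr (Or.inr (Or.inl hm))
          · exact Or.inr (Or.inr (Or.inr (Or.inl hm)))
          · exact Or.inr (Or.inr (Or.inr (Or.inr hm)))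
        · exact Or.inr (Or.inl (hrpair x y hm))
      · -- e = s(a, t0) : remove s0, isolate a
        apply toughness_lt_half_of_single s0
        refine three_le_numComp_core a s0 t0 b r.verts P ?_ (fun z h1 h2 => hPr z h2 h1)
          har haP hbP ht0P hsa.symm hat hab r.tgt w htgtr hw htgt_s0 hws
        intro x y hxy
        rcases hclass _ x y hxy with hm | ⟨hm, hne⟩ | hm
        · exact Or.inr (Or.inl (hEPpair x y hm))
        · rw [hpe] at hm
          simp only [Set.mem_insert_iff, Set.mem_singleton_iff] at hm
          rcases hm with hm | hm | hm | hm
          · exact Or.inr (Or.inr (Or.inl (hm.trans (Sym2.eq_swap))))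
          · exact absurd hm hne
          · exact Or.inr (Or.inr (Or.inr (Or.inr (hm.trans (Sym2.eq_swap)))))
          · exact Or.inr (Or.inr (Or.inr (Or.inl (hm.trans (Sym2.eq_swap)))))
        · exact Or.inl (hrpair x y hm)
      · -- e = s(s0, b) : remove t0, isolate b
        apply toughness_lt_half_of_single t0
        refine three_le_numComp_core b t0 s0 a P r.verts ?_ hPr hbP hbr har hs0r hbt
          hsb.symm hab.symm w r.tgt hw htgtr hwt0 htgt_t0
        intro x y hxy
        rcases hclass _ x y hxy with hm | ⟨hm, hne⟩ | hm
        · exact Or.inl (hEPpair x y hm)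
        · rw [hpe] at hm
          simp only [Set.mem_insert_iff, Set.mem_singleton_iff] at hm
          rcases hm with hm | hm | hm | hm
          · exact Or.inr (Or.inr (Or.inr (Or.inl hm)))
          · exact Or.inr (Or.inr (Or.inr (Or.inr hm)))
          · exact absurd hm hne
          · exact Or.inr (Or.inr (Or.inl hm))
        · exact Or.inr (Or.inl (hrpair x y hm))
      · -- e = s(b, t0) : remove s0, isolate b
        apply toughness_lt_half_of_single s0
        refine three_le_numComp_core b s0 t0 a r.verts P ?_ (fun z h1 h2 => hPr z h2 h1)
          hbr hbP haP ht0P hsb.symm hbt hab.symm r.tgt w htgtr hw htgt_s0 hws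
        intro x y hxy
        rcases hclass _ x y hxy with hm | ⟨hm, hne⟩ | hm
        · exact Or.inr (Or.inl (hEPpair x y hm))
        · rw [hpe] at hm
          simp only [Set.mem_insert_iff, Set.mem_singleton_iff] at hm
          rcases hm with hm | hm | hm | hm
          · exact Or.inr (Or.inr (Or.inr (Or.inr (hm.trans (Sym2.eq_swap)))))
          · exact Or.inr (Or.inr (Or.inr (Or.inl (hm.trans (Sym2.eq_swap)))))
          · exact Or.inr (Or.inr (Or.inl (hm.trans (Sym2.eq_swap))))
          · exact absurd hm hne
        · exact Or.inl (hrpair x y hm)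
    · refine ih hw2 (P ∪ p.verts) (EP ∪ p.edges) s0 G ?_ ?_ ?_ ?_ ?_ e he
      · rw [hG, show (p.series r).edges = p.edges ∪ r.edges from rfl, ← Set.union_assoc]
      · intro e' he' x hx
        rcases he' with h | h
        · exact Set.mem_union_left _ (hEP _ h x hx)
        · exact Set.mem_union_right _ (mem_verts_of_mem_edges h hx)
      · ext z
        simp only [Set.mem_inter_iff, Set.mem_union, Set.mem_singleton_iff]
        constructor
        · rintro ⟨h1 | h1, h2⟩
          · exact absurd h2 (hPr _ h1)
          · have : z ∈ p.verts ∩ r.verts := ⟨h1, h2⟩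
            rw [hint2] at this
            rw [this, hty]
        · intro h
          subst h
          exact ⟨Or.inr (hty ▸ ht0p), hty ▸ ht0r⟩
      · exact Set.mem_union_right _ hs0p
      · rw [← hty]; exact hst

/-- Every necklace graph is minimally 1/2-tough. -/
theorem necklace_minTough {V : Type*} [Fintype V]
    (G : SimpleGraph V) (T : SPTree V) (hrep : RepresentsSP G T)
    (hneck : IsNecklaceTree T) :
    MinTough G (1 / 2) := by
  classical
  obtain ⟨hwf, hverts, hG⟩ := hrep
  obtain ⟨v0, v1, tl, rfl, htail⟩ := hneck
  obtain ⟨hw1, hw2, hty, hint⟩ := hwf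
  have hwuv : v0 ≠ v1 := hw1
  simp only [SPTree.tgt] at hty
  simp only [SPTree.verts, SPTree.tgt] at hint
  simp only [SPTree.verts] at hverts
  simp only [SPTree.edges] at hG
  -- hty : v1 = tl.src ; hint : {v0,v1} ∩ tl.verts = {v1} ; hverts : {v0,v1} ∪ tl.verts = univ
  have hv1t : v1 ∈ tl.verts := by
    have : v1 ∈ ({v0, v1} : Set V) ∩ tl.verts := by rw [hint]; rfl
    exact this.2
  have hv0t : v0 ∉ tl.verts := by
    intro h
    have hm : v0 ∈ ({v0, v1} : Set V) ∩ tl.verts := ⟨Set.mem_insert _ _, h⟩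
    rw [hint] at hm
    exact hwuv hm
  have htgt1 : tl.tgt ≠ v1 := by
    rw [hty]
    exact (neckTail_src_ne_tgt htail hw2).symm
  have htgt0 : tl.tgt ≠ v0 := fun h => hv0t (h ▸ tl.tgt_mem_verts)
  have hadj01 : G.Adj v0 v1 := by
    rw [hG, SimpleGraph.fromEdgeSet_adj]
    exact ⟨Or.inl rfl, hwuv⟩
  have hGle : SimpleGraph.fromEdgeSet tl.edges ≤ G := by
    rw [hG]
    exact SimpleGraph.fromEdgeSet_mono Set.subset_union_right
  constructor
  · -- toughness G = 1/2
    -- step 1 : numComp G {v1} = 2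
    have hnum : numComp G {v1} = 2 := by
      obtain ⟨R'', hcov, hcard⟩ := neckTail_reps htail hw2 {v1}
        (by intro x hx; rw [Set.mem_singleton_iff] at hx; exact hx ▸ hv1t)
      rw [tailBound, if_pos (show tl.src ∈ ({v1} : Set V) from hty ▸ rfl),
        Set.ncard_singleton] at hcard
      have hub : numComp G {v1} ≤ 2 := by
        refine le_trans (numComp_le_of_reps (insert v0 R'') ?_) ?_
        · intro x hx
          rw [Set.mem_compl_iff, Set.mem_singleton_iff] at hx
          have hxu : x ∈ ({v0, v1} : Set V) ∪ tl.verts := by rw [hverts]; trivial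
          rcases hxu with h | h
          · rcases h with h | h
            · exact ⟨v0, Finset.mem_insert_self _ _, h ▸ Conn.refl _ _ _⟩
            · exact absurd (Set.mem_singleton_iff.mp h) hx
          · obtain ⟨ρ, hρ, hc⟩ := hcov x ⟨h, by simpa using hx⟩
            refine ⟨ρ, Finset.mem_insert_of_mem hρ, Conn.mono hGle ?_ hc⟩
            intro z hz
            rw [Set.mem_compl_iff, Set.mem_singleton_iff]
            simpa using hz.2
        · have := Finset.card_insert_le v0 R''
          omega
      have hlb : 2 ≤ numComp G {v1} := by
        refine le_numComp_of_coloring 2 (fun z => if z = v0 then 0 else 1) ?_ ?_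
        · intro x y hxy hx hy
          rw [Set.mem_compl_iff, Set.mem_singleton_iff] at hx hy
          rw [hG, SimpleGraph.fromEdgeSet_adj] at hxy
          obtain ⟨hm, hne⟩ := hxy
          rcases hm with hm | hm
          · rw [Set.mem_singleton_iff, Sym2.eq_iff] at hm
            rcases hm with ⟨_, h2⟩ | ⟨h1, _⟩
            · exact absurd h2 hy
            · exact absurd h1 hx
          · have hxv := mem_verts_of_mem_edges hm (Sym2.mem_mk_left x y)
            have hyv := mem_verts_of_mem_edges hm (Sym2.mem_mk_right x y)
            rw [if_neg (fun h : x = v0 => hv0t (h ▸ hxv)),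
              if_neg (fun h : y = v0 => hv0t (h ▸ hyv))]
        · intro i
          fin_cases i
          · refine ⟨v0, by simp [hwuv], ?_⟩
            dsimp only
            rw [if_pos rfl]; rfl
          · refine ⟨tl.tgt, by simp [htgt1], ?_⟩
            dsimp only
            rw [if_neg htgt0]; rfl
      omega
    have hcut1 : IsCutset G {v1} := by
      show 1 < numComp G {v1}
      omega
    have hmem : (1:ℝ)/2 ∈ {r : ℝ | ∃ S : Set V, IsCutset G S ∧
        r = (S.ncard : ℝ) / (numComp G S : ℝ)} := by
      refine ⟨{v1}, hcut1, ?_⟩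
      rw [hnum, Set.ncard_singleton]
      norm_num
    -- step 2 : every ratio is at least 1/2
    have hlow : ∀ x ∈ {r : ℝ | ∃ S : Set V, IsCutset G S ∧
        r = (S.ncard : ℝ) / (numComp G S : ℝ)}, (1:ℝ)/2 ≤ x := by
      rintro x ⟨S, hcut, rfl⟩
      set S'' := S ∩ tl.verts with hS''def
      obtain ⟨R'', hcov, hcard⟩ := neckTail_reps htail hw2 S'' Set.inter_subset_right
      have rcov : ∀ z, z ∈ tl.verts → z ∉ S → ∃ ρ ∈ R'', Conn G Sᶜ ρ z := by
        intro z h1 h2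
        obtain ⟨ρ, hρ, hc⟩ := hcov z ⟨h1, fun h => h2 h.1⟩
        refine ⟨ρ, hρ, Conn.mono hGle ?_ hc⟩
        intro y hy
        rw [Set.mem_compl_iff]
        intro hyS
        exact hy.2 ⟨hyS, hy.1⟩
      have hxcase : ∀ z : V, z = v0 ∨ z ∈ tl.verts := by
        intro z
        have : z ∈ ({v0, v1} : Set V) ∪ tl.verts := by rw [hverts]; trivial
        rcases this with h | h
        · rcases h with h | h
          · exact Or.inl h
          · exact Or.inr ((Set.mem_singleton_iff.mp h) ▸ hv1t)
        · exact Or.inr h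
      have key : numComp G S ≤ 2 * S.ncard ∨ numComp G S ≤ 1 := by
        by_cases hv0 : v0 ∈ S
        · have hSS : S'' = S \ {v0} := by
            ext z
            simp only [hS''def, Set.mem_inter_iff, Set.mem_diff, Set.mem_singleton_iff]
            constructor
            · rintro ⟨h1, h2⟩
              exact ⟨h1, fun he => hv0t (he ▸ h2)⟩
            · rintro ⟨h1, h2⟩
              rcases hxcase z with h | h
              · exact absurd h h2
              · exact ⟨h1, h⟩
          have hn := Set.ncard_diff_singleton_add_one hv0 S.toFinite
          rw [← hSS] at hn
          have h0 : numComp G S ≤ R''.card := by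
            refine numComp_le_of_reps R'' ?_
            intro z hz
            rw [Set.mem_compl_iff] at hz
            rcases hxcase z with h | h
            · exact absurd (h ▸ hv0) hz
            · exact rcov z h hz
          rw [tailBound] at hcard
          split_ifs at hcard with h1 h2
          · left; omega
          · right; omega
          · left; omega
        · have hSsub : S ⊆ tl.verts := by
            intro z hz
            rcases hxcase z with h | h
            · exact absurd (h ▸ hz) hv0
            · exact h
          have hSS : S'' = S := by rw [hS''def, Set.inter_eq_self_of_subset_left hSsub]
          by_cases hv1 : v1 ∈ S
          · have h0 : numComp G S ≤ (insert v0 R'').card := by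
              refine numComp_le_of_reps _ ?_
              intro z hz
              rw [Set.mem_compl_iff] at hz
              rcases hxcase z with h | h
              · exact ⟨v0, Finset.mem_insert_self _ _, h ▸ Conn.refl _ _ _⟩
              · obtain ⟨ρ, hρ, hc⟩ := rcov z h hz
                exact ⟨ρ, Finset.mem_insert_of_mem hρ, hc⟩
            rw [tailBound, if_pos (show tl.src ∈ S'' by rw [hSS, ← hty]; exact hv1)] at hcard
            have h2 := Finset.card_insert_le v0 R''
            have h3 : 0 < S.ncard := (Set.ncard_pos S.toFinite).mpr ⟨v1, hv1⟩
            rw [hSS] at hcard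
            left; omega
          · have h0 : numComp G S ≤ R''.card := by
              refine numComp_le_of_reps R'' ?_
              intro z hz
              rw [Set.mem_compl_iff] at hz
              have hv0c : v0 ∈ Sᶜ := hv0
              have hv1c : v1 ∈ Sᶜ := hv1
              rcases hxcase z with h | h
              · subst h
                obtain ⟨ρ, hρ, hc⟩ := rcov v1 hv1t hv1
                exact ⟨ρ, hρ, hc.trans (Conn.single hv1c hv0c hadj01.symm)⟩
              · exact rcov z h hz
            rw [tailBound, if_neg (show tl.src ∉ S'' by rw [hSS, ← hty]; exact hv1)] at hcard
            split_ifs at hcard with h1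
            · right; omega
            · have : S ≠ ∅ := by rwa [hSS] at h1
              rw [hSS] at hcard
              left; omega
      have hcut' : 1 < numComp G S := hcut
      rcases key with hk | hk
      · have hpos : (0:ℝ) < (numComp G S : ℝ) := by
          exact_mod_cast lt_trans zero_lt_one hcut'
        rw [div_le_div_iff₀ (by norm_num) hpos]
        have : (numComp G S : ℝ) ≤ 2 * (S.ncard : ℝ) := by exact_mod_cast hk
        linarith
      · omega
    exact le_antisymm (csInf_le (bddBelow_ratios G) hmem) (le_csInf ⟨_, hmem⟩ hlow)
  · -- deleted graphs
    intro e he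
    rw [hG, SimpleGraph.edgeSet_fromEdgeSet] at he
    rcases he.1 with hm | hm
    · rw [Set.mem_singleton_iff] at hm
      subst hm
      apply toughness_lt_half_of_empty
      refine two_le_numComp_split {v0} ?_ v0 v1 rfl
        (fun h => hwuv (Set.mem_singleton_iff.mp h).symm)
      intro x y hxy
      rw [hG, SimpleGraph.deleteEdges_adj, SimpleGraph.fromEdgeSet_adj] at hxy
      obtain ⟨⟨hmem2, _⟩, hdel⟩ := hxy
      rcases hmem2 with hm | hm
      · exact absurd hm hdel
      · have hxv := mem_verts_of_mem_edges hm (Sym2.mem_mk_left x y)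
        have hyv := mem_verts_of_mem_edges hm (Sym2.mem_mk_right x y)
        constructor <;> intro h <;> rw [Set.mem_singleton_iff] at h
        · exact absurd (h ▸ hxv) hv0t
        · exact absurd (h ▸ hyv) hv0t
    · refine del_tail htail hw2 {v0, v1} {s(v0, v1)} v0 G hG ?_ ?_
        (Set.mem_insert _ _) (by rw [← hty]; exact hwuv) e hm
      · intro e' he' x hx
        rw [Set.mem_singleton_iff] at he'
        subst he'
        rcases Sym2.mem_iff.mp hx with h | h
        · exact h ▸ Set.mem_insert _ _
        · exact h ▸ Set.mem_insert_of_mem _ rfl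
      · rw [← hty]; exact hint
end

section
/- If a series-parallel graph G contains R₄ (the parallel join of four length-2 paths, with common terminals s₁, t₁) as a substructure of its sp-decomposition, then G is not minimally 1/2-tough. -/
open SimpleGraph

section Helpers

open SimpleGraph

private lemma isolated_reachable' {W : Type*} {H : SimpleGraph W} {x y : W}
    (hx : ∀ z, ¬ H.Adj x z) (h : H.Reachable x y) : x = y := by
  obtain ⟨w⟩ := h
  cases w with
  | nil => rfl
  | cons h' _ => exact absurd h' (hx _)

private lemma numComp_le' {V : Type*} (H : SimpleGraph V) (S : Set V) {k : ℕ}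
    (f : Fin k → ↥Sᶜ)
    (hf : ∀ y : ↥Sᶜ, ∃ j, (H.induce Sᶜ).Reachable y (f j)) :
    numComp H S ≤ k := by
  have hs : Function.Surjective (fun j => (H.induce Sᶜ).connectedComponentMk (f j)) := by
    intro c
    obtain ⟨y, rfl⟩ := c.exists_rep
    obtain ⟨j, hj⟩ := hf y
    exact ⟨j, (ConnectedComponent.sound hj.symm)⟩
  calc numComp H S ≤ Nat.card (Fin k) := Nat.card_le_card_of_surjective _ hs
    _ = k := by simp

private lemma le_numComp' {V : Type*} [Fintype V] (H : SimpleGraph V) (S : Set V) {k : ℕ}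
    (f : Fin k → ↥Sᶜ)
    (hf : ∀ i j, (H.induce Sᶜ).Reachable (f i) (f j) → i = j) :
    k ≤ numComp H S := by
  haveI : Finite (H.induce Sᶜ).ConnectedComponent :=
    Finite.of_surjective _ (fun c => c.exists_rep)
  have hi : Function.Injective (fun j => (H.induce Sᶜ).connectedComponentMk (f j)) := by
    intro i j h
    exact hf i j (ConnectedComponent.exact h)
  calc k = Nat.card (Fin k) := by simp
    _ ≤ _ := Nat.card_le_card_of_injective _ hi

private lemma le_numComp_iso' {V : Type*} [Fintype V] (H : SimpleGraph V) (S : Set V) {k : ℕ}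
    (f : Fin k → ↥Sᶜ) (hinj : Function.Injective f)
    (hiso : ∀ i j, i ≠ j →
      (∀ z, ¬ (H.induce Sᶜ).Adj (f i) z) ∨ (∀ z, ¬ (H.induce Sᶜ).Adj (f j) z)) :
    k ≤ numComp H S := by
  apply le_numComp'
  intro i j hr
  by_contra hne
  rcases hiso i j hne with hI | hI
  · exact hne (hinj (Subtype.ext (congrArg Subtype.val (isolated_reachable' hI hr))))
  · exact hne (hinj (isolated_reachable' hI hr.symm).symm)

private lemma numComp_le_ncard_compl' {V : Type*} [Fintype V] (H : SimpleGraph V) (S : Set V) :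
    numComp H S ≤ Sᶜ.ncard := by
  have hs : Function.Surjective ((H.induce Sᶜ).connectedComponentMk) := fun c => c.exists_rep
  calc numComp H S ≤ Nat.card ↥Sᶜ := Nat.card_le_card_of_surjective _ hs
    _ = Sᶜ.ncard := Nat.card_coe_set_eq _

private lemma induce_adj_of' {V : Type*} (H : SimpleGraph V) (S' : Set V) {a b : V}
    (ha : a ∈ S') (hb : b ∈ S') (hab : H.Adj a b) :
    (H.induce S').Adj ⟨a, ha⟩ ⟨b, hb⟩ := by simpa using hab

end Helpers

set_option maxHeartbeats 1600000 in
/-- If a series-parallel graph `G` contains `R₄` as a substructure, i.e. four distinct middle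
vertices each of degree 2 with neighborhood exactly `{s₁, t₁}`, then `G` is not minimally
1/2-tough. -/
theorem not_minTough_of_R4 {V : Type*} [Fintype V]
    (G : SimpleGraph V) (hsp : IsSPGraph G)
    (s₁ t₁ : V) (hst : s₁ ≠ t₁)
    (v : Fin 4 → V) (hinj : Function.Injective v)
    (hmid : ∀ i : Fin 4, G.neighborSet (v i) = {s₁, t₁}) :
    ¬ MinTough G (1 / 2) := by
  rintro ⟨htau, hdel⟩
  -- Basic adjacency facts
  have hadj_s : ∀ i, G.Adj (v i) s₁ := fun i => by
    have h : s₁ ∈ G.neighborSet (v i) := by rw [hmid]; exact Set.mem_insert _ _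
    exact h
  have hadj_t : ∀ i, G.Adj (v i) t₁ := fun i => by
    have h : t₁ ∈ G.neighborSet (v i) := by rw [hmid]; exact Set.mem_insert_of_mem _ rfl
    exact h
  have hnbr : ∀ i y, G.Adj (v i) y → y = s₁ ∨ y = t₁ := fun i y hy => by
    have h : y ∈ G.neighborSet (v i) := hy
    rw [hmid] at h; exact h
  have hvs : ∀ i, v i ≠ s₁ := fun i h' => G.irrefl (h' ▸ hadj_s i)
  have hvt : ∀ i, v i ≠ t₁ := fun i h' => G.irrefl (h' ▸ hadj_t i)
  have hbdd : ∀ (H : SimpleGraph V),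
      BddBelow {r : ℝ | ∃ S : Set V, IsCutset H S ∧ r = (S.ncard : ℝ) / (numComp H S : ℝ)} := by
    intro H
    refine ⟨0, ?_⟩
    rintro r ⟨S, _, rfl⟩
    positivity
  -- Every vertex is one of the six
  have hM : ∀ w : V, w = s₁ ∨ w = t₁ ∨ w = v 0 ∨ w = v 1 ∨ w = v 2 ∨ w = v 3 := by
    intro w
    by_contra hw
    push_neg at hw
    obtain ⟨hw1, hw2, hw3, hw4, hw5, hw6⟩ := hw
    set S₀ : Set V := {s₁, t₁} with hS₀
    have hmidmem : ∀ i : Fin 4, v i ∈ S₀ᶜ := by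
      intro i
      simp only [hS₀, Set.mem_compl_iff, Set.mem_insert_iff, Set.mem_singleton_iff]
      push_neg
      exact ⟨hvs i, hvt i⟩
    have hwmem : w ∈ S₀ᶜ := by
      simp only [hS₀, Set.mem_compl_iff, Set.mem_insert_iff, Set.mem_singleton_iff]
      push_neg
      exact ⟨hw1, hw2⟩
    have hmiso : ∀ (i : Fin 4) (hm : v i ∈ S₀ᶜ) (z : ↥S₀ᶜ),
        ¬ (G.induce S₀ᶜ).Adj ⟨v i, hm⟩ z := by
      intro i hm z hadj
      have h : G.Adj (v i) z.val := by simpa using hadj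
      rcases hnbr i _ h with h' | h' <;>
        exact z.2 (by simp [hS₀, h'])
    have h5le : 5 ≤ numComp G S₀ := by
      refine le_numComp_iso' G S₀
        (![⟨v 0, hmidmem 0⟩, ⟨v 1, hmidmem 1⟩, ⟨v 2, hmidmem 2⟩, ⟨v 3, hmidmem 3⟩,
          ⟨w, hwmem⟩]) ?_ ?_
      · intro a b hab
        fin_cases a <;> fin_cases b <;>
          simp_all [Subtype.mk.injEq, hinj.eq_iff, hvs, hvt, hw3, hw4, hw5, hw6]
      · intro i j hij
        fin_cases i <;> fin_cases j <;>
          first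
            | exact absurd rfl hij
            | exact Or.inl (hmiso 0 _)
            | exact Or.inl (hmiso 1 _)
            | exact Or.inl (hmiso 2 _)
            | exact Or.inl (hmiso 3 _)
            | exact Or.inr (hmiso 0 _)
            | exact Or.inr (hmiso 1 _)
            | exact Or.inr (hmiso 2 _)
            | exact Or.inr (hmiso 3 _)
    have hcut : IsCutset G S₀ := by
      unfold IsCutset
      omega
    have hmem2 : (2 : ℝ) / (numComp G S₀ : ℝ) ∈
        {r : ℝ | ∃ S : Set V, IsCutset G S ∧ r = (S.ncard : ℝ) / (numComp G S : ℝ)} :=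
      ⟨S₀, hcut, by rw [hS₀, Set.ncard_pair hst]; norm_num⟩
    have hle : toughness G ≤ 2 / (numComp G S₀ : ℝ) := csInf_le (hbdd G) hmem2
    rw [htau] at hle
    have hc5 : (5 : ℝ) ≤ (numComp G S₀ : ℝ) := by exact_mod_cast h5le
    have hcpos : (0 : ℝ) < (numComp G S₀ : ℝ) := by linarith
    rw [le_div_iff₀ hcpos] at hle
    linarith
  -- Card bound
  have hcard : Nat.card V ≤ 6 := by
    have hsurj : Function.Surjective (![s₁, t₁, v 0, v 1, v 2, v 3] : Fin 6 → V) := by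
      intro w
      rcases hM w with h | h | h | h | h | h
      · exact ⟨0, h.symm⟩
      · exact ⟨1, h.symm⟩
      · exact ⟨2, h.symm⟩
      · exact ⟨3, h.symm⟩
      · exact ⟨4, h.symm⟩
      · exact ⟨5, h.symm⟩
    calc Nat.card V ≤ Nat.card (Fin 6) := Nat.card_le_card_of_surjective _ hsurj
      _ = 6 := by simp
  -- The deleted edge
  have heG : s(v 0, s₁) ∈ G.edgeSet := hadj_s 0
  set H : SimpleGraph V := G.deleteEdges {s(v 0, s₁)} with hHdef
  have hlt : toughness H < 1 / 2 := hdel _ heG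
  -- adjacency in H
  have hH_t : ∀ i, H.Adj (v i) t₁ := by
    intro i
    rw [hHdef, deleteEdges_adj]
    refine ⟨hadj_t i, ?_⟩
    simp only [Set.mem_singleton_iff, Sym2.eq_iff]
    push_neg
    constructor
    · intro _; exact hst.symm
    · intro h; exact absurd h (hvs i)
  have hH_s : ∀ i, i ≠ 0 → H.Adj (v i) s₁ := by
    intro i hi
    rw [hHdef, deleteEdges_adj]
    refine ⟨hadj_s i, ?_⟩
    simp only [Set.mem_singleton_iff, Sym2.eq_iff]
    push_neg
    constructor
    · intro h; exact absurd (hinj h) hi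
    · intro h; exact absurd h (hvs i)
  have hH_v0 : ∀ y, H.Adj (v 0) y → y = t₁ := by
    intro y hy
    rw [hHdef, deleteEdges_adj] at hy
    obtain ⟨hyG, hyne⟩ := hy
    rcases hnbr 0 y hyG with h | h
    · exfalso; apply hyne; simp [h]
    · exact h
  have hHsub : ∀ a b, H.Adj a b → G.Adj a b := by
    intro a b hab
    rw [hHdef, deleteEdges_adj] at hab
    exact hab.1
  -- the toughness set of H
  set TH : Set ℝ :=
    {r : ℝ | ∃ S : Set V, IsCutset H S ∧ r = (S.ncard : ℝ) / (numComp H S : ℝ)} with hTH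
  -- TH is nonempty: {t₁} is a cutset of H
  have hv0iso : ∀ (S' : Set V) (ht : t₁ ∈ S') (hm : v 0 ∈ S'ᶜ) (z : ↥S'ᶜ),
      ¬ (H.induce S'ᶜ).Adj ⟨v 0, hm⟩ z := by
    intro S' ht hm z hadj
    have h : H.Adj (v 0) z.val := by simpa using hadj
    exact z.2 ((hH_v0 _ h) ▸ ht)
  have hcut1 : IsCutset H {t₁} := by
    unfold IsCutset
    have hmem0 : v 0 ∈ ({t₁} : Set V)ᶜ := by simp [hvt 0]
    have hmem1 : s₁ ∈ ({t₁} : Set V)ᶜ := by simp [hst]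
    have h2 : 2 ≤ numComp H {t₁} := by
      refine le_numComp_iso' H {t₁} (![⟨v 0, hmem0⟩, ⟨s₁, hmem1⟩]) ?_ ?_
      · intro a b hab
        fin_cases a <;> fin_cases b
        · rfl
        · exact absurd (congrArg Subtype.val hab) (hvs 0)
        · exact absurd (congrArg Subtype.val hab) (Ne.symm (hvs 0))
        · rfl
      · intro i j hij
        fin_cases i <;> fin_cases j
        · exact absurd rfl hij
        · exact Or.inl (hv0iso {t₁} rfl hmem0)
        · exact Or.inr (hv0iso {t₁} rfl hmem0)
        · exact absurd rfl hij
    omega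
  have hTHne : TH.Nonempty :=
    ⟨_, ⟨{t₁}, hcut1, rfl⟩⟩
  -- every element of TH is at least 1/2
  have hge : ∀ r ∈ TH, 1 / 2 ≤ r := by
    rintro r ⟨S, hScut, rfl⟩
    have hc2 : 1 < numComp H S := hScut
    have hsum : S.ncard + Sᶜ.ncard = Nat.card V := Set.ncard_add_ncard_compl S
    have hcle : numComp H S ≤ Sᶜ.ncard := numComp_le_ncard_compl' H S
    have hkey : numComp H S ≤ 2 * S.ncard := by
      rcases Nat.lt_or_ge S.ncard 2 with hn | hn
      · obtain h | h : S.ncard = 0 ∨ S.ncard = 1 := by omega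
        · -- S = ∅ : but H is connected, contradiction
          exfalso
          have hSempty : S = ∅ := by
            rw [← Set.ncard_eq_zero (Set.toFinite S)]; exact h
          subst hSempty
          have hmemT : t₁ ∈ (∅ : Set V)ᶜ := by simp
          have hle1 : numComp H (∅ : Set V) ≤ 1 := by
            apply numComp_le' H ∅ (fun _ => ⟨t₁, hmemT⟩)
            rintro ⟨yv, hy2⟩
            refine ⟨0, ?_⟩
            rcases hM yv with hy | hy | hy | hy | hy | hy <;> subst hy
            · -- y = s₁ : go via v 1
              exact ((induce_adj_of' H _ hy2 (by simp) ((hH_s 1 (by decide)).symm)).reachable).trans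
                (induce_adj_of' H _ (by simp) hmemT (hH_t 1)).reachable
            · exact Reachable.refl _
            · exact (induce_adj_of' H _ hy2 hmemT (hH_t 0)).reachable
            · exact (induce_adj_of' H _ hy2 hmemT (hH_t 1)).reachable
            · exact (induce_adj_of' H _ hy2 hmemT (hH_t 2)).reachable
            · exact (induce_adj_of' H _ hy2 hmemT (hH_t 3)).reachable
          omega
        · -- S = {x}
          obtain ⟨x, hSx⟩ := Set.ncard_eq_one.mp h
          subst hSx
          have hle2 : numComp H ({x} : Set V) ≤ 2 := by
            have hmem : ∀ a : V, a ≠ x → a ∈ ({x} : Set V)ᶜ := fun a h => by simp [h]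
            rcases hM x with hx | hx | hx | hx | hx | hx <;> subst hx
            · -- x = s₁ : everything reaches t₁
              apply numComp_le' H _ (fun _ : Fin 2 => ⟨t₁, hmem _ hst.symm⟩)
              rintro ⟨yv, hy2⟩
              refine ⟨0, ?_⟩
              rcases hM yv with hy | hy | hy | hy | hy | hy <;> subst hy
              · exact absurd hy2 (by simp)
              · exact Reachable.refl _
              · exact (induce_adj_of' H _ hy2 _ (hH_t 0)).reachable
              · exact (induce_adj_of' H _ hy2 _ (hH_t 1)).reachable
              · exact (induce_adj_of' H _ hy2 _ (hH_t 2)).reachable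
              · exact (induce_adj_of' H _ hy2 _ (hH_t 3)).reachable
            · -- x = t₁ : targets s₁ and v 0
              apply numComp_le' H _
                (![⟨s₁, hmem _ hst⟩, ⟨v 0, hmem _ (hvt 0)⟩] : Fin 2 → _)
              rintro ⟨yv, hy2⟩
              rcases hM yv with hy | hy | hy | hy | hy | hy <;> subst hy
              · exact ⟨0, Reachable.refl _⟩
              · exact absurd hy2 (by simp)
              · exact ⟨1, Reachable.refl _⟩
              · exact ⟨0, (induce_adj_of' H _ hy2 _ (hH_s 1 (by decide))).reachable⟩
              · exact ⟨0, (induce_adj_of' H _ hy2 _ (hH_s 2 (by decide))).reachable⟩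
              · exact ⟨0, (induce_adj_of' H _ hy2 _ (hH_s 3 (by decide))).reachable⟩
            · -- x = v 0 : everything reaches t₁
              apply numComp_le' H _ (fun _ : Fin 2 => ⟨t₁, hmem _ (Ne.symm (hvt 0))⟩)
              rintro ⟨yv, hy2⟩
              refine ⟨0, ?_⟩
              rcases hM yv with hy | hy | hy | hy | hy | hy <;> subst hy
              · exact ((induce_adj_of' H _ hy2 (hmem _ (fun h => (by simpa [hinj.eq_iff] using h)))
                  ((hH_s 1 (by decide)).symm)).reachable).trans
                  (induce_adj_of' H _ _ _ (hH_t 1)).reachable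
              · exact Reachable.refl _
              · exact absurd hy2 (by simp)
              · exact (induce_adj_of' H _ hy2 _ (hH_t 1)).reachable
              · exact (induce_adj_of' H _ hy2 _ (hH_t 2)).reachable
              · exact (induce_adj_of' H _ hy2 _ (hH_t 3)).reachable
            · -- x = v 1
              apply numComp_le' H _ (fun _ : Fin 2 => ⟨t₁, hmem _ (Ne.symm (hvt 1))⟩)
              rintro ⟨yv, hy2⟩
              refine ⟨0, ?_⟩
              rcases hM yv with hy | hy | hy | hy | hy | hy <;> subst hy
              · exact ((induce_adj_of' H _ hy2 (hmem _ (fun h => (by simpa [hinj.eq_iff] using h)))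
                  ((hH_s 2 (by decide)).symm)).reachable).trans
                  (induce_adj_of' H _ _ _ (hH_t 2)).reachable
              · exact Reachable.refl _
              · exact (induce_adj_of' H _ hy2 _ (hH_t 0)).reachable
              · exact absurd hy2 (by simp)
              · exact (induce_adj_of' H _ hy2 _ (hH_t 2)).reachable
              · exact (induce_adj_of' H _ hy2 _ (hH_t 3)).reachable
            · -- x = v 2
              apply numComp_le' H _ (fun _ : Fin 2 => ⟨t₁, hmem _ (Ne.symm (hvt 2))⟩)
              rintro ⟨yv, hy2⟩
              refine ⟨0, ?_⟩
              rcases hM yv with hy | hy | hy | hy | hy | hy <;> subst hy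
              · exact ((induce_adj_of' H _ hy2 (hmem _ (fun h => (by simpa [hinj.eq_iff] using h)))
                  ((hH_s 1 (by decide)).symm)).reachable).trans
                  (induce_adj_of' H _ _ _ (hH_t 1)).reachable
              · exact Reachable.refl _
              · exact (induce_adj_of' H _ hy2 _ (hH_t 0)).reachable
              · exact (induce_adj_of' H _ hy2 _ (hH_t 1)).reachable
              · exact absurd hy2 (by simp)
              · exact (induce_adj_of' H _ hy2 _ (hH_t 3)).reachable
            · -- x = v 3
              apply numComp_le' H _ (fun _ : Fin 2 => ⟨t₁, hmem _ (Ne.symm (hvt 3))⟩)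
              rintro ⟨yv, hy2⟩
              refine ⟨0, ?_⟩
              rcases hM yv with hy | hy | hy | hy | hy | hy <;> subst hy
              · exact ((induce_adj_of' H _ hy2 (hmem _ (fun h => (by simpa [hinj.eq_iff] using h)))
                  ((hH_s 1 (by decide)).symm)).reachable).trans
                  (induce_adj_of' H _ _ _ (hH_t 1)).reachable
              · exact Reachable.refl _
              · exact (induce_adj_of' H _ hy2 _ (hH_t 0)).reachable
              · exact (induce_adj_of' H _ hy2 _ (hH_t 1)).reachable
              · exact (induce_adj_of' H _ hy2 _ (hH_t 2)).reachable
              · exact absurd hy2 (by simp)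
          omega
      · omega
    have hcpos : (0 : ℝ) < (numComp H S : ℝ) := by
      have : (0:ℕ) < numComp H S := by omega
      exact_mod_cast this
    rw [le_div_iff₀ hcpos]
    have : (numComp H S : ℝ) ≤ 2 * (S.ncard : ℝ) := by exact_mod_cast hkey
    linarith
  have : (1:ℝ) / 2 ≤ toughness H := le_csInf hTHne hge
  linarith
end

section
/- If a series-parallel graph G contains Q₂ (the parallel join of a length-2 path and a single edge, i.e., a triangle with terminals s₁, t₁ and middle vertex v₁) as a substructure of its sp-decomposition, then G is not minimally 1/2-tough. -/
open SimpleGraph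

section Helpers
variable {W : Type*}

lemma reach_of_adj_imp' {A B : SimpleGraph W} (hr : ∀ u v, B.Adj u v → A.Reachable u v)
    {u v : W} (h : B.Reachable u v) : A.Reachable u v := by
  obtain ⟨p⟩ := h
  induction p with
  | nil => exact Reachable.refl _
  | cons h _ ih => exact (hr _ _ h).trans ih

lemma card_cc_le_of_le' [Finite W] {A B : SimpleGraph W} (h : A ≤ B) :
    Nat.card B.ConnectedComponent ≤ Nat.card A.ConnectedComponent := by
  apply Nat.card_le_card_of_surjective
    (SimpleGraph.ConnectedComponent.map (SimpleGraph.Hom.ofLE h))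
  intro c
  obtain ⟨v, rfl⟩ := c.exists_rep
  exact ⟨A.connectedComponentMk v, rfl⟩

lemma card_cc_eq_of_reachable' [Finite W] {A B : SimpleGraph W} (h : A ≤ B)
    (hr : ∀ u v, B.Adj u v → A.Reachable u v) :
    Nat.card A.ConnectedComponent = Nat.card B.ConnectedComponent := by
  refine le_antisymm ?_ (card_cc_le_of_le' h)
  apply Nat.card_le_card_of_injective
    (SimpleGraph.ConnectedComponent.map (SimpleGraph.Hom.ofLE h))
  intro c d hcd
  obtain ⟨u, rfl⟩ := c.exists_rep
  obtain ⟨v, rfl⟩ := d.exists_rep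
  exact ConnectedComponent.sound (reach_of_adj_imp' hr (ConnectedComponent.exact hcd))

lemma reach_cases' {A B : SimpleGraph W} {a b : W}
    (hab : ∀ u v, B.Adj u v → A.Adj u v ∨ (s(u,v) : Sym2 W) = s(a,b))
    {u v : W} (h : B.Reachable u v) :
    A.Reachable u v ∨ ((A.Reachable u a ∨ A.Reachable u b) ∧
      (A.Reachable v a ∨ A.Reachable v b)) := by
  obtain ⟨p⟩ := h
  induction p with
  | nil => exact Or.inl (Reachable.refl _)
  | @cons x y z h p ih =>
    rcases hab _ _ h with h' | h'
    · rcases ih with h2 | ⟨h2, h3⟩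
      · exact Or.inl (h'.reachable.trans h2)
      · refine Or.inr ⟨?_, h3⟩
        rcases h2 with h2 | h2
        · exact Or.inl (h'.reachable.trans h2)
        · exact Or.inr (h'.reachable.trans h2)
    · rw [Sym2.eq_iff] at h'
      have hx : A.Reachable x a ∨ A.Reachable x b := by
        rcases h' with ⟨rfl, rfl⟩ | ⟨rfl, rfl⟩
        · exact Or.inl (Reachable.refl _)
        · exact Or.inr (Reachable.refl _)
      have hy : A.Reachable y a ∨ A.Reachable y b := by
        rcases h' with ⟨rfl, rfl⟩ | ⟨rfl, rfl⟩
        · exact Or.inr (Reachable.refl _)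
        · exact Or.inl (Reachable.refl _)
      refine Or.inr ⟨hx, ?_⟩
      rcases ih with h2 | ⟨_, h3⟩
      · rcases hy with hy' | hy'
        · exact Or.inl (h2.symm.trans hy')
        · exact Or.inr (h2.symm.trans hy')
      · exact h3

lemma card_cc_le_succ' [Finite W] {A B : SimpleGraph W} (hle : A ≤ B) (a b : W)
    (hab : ∀ u v, B.Adj u v → A.Adj u v ∨ (s(u,v) : Sym2 W) = s(a,b)) :
    Nat.card A.ConnectedComponent ≤ Nat.card B.ConnectedComponent + 1 := by
  classical
  haveI : Fintype B.ConnectedComponent := @Fintype.ofFinite _ (Quot.finite _)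
  haveI : Fintype A.ConnectedComponent := @Fintype.ofFinite _ (Quot.finite _)
  rw [← Finite.card_option]
  apply Nat.card_le_card_of_injective (f := fun c : A.ConnectedComponent =>
    if c = A.connectedComponentMk b then (none : Option B.ConnectedComponent)
    else some (c.map (SimpleGraph.Hom.ofLE hle)))
  intro c d hcd
  by_cases hc : c = A.connectedComponentMk b
  · by_cases hd : d = A.connectedComponentMk b
    · exact hc.trans hd.symm
    · simp [hc, hd] at hcd
  · by_cases hd : d = A.connectedComponentMk b
    · simp [hc, hd] at hcd
    · simp only [if_neg hc, if_neg hd, Option.some.injEq] at hcd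
      obtain ⟨u, rfl⟩ := c.exists_rep
      obtain ⟨v, rfl⟩ := d.exists_rep
      have hBuv : B.Reachable u v := ConnectedComponent.exact hcd
      rcases reach_cases' hab hBuv with h | ⟨h1, h2⟩
      · exact ConnectedComponent.sound h
      · have hu : A.Reachable u a := by
          rcases h1 with h1 | h1
          · exact h1
          · exact absurd (ConnectedComponent.sound h1) hc
        have hv : A.Reachable v a := by
          rcases h2 with h2 | h2
          · exact h2
          · exact absurd (ConnectedComponent.sound h2) hd
        exact ConnectedComponent.sound (hu.trans hv.symm)
end Helpers

section Jump
variable {V : Type*} {G : SimpleGraph V} {s₁ t₁ v₁ : V} {s : Set V}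

lemma jump_aux' (hnb : G.neighborSet v₁ = {s₁, t₁}) (hadj : G.Adj s₁ t₁)
    (hv : v₁ ∉ s) :
    ∀ (n : ℕ) (x y : ↥(insert v₁ s)) (p : (SimpleGraph.induce (insert v₁ s) G).Walk x y),
      p.length ≤ n → ∀ (hx : (x : V) ∈ s) (hy : (y : V) ∈ s),
      (SimpleGraph.induce s G).Reachable ⟨x, hx⟩ ⟨y, hy⟩ := by
  intro n
  induction n with
  | zero =>
    intro x y p hlen hx hy
    have : x = y := p.eq_of_length_eq_zero (Nat.le_zero.mp hlen)
    subst this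
    rfl
  | succ n ih =>
    intro x y p hlen hx hy
    cases p with
    | nil => rfl
    | @cons _ z _ h q =>
      by_cases hz : (z : V) ∈ s
      · have h1 : (SimpleGraph.induce s G).Adj ⟨x, hx⟩ ⟨z, hz⟩ := h
        exact h1.reachable.trans (ih z y q (Nat.le_of_succ_le_succ hlen) hz hy)
      · have hzv : (z : V) = v₁ := by
          rcases z.2 with h' | h'
          · exact h'
          · exact absurd h' hz
        cases q with
        | nil => exact absurd (hzv ▸ hy) hv
        | @cons _ w _ h2 q' =>
          have hGxz : G.Adj (x : V) v₁ := by
            have : G.Adj (x : V) (z : V) := h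
            rwa [hzv] at this
          have hGzw : G.Adj v₁ (w : V) := by
            have : G.Adj (z : V) (w : V) := h2
            rwa [hzv] at this
          have hw : (w : V) ∈ s := by
            rcases w.2 with h' | h'
            · exact absurd (h' ▸ hGzw) (G.irrefl)
            · exact h'
          have hxm : (x : V) ∈ ({s₁, t₁} : Set V) := hnb ▸ hGxz.symm
          have hwm : (w : V) ∈ ({s₁, t₁} : Set V) := hnb ▸ hGzw
          have hreach : (SimpleGraph.induce s G).Reachable ⟨x, hx⟩ ⟨w, hw⟩ := by
            rcases hxm with hx' | hx' <;> rcases hwm with hw' | hw'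
            · have : (⟨x, hx⟩ : ↥s) = ⟨w, hw⟩ := Subtype.ext (hx'.trans hw'.symm)
              exact this ▸ Reachable.refl _
            · exact Adj.reachable (by
                show G.Adj (x : V) (w : V)
                rw [hx', hw']; exact hadj)
            · exact Adj.reachable (by
                show G.Adj (x : V) (w : V)
                rw [hx', hw']; exact hadj.symm)
            · have : (⟨x, hx⟩ : ↥s) = ⟨w, hw⟩ := Subtype.ext (hx'.trans hw'.symm)
              exact this ▸ Reachable.refl _
          have hlen' : q'.length ≤ n := by
            simp only [Walk.length_cons] at hlen
            omega
          exact hreach.trans (ih w y q' hlen' hw hy)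

lemma card_cc_insert_eq' (hnb : G.neighborSet v₁ = {s₁, t₁}) (hadj : G.Adj s₁ t₁)
    (hs₁ : s₁ ∈ s) (ht₁ : t₁ ∈ s) (hv : v₁ ∉ s) :
    Nat.card (SimpleGraph.induce (insert v₁ s) G).ConnectedComponent
      = Nat.card (SimpleGraph.induce s G).ConnectedComponent := by
  have hv₁s₁ : G.Adj v₁ s₁ := by
    have : s₁ ∈ G.neighborSet v₁ := by rw [hnb]; exact Set.mem_insert _ _
    exact this
  let φ : SimpleGraph.induce s G →g SimpleGraph.induce (insert v₁ s) G :=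
    ⟨fun x => ⟨x.1, Set.mem_insert_of_mem _ x.2⟩, fun h => h⟩
  refine (Nat.card_eq_of_bijective (SimpleGraph.ConnectedComponent.map φ) ⟨?_, ?_⟩).symm
  · intro c d hcd
    obtain ⟨u, rfl⟩ := c.exists_rep
    obtain ⟨v, rfl⟩ := d.exists_rep
    have hR : (SimpleGraph.induce (insert v₁ s) G).Reachable (φ u) (φ v) :=
      ConnectedComponent.exact hcd
    obtain ⟨p⟩ := hR
    have := jump_aux' hnb hadj hv p.length (φ u) (φ v) p le_rfl u.2 v.2
    exact ConnectedComponent.sound this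
  · intro c
    obtain ⟨x, rfl⟩ := c.exists_rep
    rcases x.2 with hx | hx
    · refine ⟨(SimpleGraph.induce s G).connectedComponentMk ⟨s₁, hs₁⟩, ?_⟩
      have hadj' : (SimpleGraph.induce (insert v₁ s) G).Adj (φ ⟨s₁, hs₁⟩) x := by
        show G.Adj s₁ (x : V)
        rw [hx]; exact hv₁s₁.symm
      exact ConnectedComponent.connectedComponentMk_eq_of_adj hadj'
    · exact ⟨(SimpleGraph.induce s G).connectedComponentMk ⟨x.1, hx⟩, rfl⟩
end Jump

/-- If a series-parallel graph `G` contains `Q₂` as a substructure, i.e. a triangle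
`s₁, v₁, t₁` in which the middle vertex `v₁` has degree 2 (neighborhood exactly `{s₁, t₁}`)
and `s₁t₁` is an edge, then `G` is not minimally 1/2-tough. -/
theorem not_minTough_of_Q2 {V : Type*} [Fintype V]
    (G : SimpleGraph V) (hsp : IsSPGraph G)
    (s₁ t₁ v₁ : V) (hadj : G.Adj s₁ t₁)
    (hnb : G.neighborSet v₁ = {s₁, t₁}) :
    ¬ MinTough G (1 / 2) := by
  classical
  rintro ⟨htough, hmin⟩
  set e : Sym2 V := s(s₁, t₁) with he_def
  set G' := G.deleteEdges {e} with hG'_def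
  have hle : G' ≤ G := SimpleGraph.deleteEdges_le _
  have hv₁s₁ : G.Adj v₁ s₁ := by
    have : s₁ ∈ G.neighborSet v₁ := by rw [hnb]; exact Set.mem_insert _ _
    exact this
  have hv₁t₁ : G.Adj v₁ t₁ := by
    have : t₁ ∈ G.neighborSet v₁ := by rw [hnb]; exact Set.mem_insert_of_mem _ rfl
    exact this
  have hne1 : v₁ ≠ s₁ := hv₁s₁.ne
  have hne2 : v₁ ≠ t₁ := hv₁t₁.ne
  have hst : s₁ ≠ t₁ := hadj.ne
  have he : e ∈ G.edgeSet := hadj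
  have hlt := hmin e he
  -- induced subgraph of G' is ≤ that of G
  have hind_le : ∀ S : Set V, SimpleGraph.induce Sᶜ G' ≤ SimpleGraph.induce Sᶜ G := by
    intro S a b hab
    exact hle hab
  have hmono : ∀ S : Set V, numComp G S ≤ numComp G' S := by
    intro S
    exact card_cc_le_of_le' (hind_le S)
  -- existence of a cutset of G
  have hex : ∃ S : Set V, IsCutset G S := by
    by_contra hno
    push_neg at hno
    have hempty : {r : ℝ | ∃ S : Set V, IsCutset G S ∧
        r = (S.ncard : ℝ) / (numComp G S : ℝ)} = ∅ := by
      ext r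
      simp only [Set.mem_setOf_eq, Set.mem_empty_iff_false, iff_false, not_exists]
      intro S hS
      exact absurd hS.1 (by simpa using hno S)
    have : toughness G = 0 := by
      unfold toughness
      rw [hempty, Real.sInf_empty]
    rw [this] at htough
    norm_num at htough
  -- every cutset of G satisfies the toughness bound
  have hG : ∀ S : Set V, IsCutset G S → (numComp G S : ℝ) ≤ 2 * S.ncard := by
    intro S hS
    have hmem : (S.ncard : ℝ) / (numComp G S : ℝ) ∈
        {r : ℝ | ∃ S : Set V, IsCutset G S ∧ r = (S.ncard : ℝ) / (numComp G S : ℝ)} :=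
      ⟨S, hS, rfl⟩
    have hbdd : BddBelow {r : ℝ | ∃ S : Set V, IsCutset G S ∧
        r = (S.ncard : ℝ) / (numComp G S : ℝ)} := by
      refine ⟨0, ?_⟩
      rintro r ⟨T, _, rfl⟩
      positivity
    have hinf : toughness G ≤ (S.ncard : ℝ) / (numComp G S : ℝ) := csInf_le hbdd hmem
    rw [htough] at hinf
    have hpos : (0 : ℝ) < (numComp G S : ℝ) := by
      have : (1 : ℕ) < numComp G S := hS
      positivity
    rw [le_div_iff₀ hpos] at hinf
    linarith
  -- key bound for cutsets of G'
  have hkey : ∀ S : Set V, IsCutset G' S → (numComp G' S : ℝ) ≤ 2 * S.ncard := by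
    intro S hS
    by_cases hsmem : s₁ ∈ S ∨ t₁ ∈ S
    · -- deleted edge has an endpoint in S : induced graphs coincide
      have hEq : SimpleGraph.induce Sᶜ G' = SimpleGraph.induce Sᶜ G := by
        ext a b
        show G'.Adj ↑a ↑b ↔ G.Adj ↑a ↑b
        rw [hG'_def]
        simp only [SimpleGraph.deleteEdges_adj, Set.mem_singleton_iff]
        constructor
        · rintro ⟨h, -⟩; exact h
        · intro h
          refine ⟨h, ?_⟩
          intro hcon
          rw [he_def, Sym2.eq_iff] at hcon
          rcases hcon with ⟨ha, hb⟩ | ⟨ha, hb⟩ <;>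
            rcases hsmem with hm | hm
          · exact a.2 (ha ▸ hm)
          · exact b.2 (hb ▸ hm)
          · exact b.2 (hb ▸ hm)
          · exact a.2 (ha ▸ hm)
      have hnum : numComp G' S = numComp G S := by
        unfold numComp
        rw [hEq]
      have hcut : IsCutset G S := by
        have : (1 : ℕ) < numComp G' S := hS
        rwa [hnum] at this
      rw [hnum]
      exact hG S hcut
    · push_neg at hsmem
      obtain ⟨hs₁S, ht₁S⟩ := hsmem
      have hs₁c : s₁ ∈ Sᶜ := hs₁S
      have ht₁c : t₁ ∈ Sᶜ := ht₁S
      by_cases hv : v₁ ∈ S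
      · -- v₁ ∈ S, s₁, t₁ ∉ S
        have h1 : numComp G' S ≤ numComp G S + 1 := by
          apply card_cc_le_succ' (hind_le S) ⟨s₁, hs₁c⟩ ⟨t₁, ht₁c⟩
          intro u v huv
          have hGuv : G.Adj ↑u ↑v := huv
          by_cases hcase : s((u : V), (v : V)) = e
          · right
            rw [he_def, Sym2.eq_iff] at hcase
            rcases hcase with ⟨ha, hb⟩ | ⟨ha, hb⟩
            · rw [Sym2.eq_iff]
              exact Or.inl ⟨Subtype.ext ha, Subtype.ext hb⟩
            · rw [Sym2.eq_iff]
              exact Or.inr ⟨Subtype.ext ha, Subtype.ext hb⟩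
          · left
            show G'.Adj ↑u ↑v
            rw [hG'_def]
            exact SimpleGraph.deleteEdges_adj.mpr ⟨hGuv, by simpa using hcase⟩
        have hcompl : (S \ {v₁})ᶜ = insert v₁ Sᶜ := by
          ext w
          simp only [Set.mem_compl_iff, Set.mem_diff, Set.mem_singleton_iff,
            Set.mem_insert_iff, not_and, not_not]
          constructor
          · intro h
            by_cases hw : w ∈ S
            · exact Or.inl (h hw)
            · exact Or.inr hw
          · rintro (rfl | h)
            · intro _; rfl
            · intro hw; exact absurd hw h
        have h2 : numComp G (S \ {v₁}) = numComp G S := by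
          unfold numComp
          rw [hcompl]
          exact card_cc_insert_eq' hnb hadj hs₁c ht₁c (by simpa using hv)
        have hcard1 : 1 ≤ S.ncard := by
          have : S.Nonempty := ⟨v₁, hv⟩
          have := Set.ncard_pos (Set.toFinite S) |>.mpr this
          omega
        by_cases h3 : 1 < numComp G S
        · have hcut' : IsCutset G (S \ {v₁}) := by
            show 1 < numComp G (S \ {v₁})
            rwa [h2]
          have hb := hG _ hcut'
          rw [h2] at hb
          have hcards : (S \ {v₁}).ncard = S.ncard - 1 :=
            Set.ncard_diff_singleton_of_mem hv
          rw [hcards] at hb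
          have hcast : ((S.ncard - 1 : ℕ) : ℝ) = (S.ncard : ℝ) - 1 := by
            rw [Nat.cast_sub hcard1]
            norm_num
          rw [hcast] at hb
          have h1' : (numComp G' S : ℝ) ≤ (numComp G S : ℝ) + 1 := by
            exact_mod_cast h1
          linarith
        · push_neg at h3
          have : numComp G' S ≤ 2 := by omega
          have h2S : (2 : ℝ) ≤ 2 * S.ncard := by
            have : (1 : ℝ) ≤ (S.ncard : ℝ) := by exact_mod_cast hcard1
            linarith
          have : (numComp G' S : ℝ) ≤ 2 := by exact_mod_cast this
          linarith
      · -- v₁ ∉ S : the triangle keeps things connected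
        have hv₁c : v₁ ∈ Sᶜ := hv
        have hEqcard : numComp G' S = numComp G S := by
          unfold numComp
          apply card_cc_eq_of_reachable' (hind_le S)
          intro u v huv
          have hGuv : G.Adj ↑u ↑v := huv
          by_cases hcase : s((u : V), (v : V)) = e
          · rw [he_def, Sym2.eq_iff] at hcase
            have hadjw : ∀ (a b : ↥Sᶜ), (a : V) = s₁ → (b : V) = t₁ →
                (SimpleGraph.induce Sᶜ G').Reachable a b := by
              intro a b ha hb
              have h1 : (SimpleGraph.induce Sᶜ G').Adj a ⟨v₁, hv₁c⟩ := by
                show G'.Adj ↑a v₁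
                rw [hG'_def]
                refine SimpleGraph.deleteEdges_adj.mpr ⟨ha ▸ hv₁s₁.symm, ?_⟩
                simp only [Set.mem_singleton_iff, he_def, ha, Sym2.eq_iff]
                push_neg
                constructor
                · intro _; exact hne2
                · intro hc; exact absurd hc.symm hst.symm
              have h2 : (SimpleGraph.induce Sᶜ G').Adj ⟨v₁, hv₁c⟩ b := by
                show G'.Adj v₁ ↑b
                rw [hG'_def]
                refine SimpleGraph.deleteEdges_adj.mpr ⟨hb ▸ hv₁t₁, ?_⟩
                simp only [Set.mem_singleton_iff, he_def, hb, Sym2.eq_iff]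
                push_neg
                constructor
                · intro hc; exact absurd hc hne1
                · intro hc; exact absurd hc.symm hne2.symm
              exact h1.reachable.trans h2.reachable
            rcases hcase with ⟨ha, hb⟩ | ⟨ha, hb⟩
            · exact hadjw u v ha hb
            · exact (hadjw v u hb ha).symm
          · apply SimpleGraph.Adj.reachable
            show G'.Adj ↑u ↑v
            rw [hG'_def]
            exact SimpleGraph.deleteEdges_adj.mpr ⟨hGuv, by simpa using hcase⟩
        have hcut : IsCutset G S := by
          have : (1 : ℕ) < numComp G' S := hS
          rwa [hEqcard] at this
        rw [hEqcard]
        exact hG S hcut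
  -- conclude : toughness G' ≥ 1/2, contradiction
  obtain ⟨S₀, hS₀⟩ := hex
  have hS₀' : IsCutset G' S₀ := lt_of_lt_of_le hS₀ (hmono S₀)
  have hge : (1 / 2 : ℝ) ≤ toughness G' := by
    apply le_csInf
    · exact ⟨_, S₀, hS₀', rfl⟩
    · rintro r ⟨S, hS, rfl⟩
      have hb := hkey S hS
      have hpos : (0 : ℝ) < (numComp G' S : ℝ) := by
        have : (1 : ℕ) < numComp G' S := hS
        positivity
      rw [le_div_iff₀ hpos]
      linarith
  linarith
end
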